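/- arXiv:1903.06291 — 6 statements merged into one kernel-verified Lean document; each statement's English description precedes it below -/
import Mathlib

section
/- Let α>1, β>1, δ>0, A=(α-1)/(αβ-1), B=(β-1)/(αβ-1). If (x(t),y(t)) is a solution of the system dx/dt = x(1-x-αy), dy/dt = δy(1-y-βx) on [0,∞) with x(0)>0, y(0)>0 and (x(t),y(t))→(A,B) as t→∞, then the function t ↦ (α−1)y(t) − (β−1)x(t) is integrable on [0,∞); i.e., the improper integral ∫₀^∞ ((α−1)y(τ) − (β−1)x(τ)) dτ converges. -/
open Filter MeasureTheory

private lemma mono_aux {f f' : ℝ → ℝ} {T : ℝ}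
    (hd : ∀ t ∈ Set.Ici T, HasDerivWithinAt f (f' t) (Set.Ici T) t)
    (h0 : ∀ t ∈ Set.Ici T, 0 ≤ f' t) :
    MonotoneOn f (Set.Ici T) := by
  apply monotoneOn_of_deriv_nonneg (convex_Ici T)
    (fun t ht => (hd t ht).continuousWithinAt)
  · intro t ht
    rw [interior_Ici] at ht
    exact ((hd t (Set.mem_Ici.mpr (Set.mem_Ioi.mp ht).le)).hasDerivAt
      (Ici_mem_nhds (Set.mem_Ioi.mp ht))).differentiableAt.differentiableWithinAt
  · intro t ht
    rw [interior_Ici] at ht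
    rw [((hd t (Set.mem_Ici.mpr (Set.mem_Ioi.mp ht).le)).hasDerivAt (Ici_mem_nhds (Set.mem_Ioi.mp ht))).deriv]
    exact h0 t (Set.mem_Ici.mpr (Set.mem_Ioi.mp ht).le)

private lemma neg_of_deriv_ge {V V' : ℝ → ℝ} {T c : ℝ} (hc : 0 < c)
    (hd : ∀ t ∈ Set.Ici T, HasDerivWithinAt V (V' t) (Set.Ici T) t)
    (hlim : Filter.Tendsto V Filter.atTop (nhds 0))
    (hineq : ∀ t ∈ Set.Ici T, c * V t ≤ V' t) :
    ∀ t ∈ Set.Ici T, V t ≤ 0 := by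
  have hexp : ∀ t : ℝ, HasDerivAt (fun s => Real.exp (-(c * s)))
      (Real.exp (-(c*t)) * (-c)) t := by
    intro t
    have h1 : HasDerivAt (fun s : ℝ => -(c * s)) (-c) t := by
      simpa [mul_comm] using ((hasDerivAt_id t).const_mul (-c))
    exact h1.exp
  have hmono : MonotoneOn (fun t => V t * Real.exp (-(c * t))) (Set.Ici T) := by
    apply mono_aux (f' := fun t => V' t * Real.exp (-(c*t)) + V t * (Real.exp (-(c*t)) * (-c)))
    · exact fun t ht => (hd t ht).mul ((hexp t).hasDerivWithinAt)
    · intro t ht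
      have h1 := hineq t ht
      have h2 := Real.exp_pos (-(c*t))
      nlinarith
  have hlim2 : Filter.Tendsto (fun t => V t * Real.exp (-(c * t))) Filter.atTop (nhds 0) := by
    have h3 : Filter.Tendsto (fun t : ℝ => -(c * t)) Filter.atTop Filter.atBot := by
      exact tendsto_neg_atTop_atBot.comp (Filter.tendsto_id.const_mul_atTop hc)
    have h4 := Real.tendsto_exp_atBot.comp h3
    simpa using hlim.mul h4
  intro t ht
  have h5 : V t * Real.exp (-(c * t)) ≤ 0 := by
    refine ge_of_tendsto hlim2 ?_
    refine Filter.eventually_atTop.mpr ⟨t, fun s hs => hmono ht (le_trans ht hs) hs⟩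
  nlinarith [Real.exp_pos (-(c*t))]

private lemma decay_of_deriv_le {V V' : ℝ → ℝ} {T c : ℝ} (hc : 0 < c)
    (hd : ∀ t ∈ Set.Ici T, HasDerivWithinAt V (V' t) (Set.Ici T) t)
    (hineq : ∀ t ∈ Set.Ici T, V' t ≤ -(c * V t)) :
    ∀ t ∈ Set.Ici T, V t ≤ V T * Real.exp (-(c * (t - T))) := by
  have hexp : ∀ t : ℝ, HasDerivAt (fun s => Real.exp (c * s))
      (Real.exp (c*t) * c) t := by
    intro t
    have h1 : HasDerivAt (fun s : ℝ => c * s) c t := by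
      simpa [mul_comm] using ((hasDerivAt_id t).const_mul c)
    exact h1.exp
  have hmono : MonotoneOn (fun t => -(V t * Real.exp (c * t))) (Set.Ici T) := by
    apply mono_aux (f' := fun t => -(V' t * Real.exp (c*t) + V t * (Real.exp (c*t) * c)))
    · exact fun t ht => ((hd t ht).mul ((hexp t).hasDerivWithinAt)).neg
    · intro t ht
      have h1 := hineq t ht
      have h2 := Real.exp_pos (c*t)
      nlinarith
  intro t ht
  have h5 : -(V t * Real.exp (c * t)) ≥ -(V T * Real.exp (c * T)) :=
    hmono (le_refl T) ht ht
  have h6 : V t * Real.exp (c * t) ≤ V T * Real.exp (c * T) := by linarith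
  have h7 := mul_le_mul_of_nonneg_right h6 (Real.exp_pos (-(c * t))).le
  calc V t = V t * Real.exp (c * t) * Real.exp (-(c * t)) := by
        rw [mul_assoc, ← Real.exp_add]; simp
    _ ≤ V T * Real.exp (c * T) * Real.exp (-(c * t)) := h7
    _ = V T * Real.exp (-(c * (t - T))) := by
        rw [mul_assoc, ← Real.exp_add]; ring_nf

private lemma core_decay {u w Ru Rw : ℝ → ℝ} {l1 l2 μ T : ℝ}
    (hμ1 : 0 < μ) (hμl1 : μ ≤ -l1) (hμl2 : μ ≤ l2)
    (hu : ∀ t ∈ Set.Ici T, HasDerivWithinAt u (l1 * u t + Ru t) (Set.Ici T) t)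
    (hw : ∀ t ∈ Set.Ici T, HasDerivWithinAt w (l2 * w t + Rw t) (Set.Ici T) t)
    (hRu : ∀ t ∈ Set.Ici T, |Ru t| ≤ μ/8 * (|u t| + |w t|))
    (hRw : ∀ t ∈ Set.Ici T, |Rw t| ≤ μ/8 * (|u t| + |w t|))
    (hu0 : Filter.Tendsto u Filter.atTop (nhds 0))
    (hw0 : Filter.Tendsto w Filter.atTop (nhds 0)) :
    ∀ t ∈ Set.Ici T, |u t| + |w t| ≤ 2 * |u T| * Real.exp (-(μ/2 * (t - T))) := by
  -- the cone estimate: V = w² - u² stays ≤ 0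
  have hVd : ∀ t ∈ Set.Ici T, HasDerivWithinAt (fun t => w t * w t - u t * u t)
      (2*(w t)*(l2*w t + Rw t) - 2*(u t)*(l1*u t + Ru t)) (Set.Ici T) t := by
    intro t ht
    have h := ((hw t ht).mul (hw t ht)).sub ((hu t ht).mul (hu t ht))
    exact h.congr_deriv (by ring)
  have hkey : ∀ t ∈ Set.Ici T,
      μ/2 * (w t * w t - u t * u t) ≤ 2*(w t)*(l2*w t + Rw t) - 2*(u t)*(l1*u t + Ru t) := by
    intro t ht
    set a := |u t| with ha
    set b := |w t| with hb
    have h1 : u t * Ru t ≤ a * (μ/8*(a+b)) := by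
      refine le_trans (le_abs_self _) ?_
      rw [abs_mul]
      exact mul_le_mul_of_nonneg_left (hRu t ht) (abs_nonneg _)
    have h2 : -(b * (μ/8*(a+b))) ≤ w t * Rw t := by
      refine le_trans ?_ (neg_abs_le _)
      rw [abs_mul]
      exact neg_le_neg (mul_le_mul_of_nonneg_left (hRw t ht) (abs_nonneg _))
    have h3 : μ * (u t*u t) ≤ -l1 * (u t*u t) :=
      mul_le_mul_of_nonneg_right hμl1 (mul_self_nonneg _)
    have h4 : μ * (w t*w t) ≤ l2 * (w t*w t) :=
      mul_le_mul_of_nonneg_right hμl2 (mul_self_nonneg _)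
    have h5 : u t*u t = a*a := (abs_mul_abs_self _).symm
    have h6 : w t*w t = b*b := (abs_mul_abs_self _).symm
    have h7 : a*(μ/8*(a+b)) + b*(μ/8*(a+b)) = μ/8*((a+b)*(a+b)) := by ring
    have h8 : (a+b)*(a+b) ≤ 2*(a*a) + 2*(b*b) := by nlinarith [sq_nonneg (a-b)]
    have h9 : μ/8*((a+b)*(a+b)) ≤ μ/8*(2*(a*a)+2*(b*b)) :=
      mul_le_mul_of_nonneg_left h8 (by positivity)
    nlinarith [h1, h2, h3, h4, h7, h9]
  have hV0 : Filter.Tendsto (fun t => w t * w t - u t * u t) Filter.atTop (nhds 0) := by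
    have := (hw0.mul hw0).sub (hu0.mul hu0)
    simpa using this
  have hVneg : ∀ t ∈ Set.Ici T, w t * w t - u t * u t ≤ 0 :=
    neg_of_deriv_ge (half_pos hμ1) hVd hV0 hkey
  have hba : ∀ t ∈ Set.Ici T, |w t| ≤ |u t| := by
    intro t ht
    have := hVneg t ht
    nlinarith [abs_nonneg (u t), abs_nonneg (w t), abs_mul_abs_self (u t), abs_mul_abs_self (w t)]
  -- decay of U = u²
  have hUd : ∀ t ∈ Set.Ici T, HasDerivWithinAt (fun t => u t * u t)
      (2*(u t)*(l1*u t + Ru t)) (Set.Ici T) t := by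
    intro t ht
    have h := (hu t ht).mul (hu t ht)
    exact h.congr_deriv (by ring)
  have hUle : ∀ t ∈ Set.Ici T, 2*(u t)*(l1*u t + Ru t) ≤ -(μ * (u t * u t)) := by
    intro t ht
    set a := |u t| with ha
    set b := |w t| with hb
    have h1 : u t * Ru t ≤ a * (μ/8*(a+b)) := by
      refine le_trans (le_abs_self _) ?_
      rw [abs_mul]
      exact mul_le_mul_of_nonneg_left (hRu t ht) (abs_nonneg _)
    have h3 : μ * (u t*u t) ≤ -l1 * (u t*u t) :=
      mul_le_mul_of_nonneg_right hμl1 (mul_self_nonneg _)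
    have h5 : u t*u t = a*a := (abs_mul_abs_self _).symm
    have hba' : b ≤ a := hba t ht
    have h10 : a * (μ/8*(a+b)) ≤ μ/4*(a*a) := by
      nlinarith [mul_nonneg hμ1.le (mul_nonneg (abs_nonneg (u t)) (sub_nonneg.mpr hba'))]
    nlinarith [h1, h3]
  have hU := decay_of_deriv_le hμ1 hUd hUle
  intro t ht
  have h11 : u t * u t ≤ u T * u T * Real.exp (-(μ * (t - T))) := hU t ht
  have h12 : Real.exp (-(μ * (t-T))) = Real.exp (-(μ/2 * (t-T))) * Real.exp (-(μ/2 * (t-T))) := by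
    rw [← Real.exp_add]; ring_nf
  have h13 : |u t| ≤ |u T| * Real.exp (-(μ/2 * (t - T))) := by
    set M := |u T| * Real.exp (-(μ/2 * (t - T))) with hM
    have hMnn : 0 ≤ M := by positivity
    have e1 : u T * u T * Real.exp (-(μ * (t - T))) = M * M := by
      rw [hM, h12, ← abs_mul_abs_self (u T)]; ring
    have e2 : |u t| * |u t| = u t * u t := abs_mul_abs_self _
    have e3 : |u t| * |u t| ≤ M * M := by linarith
    have h := Real.sqrt_le_sqrt e3
    rwa [Real.sqrt_mul_self (abs_nonneg _), Real.sqrt_mul_self hMnn] at h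
  have h14 := hba t ht
  linarith



set_option maxHeartbeats 1000000 in
/-- Along a solution on the stable manifold of `(A,B)` (positive initial
conditions, forward convergence to `(A,B)`), the function
`τ ↦ (α-1) * y τ - (β-1) * x τ` is integrable on `[0,∞)`, i.e. the improper
integral `∫₀^∞ ((α-1) y - (β-1) x)` converges. -/
theorem stmt_12 (α β δ : ℝ) (hα : 1 < α) (hβ : 1 < β) (hδ : 0 < δ)
    (A B : ℝ) (hA : A = (α - 1) / (α * β - 1)) (hB : B = (β - 1) / (α * β - 1))
    (x y : ℝ → ℝ)
    (hx : ∀ t ∈ Set.Ici (0 : ℝ),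
      HasDerivWithinAt x (x t * (1 - x t - α * y t)) (Set.Ici 0) t)
    (hy : ∀ t ∈ Set.Ici (0 : ℝ),
      HasDerivWithinAt y (δ * y t * (1 - y t - β * x t)) (Set.Ici 0) t)
    (hx0 : 0 < x 0) (hy0 : 0 < y 0)
    (hconv : Tendsto (fun t => (x t, y t)) atTop (nhds (A, B))) :
    IntegrableOn (fun τ => (α - 1) * y τ - (β - 1) * x τ) (Set.Ici 0) := by
  have hd0 : 0 < α*β - 1 := by nlinarith
  have hApos : 0 < A := by rw [hA]; exact div_pos (by linarith) hd0
  have hBpos : 0 < B := by rw [hB]; exact div_pos (by linarith) hd0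
  have hlinA : A + α * B = 1 := by rw [hA, hB]; field_simp; ring
  have hlinB : B + β * A = 1 := by
    rw [hA, hB, mul_div_assoc', ← add_div, div_eq_one_iff_eq hd0.ne']; ring
  have hDpos : 0 < (A - δ*B)^2 + 4*(α*β)*(δ*A*B) := by
    have h1 : 0 < 4*(α*β)*(δ*A*B) := by positivity
    nlinarith [sq_nonneg (A - δ*B)]
  set s := Real.sqrt ((A - δ*B)^2 + 4*(α*β)*(δ*A*B)) with hsdef
  have hs : s^2 = (A - δ*B)^2 + 4*(α*β)*(δ*A*B) := Real.sq_sqrt hDpos.le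
  have hspos : 0 < s := Real.sqrt_pos.mpr hDpos
  have hsgt : A + δ*B < s := by
    have h4 : 0 < 4*(δ*A*B)*(α*β-1) := by positivity
    nlinarith [hs, hspos]
  clear_value s
  set θ1 := (δ*B - A + s)/(2*(A*β)) with hθ1
  set θ2 := (δ*B - A - s)/(2*(A*β)) with hθ2
  set l1 := (-(A+δ*B) - s)/2 with hl1
  set l2 := (-(A+δ*B) + s)/2 with hl2
  have hAβ : A*β ≠ 0 := by positivity
  have hlam1 : l1 = -((1+θ1*β)*A) := by
    rw [hl1, hθ1]; field_simp; ring
  have hlam2 : l2 = -((1+θ2*β)*A) := by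
    rw [hl2, hθ2]; field_simp; ring
  have hquad1 : (A*β)*θ1^2 + (A - δ*B)*θ1 - δ*(α*B) = 0 := by
    rw [hθ1]; field_simp; linear_combination hs
  have hquad2 : (A*β)*θ2^2 + (A - δ*B)*θ2 - δ*(α*B) = 0 := by
    rw [hθ2]; field_simp; linear_combination hs
  have hq1 : l1*θ1 = -((δ*(α+θ1))*B) := by linear_combination θ1*hlam1 - hquad1
  have hq2 : l2*θ2 = -((δ*(α+θ2))*B) := by linear_combination θ2*hlam2 - hquad2
  have hl1neg : l1 < 0 := by rw [hl1]; nlinarith [hspos]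
  have hl2pos : 0 < l2 := by rw [hl2]; linarith
  have hdθeq : θ1 - θ2 = s/(A*β) := by rw [hθ1, hθ2]; field_simp; ring
  have hdθ : 0 < θ1 - θ2 := by rw [hdθeq]; positivity
  clear_value θ1 θ2 l1 l2
  set μ := min (-l1) l2 with hμdef
  have hμpos : 0 < μ := lt_min (by linarith) hl2pos
  have hμl1 : μ ≤ -l1 := min_le_left _ _
  have hμl2 : μ ≤ l2 := min_le_right _ _
  clear_value μ
  set κ := (|θ1| + |θ2| + 2)/(θ1 - θ2) with hκdef
  have hκpos : 0 < κ := by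
    apply div_pos (by positivity) hdθ
  clear_value κ
  set C := |1+θ1*β| + |δ*(α+θ1)| + |1+θ2*β| + |δ*(α+θ2)| + 1 with hCdef
  have hCpos : 0 < C := by positivity
  clear_value C
  set ε0 := μ/(8*(C*κ)) with hε0def
  have hε0pos : 0 < ε0 := by positivity
  clear_value ε0
  have hε0C : ε0 * (C*κ) = μ/8 := by
    rw [hε0def]; field_simp
  -- component limits
  have hxA : Tendsto x atTop (nhds A) := by
    have h := (continuous_fst.tendsto ((A, B) : ℝ × ℝ)).comp hconv
    exact h
  have hyB : Tendsto y atTop (nhds B) := by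
    have h := (continuous_snd.tendsto ((A, B) : ℝ × ℝ)).comp hconv
    exact h
  obtain ⟨T1, hT1⟩ := (Metric.tendsto_atTop.mp hxA) ε0 hε0pos
  obtain ⟨T2, hT2⟩ := (Metric.tendsto_atTop.mp hyB) ε0 hε0pos
  set T := max (max T1 T2) 0 with hTdef
  have hT0 : (0:ℝ) ≤ T := le_max_right _ _
  have hbx : ∀ t ∈ Set.Ici T, |x t - A| ≤ ε0 := by
    intro t ht
    have h := hT1 t (le_trans (le_trans (le_max_left T1 T2) (le_max_left _ 0)) ht)
    rw [Real.dist_eq] at h; exact h.le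
  have hby : ∀ t ∈ Set.Ici T, |y t - B| ≤ ε0 := by
    intro t ht
    have h := hT2 t (le_trans (le_trans (le_max_right T1 T2) (le_max_left _ 0)) ht)
    rw [Real.dist_eq] at h; exact h.le
  -- derivatives of the affine combinations
  have hP' : ∀ t ∈ Set.Ici (0:ℝ), HasDerivWithinAt (fun t => 1 - x t - α * y t)
      (0 - x t * (1 - x t - α * y t) - α * (δ * y t * (1 - y t - β * x t))) (Set.Ici 0) t :=
    fun t ht => ((hasDerivWithinAt_const t _ 1).sub (hx t ht)).sub ((hy t ht).const_mul α)
  have hQ' : ∀ t ∈ Set.Ici (0:ℝ), HasDerivWithinAt (fun t => 1 - y t - β * x t)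
      (0 - δ * y t * (1 - y t - β * x t) - β * (x t * (1 - x t - α * y t))) (Set.Ici 0) t :=
    fun t ht => ((hasDerivWithinAt_const t _ 1).sub (hy t ht)).sub ((hx t ht).const_mul β)
  have hu' : ∀ t ∈ Set.Ici T, HasDerivWithinAt
      (fun t => (1 - x t - α * y t) + θ1 * (1 - y t - β * x t))
      (l1 * ((1 - x t - α * y t) + θ1 * (1 - y t - β * x t)) +
        (-((1+θ1*β)*((x t - A)*(1 - x t - α*y t))) - (δ*(α+θ1))*((y t - B)*(1 - y t - β*x t))))
      (Set.Ici T) t := by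
    intro t ht
    have ht0 : t ∈ Set.Ici (0:ℝ) := le_trans hT0 ht
    have h := ((hP' t ht0).add ((hQ' t ht0).const_mul θ1)).mono (Set.Ici_subset_Ici.mpr hT0)
    exact h.congr_deriv (Eq.symm (by
    linear_combination (1 - x t - α*y t) * hlam1 + (1 - y t - β*x t) * hq1))
  have hw' : ∀ t ∈ Set.Ici T, HasDerivWithinAt
      (fun t => (1 - x t - α * y t) + θ2 * (1 - y t - β * x t))
      (l2 * ((1 - x t - α * y t) + θ2 * (1 - y t - β * x t)) +
        (-((1+θ2*β)*((x t - A)*(1 - x t - α*y t))) - (δ*(α+θ2))*((y t - B)*(1 - y t - β*x t))))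
      (Set.Ici T) t := by
    intro t ht
    have ht0 : t ∈ Set.Ici (0:ℝ) := le_trans hT0 ht
    have h := ((hP' t ht0).add ((hQ' t ht0).const_mul θ2)).mono (Set.Ici_subset_Ici.mpr hT0)
    exact h.congr_deriv (Eq.symm (by
    linear_combination (1 - x t - α*y t) * hlam2 + (1 - y t - β*x t) * hq2))
  -- the |P|+|Q| ≤ κ(|U|+|W|) bound
  have hPQ : ∀ t : ℝ, |1 - x t - α*y t| + |1 - y t - β*x t| ≤
      κ * (|(1 - x t - α * y t) + θ1 * (1 - y t - β * x t)| +
           |(1 - x t - α * y t) + θ2 * (1 - y t - β * x t)|) := by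
    intro t
    set P := 1 - x t - α*y t with hP
    set Q := 1 - y t - β*x t with hQ
    have h1 : (θ1 - θ2) * |P| = |θ1*(P + θ2*Q) - θ2*(P + θ1*Q)| := by
      rw [← abs_of_pos hdθ, ← abs_mul]; congr 1; ring
    have h2 : |θ1*(P + θ2*Q) - θ2*(P + θ1*Q)| ≤ |θ1| * |P + θ2*Q| + |θ2| * |P + θ1*Q| := by
      rw [sub_eq_add_neg]
      refine (abs_add_le _ _).trans ?_
      rw [abs_neg, abs_mul, abs_mul]
    have h3 : (θ1 - θ2) * |Q| = |(P + θ1*Q) - (P + θ2*Q)| := by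
      rw [← abs_of_pos hdθ, ← abs_mul]; congr 1; ring
    have h4 : |(P + θ1*Q) - (P + θ2*Q)| ≤ |P + θ1*Q| + |P + θ2*Q| := by
      rw [sub_eq_add_neg]
      refine (abs_add_le _ _).trans ?_
      rw [abs_neg]
    rw [hκdef, div_mul_eq_mul_div, le_div_iff₀ hdθ]
    linarith only [h1, h2, h3, h4,
      mul_nonneg (abs_nonneg θ1) (abs_nonneg (P + θ1*Q)),
      mul_nonneg (abs_nonneg θ2) (abs_nonneg (P + θ2*Q)),
      abs_nonneg (P + θ1*Q), abs_nonneg (P + θ2*Q)]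
  -- bounds on the perturbations
  have hRB : ∀ θ : ℝ, |1+θ*β| ≤ C → |δ*(α+θ)| ≤ C → ∀ t ∈ Set.Ici T,
      |(-((1+θ*β)*((x t - A)*(1 - x t - α*y t))) - (δ*(α+θ))*((y t - B)*(1 - y t - β*x t)))| ≤
      μ/8 * (|(1 - x t - α * y t) + θ1 * (1 - y t - β * x t)| +
             |(1 - x t - α * y t) + θ2 * (1 - y t - β * x t)|) := by
    intro θ c1 c2 t ht
    set P := 1 - x t - α*y t with hP
    set Q := 1 - y t - β*x t with hQ
    have hxa := hbx t ht
    have hya := hby t ht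
    have habs : |(-((1+θ*β)*((x t - A)*P)) - (δ*(α+θ))*((y t - B)*Q))| ≤
        |1+θ*β| * (|x t - A| * |P|) + |δ*(α+θ)| * (|y t - B| * |Q|) := by
      have e : (-((1+θ*β)*((x t - A)*P)) - (δ*(α+θ))*((y t - B)*Q)) =
          -((1+θ*β)*((x t - A)*P) + (δ*(α+θ))*((y t - B)*Q)) := by ring
      rw [e, abs_neg]
      refine (abs_add_le _ _).trans (le_of_eq ?_)
      rw [abs_mul ((1:ℝ)+θ*β), abs_mul (x t - A), abs_mul (δ*(α+θ)), abs_mul (y t - B)]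
    have s1 : |1+θ*β| * (|x t - A| * |P|) ≤ C * (ε0 * |P|) :=
      mul_le_mul c1 (mul_le_mul_of_nonneg_right hxa (abs_nonneg _))
        (by positivity) hCpos.le
    have s2 : |δ*(α+θ)| * (|y t - B| * |Q|) ≤ C * (ε0 * |Q|) :=
      mul_le_mul c2 (mul_le_mul_of_nonneg_right hya (abs_nonneg _))
        (by positivity) hCpos.le
    have s4 : (ε0*C) * (|P|+|Q|) ≤ (ε0*C) * (κ * (|P + θ1*Q| + |P + θ2*Q|)) :=
      mul_le_mul_of_nonneg_left (hPQ t) (by positivity)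
    have s5 : (ε0*C) * (κ * (|P + θ1*Q| + |P + θ2*Q|)) =
        (ε0*(C*κ)) * (|P + θ1*Q| + |P + θ2*Q|) := by ring
    rw [hε0C] at s5
    linarith only [habs, s1, s2, s4, s5]
  have hc11 : |1+θ1*β| ≤ C := by
    rw [hCdef]
    have := abs_nonneg (δ*(α+θ1)); have := abs_nonneg (1+θ2*β); have := abs_nonneg (δ*(α+θ2))
    linarith
  have hc12 : |δ*(α+θ1)| ≤ C := by
    rw [hCdef]
    have := abs_nonneg (1+θ1*β); have := abs_nonneg (1+θ2*β); have := abs_nonneg (δ*(α+θ2))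
    linarith
  have hc21 : |1+θ2*β| ≤ C := by
    rw [hCdef]
    have := abs_nonneg (δ*(α+θ1)); have := abs_nonneg (1+θ1*β); have := abs_nonneg (δ*(α+θ2))
    linarith
  have hc22 : |δ*(α+θ2)| ≤ C := by
    rw [hCdef]
    have := abs_nonneg (δ*(α+θ1)); have := abs_nonneg (1+θ2*β); have := abs_nonneg (1+θ1*β)
    linarith
  -- limits of u and w
  have hP0 : Tendsto (fun t => 1 - x t - α * y t) atTop (nhds 0) := by
    have h := (((tendsto_const_nhds : Tendsto (fun _ : ℝ => (1:ℝ)) atTop (nhds 1)).sub hxA).sub (hyB.const_mul α))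
    have e : (1:ℝ) - A - α*B = 0 := by linarith
    rw [e] at h; exact h
  have hQ0 : Tendsto (fun t => 1 - y t - β * x t) atTop (nhds 0) := by
    have h := (((tendsto_const_nhds : Tendsto (fun _ : ℝ => (1:ℝ)) atTop (nhds 1)).sub hyB).sub (hxA.const_mul β))
    have e : (1:ℝ) - B - β*A = 0 := by linarith
    rw [e] at h; exact h
  have hu0 : Tendsto (fun t => (1 - x t - α * y t) + θ1 * (1 - y t - β * x t)) atTop (nhds 0) := by
    have h := hP0.add (hQ0.const_mul θ1)
    simpa using h
  have hw0 : Tendsto (fun t => (1 - x t - α * y t) + θ2 * (1 - y t - β * x t)) atTop (nhds 0) := by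
    have h := hP0.add (hQ0.const_mul θ2)
    simpa using h
  -- the decay estimate
  have hdecay := core_decay hμpos hμl1 hμl2 hu' hw' (hRB θ1 hc11 hc12) (hRB θ2 hc21 hc22) hu0 hw0
  -- bound on the integrand
  set M0 := 2 * |(1 - x T - α * y T) + θ1 * (1 - y T - β * x T)| with hM0
  have hgb : ∀ t ∈ Set.Ici T, |(α-1)*y t - (β-1)*x t| ≤
      (κ * M0 * Real.exp (μ/2*T)) * Real.exp (-(μ/2)*t) := by
    intro t ht
    have hd : |(1 - x t - α * y t) + θ1 * (1 - y t - β * x t)| +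
        |(1 - x t - α * y t) + θ2 * (1 - y t - β * x t)| ≤
        2 * |(1 - x T - α * y T) + θ1 * (1 - y T - β * x T)| *
          Real.exp (-(μ / 2 * (t - T))) := hdecay t ht
    have e0 : (α-1)*y t - (β-1)*x t = (1 - y t - β*x t) - (1 - x t - α*y t) := by ring
    have e1 : |(α-1)*y t - (β-1)*x t| ≤ |1 - x t - α*y t| + |1 - y t - β*x t| := by
      rw [e0, sub_eq_add_neg]
      refine (abs_add_le _ _).trans ?_
      rw [abs_neg]; linarith
    have e2 := hPQ t
    have e3 : κ * (|(1 - x t - α * y t) + θ1 * (1 - y t - β * x t)| +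
        |(1 - x t - α * y t) + θ2 * (1 - y t - β * x t)|) ≤
        κ * (M0 * Real.exp (-(μ/2 * (t - T)))) := by
      refine mul_le_mul_of_nonneg_left ?_ hκpos.le
      rw [hM0]
      linarith [hd]
    have e4 : κ * (M0 * Real.exp (-(μ/2 * (t - T)))) =
        (κ * M0 * Real.exp (μ/2*T)) * Real.exp (-(μ/2)*t) := by
      rw [mul_assoc (κ * M0), ← Real.exp_add]
      ring_nf
    linarith only [e1, e2, e3, e4.le, e4.ge]
  -- integrability
  have hxc : ContinuousOn x (Set.Ici 0) := fun t ht => (hx t ht).continuousWithinAt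
  have hyc : ContinuousOn y (Set.Ici 0) := fun t ht => (hy t ht).continuousWithinAt
  have hgc : ContinuousOn (fun τ => (α - 1) * y τ - (β - 1) * x τ) (Set.Ici 0) :=
    (continuousOn_const.mul hyc).sub (continuousOn_const.mul hxc)
  have I1 : IntegrableOn (fun τ => (α - 1) * y τ - (β - 1) * x τ) (Set.Icc 0 T) :=
    (hgc.mono Set.Icc_subset_Ici_self).integrableOn_compact isCompact_Icc
  have hmaj : IntegrableOn (fun t => (κ * M0 * Real.exp (μ/2*T)) * Real.exp (-(μ/2)*t))
      (Set.Ici T) := by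
    rw [integrableOn_Ici_iff_integrableOn_Ioi]
    have h := (exp_neg_integrableOn_Ioi T (show (0:ℝ) < μ/2 by positivity)).const_mul
      (κ * M0 * Real.exp (μ/2*T))
    simpa [neg_mul, IntegrableOn] using h
  have I2 : IntegrableOn (fun τ => (α - 1) * y τ - (β - 1) * x τ) (Set.Ici T) := by
    refine hmaj.mono' ((hgc.mono (Set.Ici_subset_Ici.mpr hT0)).aestronglyMeasurable
      measurableSet_Ici) ?_
    refine (ae_restrict_iff' measurableSet_Ici).mpr (Filter.Eventually.of_forall fun t ht => ?_)
    rw [Real.norm_eq_abs]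
    exact hgb t ht
  have hcover : Set.Ici (0:ℝ) ⊆ Set.Icc 0 T ∪ Set.Ici T := by
    intro z hz
    rcases le_total z T with h | h
    · exact Or.inl ⟨hz, h⟩
    · exact Or.inr h
  exact (I1.union I2).mono_set hcover
end

section
/- Let α>1, β>1, δ>0, A=(α-1)/(αβ-1), B=(β-1)/(αβ-1). If (x(t),y(t)) is a solution of the system dx/dt = x(1-x-αy), dy/dt = δy(1-y-βx) on [0,∞) with x(0)=x₀>0, y(0)=y₀>0 and (x(t),y(t))→(A,B) as t→∞, then y₀ = B·(x₀/A)^δ · exp( −δ·∫₀^∞ ((α−1)y(τ) − (β−1)x(τ)) dτ ), the improper integral being convergent. -/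
open Filter MeasureTheory Real
open Topology

section helpers
open Filter MeasureTheory Real Set Topology intervalIntegral

lemma primitive_hderiv {f : ℝ → ℝ} (hf : ContinuousOn f (Set.Ici 0)) :
    ∀ t ∈ Set.Ici (0:ℝ), HasDerivWithinAt (fun u => ∫ s in (0:ℝ)..u, f s) (f t) (Set.Ici 0) t := by
  intro t ht
  have hmeasset : AEStronglyMeasurable f (volume.restrict (Set.Ici 0)) :=
    hf.aestronglyMeasurable measurableSet_Ici
  have hi : IntervalIntegrable f volume 0 t := by
    apply ContinuousOn.intervalIntegrable
    apply hf.mono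
    rw [Set.uIcc_of_le ht]
    exact fun s hs => hs.1
  rcases eq_or_lt_of_le (show (0:ℝ) ≤ t from ht) with h0 | h0
  · subst h0
    have hmeas : StronglyMeasurableAtFilter f (𝓝[>] (0:ℝ)) :=
      ⟨Set.Ici 0, mem_of_superset self_mem_nhdsWithin Ioi_subset_Ici_self, hmeasset⟩
    exact intervalIntegral.integral_hasDerivWithinAt_right hi hmeas
      ((hf 0 ht).mono Ioi_subset_Ici_self)
  · have hmem : Set.Ici (0:ℝ) ∈ 𝓝 t := Ici_mem_nhds h0
    have hmeas : StronglyMeasurableAtFilter f (𝓝 t) := ⟨Set.Ici 0, hmem, hmeasset⟩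
    exact (intervalIntegral.integral_hasDerivAt_right hi hmeas
      ((hf t ht).continuousAt hmem)).hasDerivWithinAt

lemma exp_rep {z c : ℝ → ℝ} (hc : ContinuousOn c (Set.Ici 0))
    (hz : ∀ t ∈ Set.Ici (0:ℝ), HasDerivWithinAt z (c t * z t) (Set.Ici 0) t) :
    ∀ t ∈ Set.Ici (0:ℝ), z t = z 0 * Real.exp (∫ s in (0:ℝ)..t, c s) := by
  set C : ℝ → ℝ := fun u => ∫ s in (0:ℝ)..u, c s with hC
  have hCd := primitive_hderiv hc
  have hCcont : ContinuousOn C (Set.Ici 0) := fun s hs => (hCd s hs).continuousWithinAt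
  have hzcont : ContinuousOn z (Set.Ici 0) := fun s hs => (hz s hs).continuousWithinAt
  intro t ht
  have key : ∀ u ∈ Set.Icc (0:ℝ) t, z u * Real.exp (-C u) = z 0 * Real.exp (-C 0) := by
    apply constant_of_has_deriv_right_zero
    · exact (hzcont.mono (Icc_subset_Ici_self)).mul
        (((hCcont.mono (Icc_subset_Ici_self)).neg).rexp)
    · intro s hs
      have hs0 : s ∈ Set.Ici (0:ℝ) := hs.1
      have hsub : Set.Ici s ⊆ Set.Ici (0:ℝ) := Ici_subset_Ici.mpr hs.1
      have h1 : HasDerivWithinAt z (c s * z s) (Set.Ici s) s := (hz s hs.1).mono hsub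
      have h2 : HasDerivWithinAt (fun u => Real.exp (-C u)) (Real.exp (-C s) * (-(c s)))
          (Set.Ici s) s := (((hCd s hs.1).mono hsub).neg).exp
      have := h1.mul h2
      refine this.congr_deriv ?_
      ring
  have h0t : (0:ℝ) ∈ Set.Icc (0:ℝ) t := ⟨le_refl _, ht⟩
  have := key t ⟨ht, le_refl t⟩
  have hne : Real.exp (-C t) ≠ 0 := Real.exp_ne_zero _
  have hC0 : C 0 = 0 := intervalIntegral.integral_same
  rw [hC0] at this
  field_simp at this
  simp only [neg_zero, Real.exp_zero, mul_one] at this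
  have h2 : z t = z t * rexp (-C t) * rexp (C t) := by
    rw [mul_assoc, ← Real.exp_add]; simp
  rw [h2, this]

lemma integrableOn_of_sign_tendsto {g : ℝ → ℝ} (hg : ContinuousOn g (Set.Ici 0))
    {T : ℝ} (hT : 0 ≤ T)
    (hsgn : (∀ t, T ≤ t → 0 ≤ g t) ∨ (∀ t, T ≤ t → g t ≤ 0)) {L : ℝ}
    (hL : Tendsto (fun t => ∫ s in (0:ℝ)..t, g s) atTop (𝓝 L)) :
    IntegrableOn g (Set.Ici 0) := by
  have hIcc : ∀ u : ℝ, IntegrableOn g (Set.Icc 0 u) := by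
    intro u
    rcases le_or_gt 0 u with h | h
    · exact (hg.mono (fun s hs => hs.1)).integrableOn_Icc
    · rw [Set.Icc_eq_empty (by linarith)]; exact integrableOn_empty
  have hii : ∀ u : ℝ, 0 ≤ u → IntervalIntegrable g volume 0 u := by
    intro u hu
    rw [intervalIntegrable_iff_integrableOn_Icc_of_le hu]
    exact hIcc u
  -- integral from T to u tends to L - ∫_0^T
  have hTi : Tendsto (fun u => ∫ s in T..u, g s) atTop (𝓝 (L - ∫ s in (0:ℝ)..T, g s)) := by
    have : ∀ᶠ u in atTop, (∫ s in (0:ℝ)..u, g s) - (∫ s in (0:ℝ)..T, g s) = ∫ s in T..u, g s := by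
      filter_upwards [eventually_ge_atTop T] with u hu
      exact intervalIntegral.integral_interval_sub_left (hii u (hT.trans hu)) (hii T hT)
    exact Tendsto.congr' this (hL.sub tendsto_const_nhds)
  have habs : Tendsto (fun u => ∫ s in T..u, ‖g s‖) atTop
      (𝓝 (|L - ∫ s in (0:ℝ)..T, g s|)) := by
    have h2 : Tendsto (fun u => |∫ s in T..u, g s|) atTop
        (𝓝 (|L - ∫ s in (0:ℝ)..T, g s|)) := hTi.abs
    apply Tendsto.congr' _ h2
    filter_upwards [eventually_ge_atTop T] with u hu
    have huIcc : Set.uIcc T u ⊆ Set.Ici T := by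
      rw [Set.uIcc_of_le hu]; exact fun s hs => hs.1
    rcases hsgn with hpos | hneg
    · have he : ∀ s ∈ Set.uIcc T u, ‖g s‖ = g s := fun s hs => abs_of_nonneg (hpos s (huIcc hs))
      rw [abs_of_nonneg (_root_.intervalIntegral.integral_nonneg hu (fun s hs => hpos s hs.1)),
        _root_.intervalIntegral.integral_congr he]
    · have he : ∀ s ∈ Set.uIcc T u, ‖g s‖ = -g s := fun s hs => abs_of_nonpos (hneg s (huIcc hs))
      have hnn : 0 ≤ ∫ s in T..u, -g s :=
        _root_.intervalIntegral.integral_nonneg hu (fun s hs => neg_nonneg.mpr (hneg s hs.1))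
      rw [_root_.intervalIntegral.integral_neg] at hnn
      rw [abs_of_nonpos (by linarith), _root_.intervalIntegral.integral_congr he,
        _root_.intervalIntegral.integral_neg]
  have hIoi : IntegrableOn g (Set.Ioi T) :=
    integrableOn_Ioi_of_intervalIntegral_norm_tendsto _ T
      (fun i => ((hIcc (max 0 i)).mono_set (fun s hs =>
        ⟨hT.trans (le_of_lt hs.1), hs.2.trans (le_max_right 0 i)⟩))) tendsto_id habs
  have : IntegrableOn g (Set.Icc 0 T ∪ Set.Ioi T) := (hIcc T).union hIoi
  exact this.mono_set (fun s hs => by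
    rcases le_or_gt s T with h | h
    · exact Or.inl ⟨hs, h⟩
    · exact Or.inr h)

lemma sign_const {f : ℝ → ℝ} {T : ℝ} (hf : ContinuousOn f (Set.Ici T))
    (h : ∀ t, T ≤ t → f t ≠ 0) : (∀ t, T ≤ t → 0 < f t) ∨ (∀ t, T ≤ t → f t < 0) := by
  have key : ∀ t, T ≤ t → (0 < f T ↔ 0 < f t) := by
    intro t ht
    by_contra hcon
    have hTt : Set.uIcc T t ⊆ Set.Ici T := by
      rw [Set.uIcc_of_le ht]; exact fun s hs => hs.1
    have hiv := intermediate_value_uIcc (hf.mono hTt)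
    have h0 : (0:ℝ) ∈ Set.uIcc (f T) (f t) := by
      rw [Set.mem_uIcc]
      have h' := not_iff.mp hcon
      by_cases hT0 : 0 < f T
      · exact Or.inr ⟨le_of_not_gt (fun hq => hcon ⟨fun _ => hq, fun _ => hT0⟩), le_of_lt hT0⟩
      · exact Or.inl ⟨le_of_not_gt hT0, le_of_lt (h'.mp hT0)⟩
    obtain ⟨r, hr, hr0⟩ := hiv h0
    exact h r (hTt hr) hr0
  rcases lt_or_gt_of_ne (h T le_rfl).symm with hp | hn
  · exact Or.inl (fun t ht => (key t ht).mp hp)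
  · exact Or.inr (fun t ht => by
      by_contra hc
      have : 0 < f t := lt_of_le_of_ne (not_lt.mp hc) (Ne.symm (h t ht))
      exact absurd ((key t ht).mpr this) (not_lt.mpr (le_of_lt hn)))

lemma mono_limit_sign {z d : ℝ → ℝ} {T L : ℝ} (hT : 0 ≤ T)
    (hz : ∀ t ∈ Set.Ici (0:ℝ), HasDerivWithinAt z (d t) (Set.Ici 0) t)
    (hd : ∀ t, T ≤ t → d t ≤ 0) (hlim : Tendsto z atTop (𝓝 L)) :
    ∀ t, T ≤ t → L ≤ z t := by
  have hanti : AntitoneOn z (Set.Ici T) := by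
    apply antitoneOn_of_deriv_nonpos (convex_Ici T)
    · exact fun s hs => ((hz s (hT.trans hs)).continuousWithinAt).mono
        (Set.Ici_subset_Ici.mpr hT)
    · intro s hs
      rw [interior_Ici] at hs
      exact ((hz s (hT.trans hs.le)).hasDerivAt
        (Ici_mem_nhds (lt_of_le_of_lt hT hs))).differentiableAt.differentiableWithinAt
    · intro s hs
      rw [interior_Ici] at hs
      rw [((hz s (hT.trans hs.le)).hasDerivAt (Ici_mem_nhds (lt_of_le_of_lt hT hs))).deriv]
      exact hd s hs.le
  intro t ht
  apply le_of_tendsto hlim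
  filter_upwards [eventually_ge_atTop t] with s hs
  exact hanti ht (ht.trans hs) hs

end helpers

set_option maxHeartbeats 2000000 in
/-- Integral equation for the separatrix: if the forward solution from
`(x₀,y₀)` (positive initial conditions) converges to the saddle `(A,B)`,
then `y₀ = B (x₀/A)^δ exp(-δ ∫₀^∞ ((α-1) y - (β-1) x))`, the improper
integral being convergent. -/
theorem stmt_13 (α β δ : ℝ) (hα : 1 < α) (hβ : 1 < β) (hδ : 0 < δ)
    (A B : ℝ) (hA : A = (α - 1) / (α * β - 1)) (hB : B = (β - 1) / (α * β - 1))
    (x₀ y₀ : ℝ) (hx₀ : 0 < x₀) (hy₀ : 0 < y₀)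
    (x y : ℝ → ℝ)
    (hx : ∀ t ∈ Set.Ici (0 : ℝ),
      HasDerivWithinAt x (x t * (1 - x t - α * y t)) (Set.Ici 0) t)
    (hy : ∀ t ∈ Set.Ici (0 : ℝ),
      HasDerivWithinAt y (δ * y t * (1 - y t - β * x t)) (Set.Ici 0) t)
    (hx0 : x 0 = x₀) (hy0 : y 0 = y₀)
    (hconv : Tendsto (fun t => (x t, y t)) atTop (nhds (A, B))) :
    IntegrableOn (fun τ => (α - 1) * y τ - (β - 1) * x τ) (Set.Ici 0) ∧
    y₀ = B * (x₀ / A) ^ δ *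
      Real.exp (-δ * ∫ τ in Set.Ici (0 : ℝ), ((α - 1) * y τ - (β - 1) * x τ)) := by
  have hab1 : (1:ℝ) < α * β := by nlinarith
  have hab0 : (0:ℝ) < α * β - 1 := by linarith
  have hA0 : 0 < A := by rw [hA]; apply div_pos <;> linarith
  have hB0 : 0 < B := by rw [hB]; apply div_pos <;> linarith
  have hAe1 : (α * β - 1) * A = α - 1 := by rw [hA]; field_simp
  have hBe1 : (α * β - 1) * B = β - 1 := by rw [hB]; field_simp
  have hABe : (α - 1) * B = (β - 1) * A := by
    have h1 : (α - 1) * ((α * β - 1) * B) = (α - 1) * (β - 1) := by rw [hBe1]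
    have h2 : (β - 1) * ((α * β - 1) * A) = (β - 1) * (α - 1) := by rw [hAe1]
    have h3 : (α * β - 1) * ((α - 1) * B) = (α * β - 1) * ((β - 1) * A) := by
      linarith [h1, h2, mul_comm (α - 1) (β - 1)]
    exact mul_left_cancel₀ (ne_of_gt hab0) h3
  have hcx : ContinuousOn x (Set.Ici 0) := fun t ht => (hx t ht).continuousWithinAt
  have hcy : ContinuousOn y (Set.Ici 0) := fun t ht => (hy t ht).continuousWithinAt
  -- exponential representations
  set c1 : ℝ → ℝ := fun t => 1 - x t - α * y t with hc1
  set c2 : ℝ → ℝ := fun t => δ * (1 - y t - β * x t) with hc2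
  have hc1cont : ContinuousOn c1 (Set.Ici 0) :=
    (continuousOn_const.sub hcx).sub (continuousOn_const.mul hcy)
  have hc2cont : ContinuousOn c2 (Set.Ici 0) :=
    continuousOn_const.mul ((continuousOn_const.sub hcy).sub (continuousOn_const.mul hcx))
  have hxrep : ∀ t ∈ Set.Ici (0:ℝ), x t = x₀ * Real.exp (∫ s in (0:ℝ)..t, c1 s) := by
    have := exp_rep hc1cont (fun t ht => by
      have h := hx t ht
      convert h using 1
      simp only [hc1]
      ring)
    intro t ht
    rw [← hx0]
    exact this t ht
  have hyrep : ∀ t ∈ Set.Ici (0:ℝ), y t = y₀ * Real.exp (∫ s in (0:ℝ)..t, c2 s) := by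
    have := exp_rep hc2cont (fun t ht => by
      have h := hy t ht
      convert h using 1
      simp only [hc2]
      ring)
    intro t ht
    rw [← hy0]
    exact this t ht
  have hxpos : ∀ t ∈ Set.Ici (0:ℝ), 0 < x t := fun t ht => by
    rw [hxrep t ht]; positivity
  have hypos : ∀ t ∈ Set.Ici (0:ℝ), 0 < y t := fun t ht => by
    rw [hyrep t ht]; positivity
  -- limits
  have hxlim : Tendsto x atTop (𝓝 A) := by
    have := (continuous_fst.continuousAt (x := (A, B))).tendsto.comp hconv
    exact this
  have hylim : Tendsto y atTop (𝓝 B) := by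
    have := (continuous_snd.continuousAt (x := (A, B))).tendsto.comp hconv
    exact this
  -- limits of the primitives of c1, c2
  set l1 : ℝ := Real.log A - Real.log x₀ with hl1
  set l2 : ℝ := Real.log B - Real.log y₀ with hl2
  have hJ1lim : Tendsto (fun t => ∫ s in (0:ℝ)..t, c1 s) atTop (𝓝 l1) := by
    have hlog : Tendsto (fun t => Real.log (x t) - Real.log x₀) atTop (𝓝 l1) :=
      ((Real.continuousAt_log hA0.ne').tendsto.comp hxlim).sub_const _
    apply Tendsto.congr' _ hlog
    filter_upwards [eventually_ge_atTop (0:ℝ)] with t ht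
    rw [hxrep t ht, Real.log_mul hx₀.ne' (Real.exp_ne_zero _), Real.log_exp]
    ring
  have hJ2lim : Tendsto (fun t => ∫ s in (0:ℝ)..t, c2 s) atTop (𝓝 l2) := by
    have hlog : Tendsto (fun t => Real.log (y t) - Real.log y₀) atTop (𝓝 l2) :=
      ((Real.continuousAt_log hB0.ne').tendsto.comp hylim).sub_const _
    apply Tendsto.congr' _ hlog
    filter_upwards [eventually_ge_atTop (0:ℝ)] with t ht
    rw [hyrep t ht, Real.log_mul hy₀.ne' (Real.exp_ne_zero _), Real.log_exp]
    ring
  -- interval integrability on [0, t]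
  have hII : ∀ (g : ℝ → ℝ), ContinuousOn g (Set.Ici 0) → ∀ t : ℝ, 0 ≤ t →
      IntervalIntegrable g volume 0 t := by
    intro g hg t ht
    apply ContinuousOn.intervalIntegrable
    apply hg.mono
    rw [Set.uIcc_of_le ht]
    exact fun s hs => hs.1
  have hpxcont : ContinuousOn (fun s => x s - A) (Set.Ici 0) := hcx.sub continuousOn_const
  have hqycont : ContinuousOn (fun s => y s - B) (Set.Ici 0) := hcy.sub continuousOn_const
  -- limits of ∫ (x - A) and ∫ (y - B)
  set Lp : ℝ := (δ * l1 - α * l2) / (δ * (α * β - 1)) with hLp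
  set Lq : ℝ := (l2 - δ * β * l1) / (δ * (α * β - 1)) with hLq
  have hden : δ * (α * β - 1) ≠ 0 := by positivity
  have hFpeq : ∀ t : ℝ, 0 ≤ t →
      (∫ s in (0:ℝ)..t, (x s - A)) = (δ * (∫ s in (0:ℝ)..t, c1 s)
        - α * (∫ s in (0:ℝ)..t, c2 s)) / (δ * (α * β - 1)) := by
    intro t ht
    rw [eq_div_iff hden]
    have h1 : (∫ s in (0:ℝ)..t, (x s - A)) * (δ * (α * β - 1))
        = ∫ s in (0:ℝ)..t, (δ * (α * β - 1)) * (x s - A) := by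
      rw [intervalIntegral.integral_const_mul]; ring
    rw [h1]
    have h2 : ∀ s : ℝ, (δ * (α * β - 1)) * (x s - A) = δ * c1 s - α * c2 s := by
      intro s
      simp only [hc1, hc2]
      linear_combination (-δ) * hAe1
    rw [intervalIntegral.integral_congr (fun s _ => h2 s)]
    rw [intervalIntegral.integral_sub ((hII c1 hc1cont t ht).const_mul δ)
      ((hII c2 hc2cont t ht).const_mul α),
      intervalIntegral.integral_const_mul, intervalIntegral.integral_const_mul]
  have hFqeq : ∀ t : ℝ, 0 ≤ t →
      (∫ s in (0:ℝ)..t, (y s - B)) = ((∫ s in (0:ℝ)..t, c2 s)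
        - δ * β * (∫ s in (0:ℝ)..t, c1 s)) / (δ * (α * β - 1)) := by
    intro t ht
    rw [eq_div_iff hden]
    have h1 : (∫ s in (0:ℝ)..t, (y s - B)) * (δ * (α * β - 1))
        = ∫ s in (0:ℝ)..t, (δ * (α * β - 1)) * (y s - B) := by
      rw [intervalIntegral.integral_const_mul]; ring
    rw [h1]
    have h2 : ∀ s : ℝ, (δ * (α * β - 1)) * (y s - B) = c2 s - δ * β * c1 s := by
      intro s
      simp only [hc1, hc2]
      linear_combination (-δ) * hBe1
    rw [intervalIntegral.integral_congr (fun s _ =>h2 s)]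
    rw [intervalIntegral.integral_sub (hII c2 hc2cont t ht)
      ((hII c1 hc1cont t ht).const_mul (δ * β)),
      intervalIntegral.integral_const_mul, intervalIntegral.integral_const_mul]
  have hFplim : Tendsto (fun t => ∫ s in (0:ℝ)..t, (x s - A)) atTop (𝓝 Lp) := by
    have h := ((hJ1lim.const_mul δ).sub (hJ2lim.const_mul α)).div_const (δ * (α * β - 1))
    apply Tendsto.congr' _ h
    filter_upwards [eventually_ge_atTop (0:ℝ)] with t ht
    exact (hFpeq t ht).symm
  have hFqlim : Tendsto (fun t => ∫ s in (0:ℝ)..t, (y s - B)) atTop (𝓝 Lq) := by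
    have h := (hJ2lim.sub (hJ1lim.const_mul (δ * β))).div_const (δ * (α * β - 1))
    apply Tendsto.congr' _ h
    filter_upwards [eventually_ge_atTop (0:ℝ)] with t ht
    exact (hFqeq t ht).symm
  -- sign analysis via the monotone quantity ψ = P Q E1 E2
  set P : ℝ → ℝ := fun t => x t + α * y t - 1 with hP
  set Q : ℝ → ℝ := fun t => β * x t + y t - 1 with hQ
  have hPcont : ContinuousOn P (Set.Ici 0) :=
    (hcx.add (continuousOn_const.mul hcy)).sub continuousOn_const
  have hQcont : ContinuousOn Q (Set.Ici 0) :=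
    ((continuousOn_const.mul hcx).add hcy).sub continuousOn_const
  set E1 : ℝ → ℝ := fun t => Real.exp (∫ s in (0:ℝ)..t, x s) with hE1
  set E2 : ℝ → ℝ := fun t => Real.exp (∫ s in (0:ℝ)..t, δ * y s) with hE2
  have hcy' : ContinuousOn (fun s => δ * y s) (Set.Ici 0) := continuousOn_const.mul hcy
  have hE1d : ∀ t ∈ Set.Ici (0:ℝ), HasDerivWithinAt E1 (E1 t * x t) (Set.Ici 0) t :=
    fun t ht => (primitive_hderiv hcx t ht).exp
  have hE2d : ∀ t ∈ Set.Ici (0:ℝ), HasDerivWithinAt E2 (E2 t * (δ * y t)) (Set.Ici 0) t :=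
    fun t ht => (primitive_hderiv hcy' t ht).exp
  have hE1pos : ∀ t, 0 < E1 t := fun t => Real.exp_pos _
  have hE2pos : ∀ t, 0 < E2 t := fun t => Real.exp_pos _
  set ψ : ℝ → ℝ := fun t => P t * Q t * (E1 t * E2 t) with hψ
  have hψd : ∀ t ∈ Set.Ici (0:ℝ), HasDerivWithinAt ψ
      (-(E1 t * E2 t) * (α * δ * y t * Q t ^ 2 + β * x t * P t ^ 2)) (Set.Ici 0) t := by
    intro t ht
    have hPd : HasDerivWithinAt P
        (x t * (1 - x t - α * y t) + α * (δ * y t * (1 - y t - β * x t))) (Set.Ici 0) t :=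
      ((hx t ht).add ((hy t ht).const_mul α)).sub_const 1
    have hQd : HasDerivWithinAt Q
        (β * (x t * (1 - x t - α * y t)) + δ * y t * (1 - y t - β * x t)) (Set.Ici 0) t :=
      (((hx t ht).const_mul β).add (hy t ht)).sub_const 1
    have h := (hPd.mul hQd).mul ((hE1d t ht).mul (hE2d t ht))
    refine h.congr_deriv ?_
    simp only [hP, hQ, Pi.mul_apply]
    ring
  have hψcont : ContinuousOn ψ (Set.Ici 0) := fun t ht => (hψd t ht).continuousWithinAt
  have hψanti : AntitoneOn ψ (Set.Ici 0) := by
    apply antitoneOn_of_deriv_nonpos (convex_Ici 0) hψcont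
    · intro t ht
      rw [interior_Ici] at ht
      exact ((hψd t (Set.Ioi_subset_Ici_self ht)).hasDerivAt (Ici_mem_nhds ht)).differentiableAt.differentiableWithinAt
    · intro t ht
      rw [interior_Ici] at ht
      rw [((hψd t (Set.Ioi_subset_Ici_self ht)).hasDerivAt (Ici_mem_nhds ht)).deriv]
      have h1 : 0 ≤ α * δ * y t * Q t ^ 2 + β * x t * P t ^ 2 := by
        have hx' := hxpos t (Set.Ioi_subset_Ici_self ht)
        have hy' := hypos t (Set.Ioi_subset_Ici_self ht)
        positivity
      have h2 : 0 < E1 t * E2 t := mul_pos (hE1pos t) (hE2pos t)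
      nlinarith
  -- converting signs of P (resp. Q) into signs of x - A (resp. y - B)
  have hxconv : ∀ T : ℝ, 0 ≤ T → ((∀ t, T ≤ t → 0 ≤ P t) ∨ (∀ t, T ≤ t → P t ≤ 0)) →
      ((∀ t, T ≤ t → 0 ≤ x t - A) ∨ (∀ t, T ≤ t → x t - A ≤ 0)) := by
    intro T hT h
    rcases h with h | h
    · left
      intro t ht
      have key := mono_limit_sign hT hx (fun s hs => ?_) hxlim t ht
      · linarith
      · have hP' : 0 ≤ P s := h s hs
        have hxp := hxpos s (hT.trans hs)
        simp only [hP] at hP'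
        nlinarith [mul_nonneg hxp.le hP']
    · right
      intro t ht
      have key := mono_limit_sign hT (fun s hs => (hx s hs).neg) (fun s hs => ?_) hxlim.neg t ht
      · simp only [Pi.neg_apply] at key
        linarith
      · have hP' : P s ≤ 0 := h s hs
        have hxp := hxpos s (hT.trans hs)
        simp only [hP] at hP'
        nlinarith [mul_nonpos_of_nonneg_of_nonpos hxp.le hP']
  have hyconv : ∀ T : ℝ, 0 ≤ T → ((∀ t, T ≤ t → 0 ≤ Q t) ∨ (∀ t, T ≤ t → Q t ≤ 0)) →
      ((∀ t, T ≤ t → 0 ≤ y t - B) ∨ (∀ t, T ≤ t → y t - B ≤ 0)) := by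
    intro T hT h
    rcases h with h | h
    · left
      intro t ht
      have key := mono_limit_sign hT hy (fun s hs => ?_) hylim t ht
      · linarith
      · have hQ' : 0 ≤ Q s := h s hs
        have hyp := hypos s (hT.trans hs)
        simp only [hQ] at hQ'
        nlinarith [mul_nonneg (mul_pos hδ hyp).le hQ']
    · right
      intro t ht
      have key := mono_limit_sign hT (fun s hs => (hy s hs).neg) (fun s hs => ?_) hylim.neg t ht
      · simp only [Pi.neg_apply] at key
        linarith
      · have hQ' : Q s ≤ 0 := h s hs
        have hyp := hypos s (hT.trans hs)
        simp only [hQ] at hQ'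
        nlinarith [mul_nonpos_of_nonneg_of_nonpos (mul_pos hδ hyp).le hQ']
  have hPQsign : ∃ T : ℝ, 0 ≤ T ∧
      ((∀ t, T ≤ t → 0 ≤ x t - A) ∨ (∀ t, T ≤ t → x t - A ≤ 0)) ∧
      ((∀ t, T ≤ t → 0 ≤ y t - B) ∨ (∀ t, T ≤ t → y t - B ≤ 0)) := by
    by_cases hpos : ∀ t, 0 ≤ t → 0 < ψ t
    · have hPne : ∀ t, (0:ℝ) ≤ t → P t ≠ 0 := by
        intro t ht hP0
        have h := hpos t ht
        simp only [hψ] at h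
        rw [hP0] at h
        simp at h
      have hQne : ∀ t, (0:ℝ) ≤ t → Q t ≠ 0 := by
        intro t ht hQ0
        have h := hpos t ht
        simp only [hψ] at h
        rw [hQ0] at h
        simp at h
      refine ⟨0, le_rfl, hxconv 0 le_rfl ?_, hyconv 0 le_rfl ?_⟩
      · exact (sign_const hPcont hPne).imp (fun h t ht => (h t ht).le) (fun h t ht => (h t ht).le)
      · exact (sign_const hQcont hQne).imp (fun h t ht => (h t ht).le) (fun h t ht => (h t ht).le)
    · push_neg at hpos
      obtain ⟨t₂, ht₂0, ht₂⟩ := hpos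
      by_cases hneg : ∃ t₃, t₂ ≤ t₃ ∧ ψ t₃ < 0
      · obtain ⟨t₃, ht₃2, ht₃⟩ := hneg
        have ht₃0 : (0:ℝ) ≤ t₃ := ht₂0.trans ht₃2
        have hψneg : ∀ t, t₃ ≤ t → ψ t < 0 := fun t ht =>
          lt_of_le_of_lt (hψanti ht₃0 (ht₃0.trans ht) ht) ht₃
        have hPne : ∀ t, t₃ ≤ t → P t ≠ 0 := by
          intro t ht hP0
          have h := hψneg t ht
          simp only [hψ] at h
          rw [hP0] at h
          simp at h
        have hQne : ∀ t, t₃ ≤ t → Q t ≠ 0 := by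
          intro t ht hQ0
          have h := hψneg t ht
          simp only [hψ] at h
          rw [hQ0] at h
          simp at h
        refine ⟨t₃, ht₃0, hxconv t₃ ht₃0 ?_, hyconv t₃ ht₃0 ?_⟩
        · exact (sign_const (hPcont.mono (Set.Ici_subset_Ici.mpr ht₃0)) hPne).imp
            (fun h t ht => (h t ht).le) (fun h t ht => (h t ht).le)
        · exact (sign_const (hQcont.mono (Set.Ici_subset_Ici.mpr ht₃0)) hQne).imp
            (fun h t ht => (h t ht).le) (fun h t ht => (h t ht).le)
      · push_neg at hneg
        have hzero : ∀ t, t₂ ≤ t → ψ t = 0 := fun t ht =>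
          le_antisymm ((hψanti ht₂0 (ht₂0.trans ht) ht).trans ht₂) (hneg t ht)
        have hxy : ∀ t, t₂ < t → x t = A ∧ y t = B := by
          intro t ht
          have ht0 : (0:ℝ) ≤ t := ht₂0.trans ht.le
          have hd1 : HasDerivWithinAt ψ
              (-(E1 t * E2 t) * (α * δ * y t * Q t ^ 2 + β * x t * P t ^ 2))
              (Set.Ici t₂) t := (hψd t ht0).mono (Set.Ici_subset_Ici.mpr ht₂0)
          have hd0 : HasDerivWithinAt ψ 0 (Set.Ici t₂) t :=
            (hasDerivWithinAt_const t (Set.Ici t₂) (0:ℝ)).congr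
              (fun s hs => hzero s hs) (hzero t ht.le)
          have hu : UniqueDiffWithinAt ℝ (Set.Ici t₂) t := uniqueDiffOn_Ici t₂ t ht.le
          have heq : -(E1 t * E2 t) * (α * δ * y t * Q t ^ 2 + β * x t * P t ^ 2) = 0 := by
            rw [← hd1.derivWithin hu, hd0.derivWithin hu]
          have hx' := hxpos t ht0
          have hy' := hypos t ht0
          have hE : 0 < E1 t * E2 t := mul_pos (hE1pos t) (hE2pos t)
          have hsum : α * δ * y t * Q t ^ 2 + β * x t * P t ^ 2 = 0 := by
            rcases mul_eq_zero.mp heq with h | h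
            · exact absurd h (neg_ne_zero.mpr hE.ne')
            · exact h
          have ha : 0 ≤ α * δ * y t * Q t ^ 2 := by positivity
          have hb : 0 ≤ β * x t * P t ^ 2 := by positivity
          have hP0 : P t = 0 := by
            have hb0 : β * x t * P t ^ 2 = 0 := by linarith
            have : P t ^ 2 = 0 := by
              rcases mul_eq_zero.mp hb0 with h | h
              · exact absurd h (by positivity)
              · exact h
            exact (pow_eq_zero_iff two_ne_zero).mp this
          have hQ0 : Q t = 0 := by
            have ha0 : α * δ * y t * Q t ^ 2 = 0 := by linarith
            have : Q t ^ 2 = 0 := by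
              rcases mul_eq_zero.mp ha0 with h | h
              · exact absurd h (by positivity)
              · exact h
            exact (pow_eq_zero_iff two_ne_zero).mp this
          simp only [hP] at hP0
          simp only [hQ] at hQ0
          constructor
          · have h3 : (α * β - 1) * x t = α - 1 := by linear_combination α * hQ0 - hP0
            have h4 : (α * β - 1) * x t = (α * β - 1) * A := by rw [h3, hAe1]
            exact mul_left_cancel₀ hab0.ne' h4
          · have h3 : (α * β - 1) * y t = β - 1 := by linear_combination β * hP0 - hQ0
            have h4 : (α * β - 1) * y t = (α * β - 1) * B := by rw [h3, hBe1]
            exact mul_left_cancel₀ hab0.ne' h4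
        refine ⟨t₂ + 1, by linarith, Or.inl fun t ht => ?_, Or.inl fun t ht => ?_⟩
        · have := (hxy t (by linarith)).1; linarith
        · have := (hxy t (by linarith)).2; linarith
  obtain ⟨T, hT0, hsgnp, hsgnq⟩ := hPQsign
  have hpint : IntegrableOn (fun s => x s - A) (Set.Ici 0) :=
    integrableOn_of_sign_tendsto hpxcont hT0 hsgnp hFplim
  have hqint : IntegrableOn (fun s => y s - B) (Set.Ici 0) :=
    integrableOn_of_sign_tendsto hqycont hT0 hsgnq hFqlim
  have hfeq : (fun τ => (α - 1) * y τ - (β - 1) * x τ)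
      = (fun τ => (α - 1) * (y τ - B) - (β - 1) * (x τ - A)) := by
    funext τ
    linear_combination hABe
  have hfint : IntegrableOn (fun τ => (α - 1) * y τ - (β - 1) * x τ) (Set.Ici 0) := by
    rw [hfeq]
    exact (hqint.const_mul _).sub (hpint.const_mul _)
  refine ⟨hfint, ?_⟩
  set I : ℝ := ∫ τ in Set.Ici (0:ℝ), ((α - 1) * y τ - (β - 1) * x τ) with hI
  have hIval : I = (α - 1) * Lq - (β - 1) * Lp := by
    have h1 : Tendsto (fun t => ∫ τ in (0:ℝ)..t, ((α - 1) * y τ - (β - 1) * x τ))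
        atTop (𝓝 I) := by
      rw [hI, MeasureTheory.integral_Ici_eq_integral_Ioi]
      exact intervalIntegral_tendsto_integral_Ioi 0
        (hfint.mono_set Set.Ioi_subset_Ici_self) tendsto_id
    have h2 : Tendsto (fun t => ∫ τ in (0:ℝ)..t, ((α - 1) * y τ - (β - 1) * x τ)) atTop
        (𝓝 ((α - 1) * Lq - (β - 1) * Lp)) := by
      have h := (hFqlim.const_mul (α - 1)).sub (hFplim.const_mul (β - 1))
      apply Tendsto.congr' _ h
      filter_upwards [eventually_ge_atTop (0:ℝ)] with t ht
      rw [← intervalIntegral.integral_const_mul, ← intervalIntegral.integral_const_mul,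
        ← intervalIntegral.integral_sub ((hII _ hqycont t ht).const_mul _)
          ((hII _ hpxcont t ht).const_mul _)]
      apply intervalIntegral.integral_congr
      intro s _
      dsimp
      linear_combination -hABe
    exact tendsto_nhds_unique h1 h2
  rw [hIval]
  have hdiv : 0 < x₀ / A := div_pos hx₀ hA0
  rw [Real.rpow_def_of_pos hdiv, Real.log_div hx₀.ne' hA0.ne']
  rw [mul_assoc, ← Real.exp_add]
  have hδ' : δ ≠ 0 := hδ.ne'
  have hab' : α * β - 1 ≠ 0 := hab0.ne'
  have hexp : (Real.log x₀ - Real.log A) * δ + -δ * ((α - 1) * Lq - (β - 1) * Lp)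
      = Real.log y₀ - Real.log B := by
    rw [hLp, hLq, hl1, hl2]
    field_simp
    ring
  rw [hexp, Real.exp_sub, Real.exp_log hy₀, Real.exp_log hB0]
  field_simp
end

section
/- Let α>1, β>1 and δ=1, and set A=(α-1)/(αβ-1), B=(β-1)/(αβ-1). If (x(t),y(t)) is a solution of the system dx/dt = x(1-x-αy), dy/dt = y(1-y-βx) on [0,∞) with x(0)=x₀>0 and y(0)=(B/A)·x₀, then y(t)=(B/A)·x(t) for all t≥0, and (x(t),y(t))→(A,B) as t→∞. In particular, when δ=1 the separatrix is the straight line y=(B/A)x, i.e., s(x)=s*(x)=B·(x/A)^δ. -/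
open Filter

private lemma constOnIci (f : ℝ → ℝ)
    (hf : ∀ t ∈ Set.Ici (0:ℝ), HasDerivWithinAt f 0 (Set.Ici 0) t) :
    ∀ t ∈ Set.Ici (0:ℝ), f t = f 0 := by
  intro t ht
  have h := Convex.norm_image_sub_le_of_norm_hasDerivWithin_le
    (f' := fun _ => (0:ℝ)) (C := 0) hf (fun s hs => by simp) (convex_Ici 0)
    (Set.self_mem_Ici) ht
  simp only [zero_mul, norm_le_zero_iff, sub_eq_zero] at h
  exact h

private lemma linODE (c g : ℝ → ℝ) (hc : Continuous c)
    (hg : ∀ t ∈ Set.Ici (0:ℝ), HasDerivWithinAt g (c t * g t) (Set.Ici 0) t) :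
    ∀ t ∈ Set.Ici (0:ℝ), g t = g 0 * Real.exp (∫ s in (0:ℝ)..t, c s) := by
  set C : ℝ → ℝ := fun t => ∫ s in (0:ℝ)..t, c s with hCdef
  have hCd : ∀ t : ℝ, HasDerivAt C (c t) t := fun t =>
    (hc.integral_hasStrictDerivAt 0 t).hasDerivAt
  have key : ∀ t ∈ Set.Ici (0:ℝ),
      g t * Real.exp (-(C t)) = g 0 * Real.exp (-(C 0)) := by
    apply constOnIci
    intro t ht
    have hE : HasDerivAt (fun t => Real.exp (-(C t)))
        (Real.exp (-(C t)) * (-(c t))) t := ((hCd t).neg).exp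
    have h2 := (hg t ht).fun_mul hE.hasDerivWithinAt
    refine h2.congr_deriv (Eq.symm ?_)
    ring
  intro t ht
  have h0 : C 0 = 0 := by simp [hCdef]
  have h := key t ht
  rw [h0, neg_zero, Real.exp_zero, mul_one] at h
  calc g t = g t * Real.exp (-(C t)) * Real.exp (C t) := by
        rw [mul_assoc, ← Real.exp_add]; simp
    _ = g 0 * Real.exp (C t) := by rw [h]

/-- For `δ = 1` the separatrix is the straight line `y = (B/A) x`: a forward
solution starting on this line with `x₀ > 0` stays on it and converges to the
saddle `(A,B)`. -/
theorem stmt_14 (α β : ℝ) (hα : 1 < α) (hβ : 1 < β)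
    (A B : ℝ) (hA : A = (α - 1) / (α * β - 1)) (hB : B = (β - 1) / (α * β - 1))
    (x₀ : ℝ) (hx₀ : 0 < x₀)
    (x y : ℝ → ℝ)
    (hx : ∀ t ∈ Set.Ici (0 : ℝ),
      HasDerivWithinAt x (x t * (1 - x t - α * y t)) (Set.Ici 0) t)
    (hy : ∀ t ∈ Set.Ici (0 : ℝ),
      HasDerivWithinAt y (y t * (1 - y t - β * x t)) (Set.Ici 0) t)
    (hx0 : x 0 = x₀) (hy0 : y 0 = (B / A) * x₀) :
    (∀ t : ℝ, 0 ≤ t → y t = (B / A) * x t) ∧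
    Tendsto (fun t => (x t, y t)) atTop (nhds (A, B)) := by
  have hden : 0 < α * β - 1 := by nlinarith
  have hApos : 0 < A := by rw [hA]; exact div_pos (by linarith) hden
  have hBpos : 0 < B := by rw [hB]; exact div_pos (by linarith) hden
  have hA0 : A ≠ 0 := hApos.ne'
  set k : ℝ := B / A with hkdef
  have hk0 : 0 < k := div_pos hBpos hApos
  have hα1 : α - 1 ≠ 0 := sub_ne_zero.mpr (ne_of_gt hα)
  have hd0 : α * β - 1 ≠ 0 := hden.ne'
  have hkval : k * (α - 1) = β - 1 := by
    rw [hkdef, hA, hB]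
    field_simp
    rw [mul_div_assoc, div_self (by intro h; apply hd0; linarith), mul_one]
  have hAB : A + α * B = 1 := by
    rw [hA, hB]; field_simp; ring
  -- continuity and extensions
  have hxc : ContinuousOn x (Set.Ici 0) := fun t ht => (hx t ht).continuousWithinAt
  have hyc : ContinuousOn y (Set.Ici 0) := fun t ht => (hy t ht).continuousWithinAt
  have hm : Continuous (fun t : ℝ => max t 0) := continuous_id.max continuous_const
  have hmem : ∀ t : ℝ, max t 0 ∈ Set.Ici (0:ℝ) := fun t => Set.mem_Ici.mpr (le_max_right _ _)
  have hxec : Continuous (fun t => x (max t 0)) := hxc.comp_continuous hm hmem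
  have hyec : Continuous (fun t => y (max t 0)) := hyc.comp_continuous hm hmem
  -- positivity of x
  have hxpos : ∀ t ∈ Set.Ici (0:ℝ), 0 < x t := by
    have hrep := linODE (fun t => 1 - x (max t 0) - α * y (max t 0)) x
      ((continuous_const.sub hxec).sub (continuous_const.mul hyec)) ?_
    · intro t ht
      rw [hrep t ht, hx0]
      positivity
    · intro t ht
      have h1 := hx t ht
      convert h1 using 1
      simp only [max_eq_left (Set.mem_Ici.mp ht)]
      ring
  -- invariance of the line y = k x
  have yx : ∀ t ∈ Set.Ici (0:ℝ), y t = k * x t := by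
    have hrep := linODE
      (fun t => 1 - y (max t 0) - k * x (max t 0) - β * x (max t 0)
        + α * k * x (max t 0))
      (fun t => y t - k * x t)
      (((((continuous_const.sub hyec).sub (continuous_const.mul hxec)).sub
        (continuous_const.mul hxec)).add (continuous_const.mul hxec))) ?_
    · intro t ht
      have h2 := hrep t ht
      simp only [hy0, hx0, sub_self, zero_mul] at h2
      linarith [h2]
    · intro t ht
      have h1 := (hy t ht).sub ((hx t ht).const_mul k)
      refine h1.congr_deriv (Eq.symm ?_)
      simp only [max_eq_left (Set.mem_Ici.mp ht)]
      linear_combination (-(k * (x t)^2)) * hkval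
  -- x satisfies the logistic equation x' = x (1 - x/A)
  have hki : α * k * A = 1 - A := by
    rw [hkdef]; field_simp; linarith [hAB]
  have hx' : ∀ t ∈ Set.Ici (0:ℝ),
      HasDerivWithinAt x (x t * (1 - x t / A)) (Set.Ici 0) t := by
    intro t ht
    have h1 := hx t ht
    rw [yx t ht] at h1
    convert h1 using 1
    field_simp
    linear_combination (x t)^2 * hki
  -- the function (A/x - 1) e^t is constant
  have hconst : ∀ t ∈ Set.Ici (0:ℝ),
      (A / x t - 1) * Real.exp t = A / x₀ - 1 := by
    have hc := constOnIci (fun t => (A / x t - 1) * Real.exp t) ?_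
    · intro t ht
      have := hc t ht
      simpa [hx0] using this
    · intro t ht
      have hxne : x t ≠ 0 := (hxpos t ht).ne'
      have h1 : HasDerivWithinAt (fun t => A / x t - 1)
          ((0 * x t - A * (x t * (1 - x t / A))) / (x t)^2) (Set.Ici 0) t :=
        ((hasDerivWithinAt_const t _ A).div (hx' t ht) hxne).sub_const 1
      have h2 := h1.fun_mul (Real.hasDerivAt_exp t).hasDerivWithinAt
      refine h2.congr_deriv (Eq.symm ?_)
      field_simp
      ring
  -- explicit formula for x
  set c : ℝ := A / x₀ - 1 with hcdef
  have hxform : ∀ t ∈ Set.Ici (0:ℝ), x t = A / (1 + c * Real.exp (-t)) := by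
    intro t ht
    have hxne : x t ≠ 0 := (hxpos t ht).ne'
    have h := hconst t ht
    have hexp : Real.exp t ≠ 0 := Real.exp_ne_zero t
    have hAx : A / x t = 1 + c * Real.exp (-t) := by
      rw [Real.exp_neg]
      field_simp at h ⊢
      linarith [h]
    have hD : (1 + c * Real.exp (-t)) ≠ 0 := by
      rw [← hAx]; positivity
    field_simp [hD] at hAx ⊢
    linarith [hAx]
  -- limits
  have hdlim : Tendsto (fun t : ℝ => 1 + c * Real.exp (-t)) atTop (nhds 1) := by
    have h1 := Real.tendsto_exp_neg_atTop_nhds_zero.const_mul c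
    simpa using tendsto_const_nhds.add h1
  have hflim : Tendsto (fun t : ℝ => A / (1 + c * Real.exp (-t))) atTop (nhds A) := by
    have h2 : Tendsto (fun t : ℝ => A / (1 + c * Real.exp (-t))) atTop (nhds (A / 1)) :=
      (tendsto_const_nhds : Tendsto (fun _ : ℝ => A) atTop (nhds A)).div
      hdlim one_ne_zero
    simpa using h2
  have hxlim : Tendsto x atTop (nhds A) := by
    apply hflim.congr'
    filter_upwards [eventually_ge_atTop (0:ℝ)] with t ht
    exact (hxform t ht).symm
  have hylim : Tendsto y atTop (nhds B) := by
    have h1 := hxlim.const_mul k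
    have hkA : k * A = B := by rw [hkdef]; field_simp
    rw [hkA] at h1
    apply h1.congr'
    filter_upwards [eventually_ge_atTop (0:ℝ)] with t ht
    exact (yx t ht).symm
  exact ⟨fun t ht => yx t ht, hxlim.prodMk_nhds hylim⟩
end

section
/- Fix β>1, δ>0 and x₀>0, and let 1<α₁<α₂. For i=1,2 set A_i=(α_i−1)/(α_iβ−1), B_i=(β−1)/(α_iβ−1), and let y_i>0 be the unique value such that the solution of the system dx/dt = x(1−x−α_i y), dy/dt = δy(1−y−βx) on [0,∞) with initial condition (x₀,y_i) converges to (A_i,B_i) as t→∞. Then y₂<y₁; that is, for each fixed x>0 the separatrix value s(x,α) is strictly decreasing in α. -/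
open Filter Topology

open Set Topology in
/-- Limit of the right slope of the positive part of a differentiable function. -/
lemma posPart_slope_tendsto {u : ℝ → ℝ} {t d : ℝ}
    (hu : HasDerivWithinAt u d (Set.Ici t) t) :
    Tendsto (fun s => (s - t)⁻¹ * (max (u s) 0 - max (u t) 0)) (𝓝[>] t)
      (𝓝 (if u t < 0 then 0 else if 0 < u t then d else max d 0)) := by
  have hslope : Tendsto (fun s => (s - t)⁻¹ * (u s - u t)) (𝓝[>] t) (𝓝 d) := by
    have h1 := hasDerivWithinAt_iff_tendsto_slope.1 hu
    rw [Set.Ici_sdiff_left] at h1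
    refine h1.congr fun s => ?_
    simp [slope_def_field, div_eq_inv_mul]
  have hc : Tendsto u (𝓝[>] t) (𝓝 (u t)) :=
    (hu.continuousWithinAt.mono Ioi_subset_Ici_self)
  rcases lt_trichotomy (u t) 0 with h | h | h
  · rw [if_pos h]
    have hev : ∀ᶠ s in 𝓝[>] t, u s < 0 := hc.eventually_lt_const h
    refine (tendsto_const_nhds : Tendsto (fun _ : ℝ => (0:ℝ)) _ _).congr' ?_
    filter_upwards [hev] with s hs
    rw [max_eq_right h.le, max_eq_right hs.le]
    ring
  · rw [if_neg (by simp [h]), if_neg (by simp [h])]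
    have hmax : Tendsto (fun s => max ((s - t)⁻¹ * (u s - u t)) 0) (𝓝[>] t) (𝓝 (max d 0)) :=
      hslope.max tendsto_const_nhds
    refine hmax.congr' ?_
    filter_upwards [self_mem_nhdsWithin] with s hs
    have hst : (0:ℝ) < s - t := sub_pos.2 hs
    rw [h, max_self, sub_zero, sub_zero, mul_max_of_nonneg _ _ (inv_nonneg.2 hst.le), mul_zero]
  · rw [if_neg (not_lt.2 h.le), if_pos h]
    have hev : ∀ᶠ s in 𝓝[>] t, 0 < u s := hc.eventually_const_lt h
    refine hslope.congr' ?_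
    filter_upwards [hev] with s hs
    rw [max_eq_left hs.le, max_eq_left h.le]

open Set Topology in
/-- Solutions of `f' = f·h` with positive initial condition stay positive. -/
lemma ode_pos {f h : ℝ → ℝ}
    (hf : ∀ t ∈ Set.Ici (0:ℝ), HasDerivWithinAt f (f t * h t) (Set.Ici 0) t)
    (hh : ContinuousOn h (Set.Ici 0)) (h0 : 0 < f 0) :
    ∀ t ∈ Set.Ici (0:ℝ), 0 < f t := by
  have hfc : ContinuousOn f (Set.Ici 0) := fun t ht => (hf t ht).continuousWithinAt
  intro t ht
  by_contra hle
  push_neg at hle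
  obtain ⟨s, hs, hfs⟩ : ∃ s ∈ Icc (0:ℝ) t, f s = 0 := by
    have h01 : (0:ℝ) ∈ Icc (f t) (f 0) := ⟨hle, h0.le⟩
    have := intermediate_value_Icc' ht (hfc.mono (Icc_subset_Ici_self)) h01
    exact this
  have hs0 : (0:ℝ) ≤ s := hs.1
  obtain ⟨C, hC⟩ := (isCompact_Icc : IsCompact (Icc (0:ℝ) s)).exists_bound_of_continuousOn
      (hh.mono Icc_subset_Ici_self)
  have hwc : ContinuousOn (fun τ => f (s - τ)) (Icc 0 s) := by
    apply hfc.comp (continuous_const.sub continuous_id).continuousOn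
    intro τ hτ
    simp only [Set.mem_Ici, Pi.sub_apply, id]
    linarith [hτ.2]
  have hww : ∀ τ ∈ Ico (0:ℝ) s,
      HasDerivWithinAt (fun τ => f (s - τ)) (-(f (s - τ) * h (s - τ))) (Ici τ) τ := by
    intro τ hτ
    have hmem : (0:ℝ) < s - τ := by linarith [hτ.2]
    have hderiv : HasDerivAt f (f (s - τ) * h (s - τ)) (s - τ) :=
      (hf _ (le_of_lt hmem)).hasDerivAt (Ici_mem_nhds hmem)
    have hinner : HasDerivAt (fun τ : ℝ => s - τ) (-1) τ := (hasDerivAt_id τ).const_sub s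
    have := hderiv.comp τ hinner
    have h2 : HasDerivAt (fun τ => f (s - τ)) (f (s - τ) * h (s - τ) * -1) τ := this
    rw [show -(f (s - τ) * h (s - τ)) = f (s - τ) * h (s - τ) * -1 by ring]
    exact h2.hasDerivWithinAt
  have hbound : ∀ τ ∈ Ico (0:ℝ) s,
      ‖-(f (s - τ) * h (s - τ))‖ ≤ C * ‖f (s - τ)‖ + 0 := by
    intro τ hτ
    have hmem : s - τ ∈ Icc (0:ℝ) s := ⟨by linarith [hτ.2], by linarith [hτ.1]⟩
    have := hC _ hmem
    rw [norm_neg, norm_mul]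
    rw [add_zero, mul_comm]
    exact mul_le_mul_of_nonneg_right this (norm_nonneg (f (s - τ)))
  have ha0 : ‖f (s - 0)‖ ≤ (0:ℝ) := by simp [hfs]
  have hmain := norm_le_gronwallBound_of_norm_deriv_right_le (δ := 0) hwc hww
      ha0 hbound s (right_mem_Icc.2 hs0)
  rw [gronwallBound_ε0, zero_mul, sub_self] at hmain
  simp only [Real.norm_eq_abs] at hmain
  have := le_abs_self (f (s - s))
  simp only [sub_self] at hmain this
  linarith

set_option maxHeartbeats 2000000

/-- The separatrix value `s(x₀, α)` is strictly decreasing in the competition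
parameter `α`: if `1 < α₁ < α₂` and `(x₀, yᵢ)` lies on the stable manifold of
the saddle `(Aᵢ, Bᵢ)` for the system with parameter `αᵢ`, then `y₂ < y₁`. -/
theorem stmt_15 (β δ x₀ : ℝ) (hβ : 1 < β) (hδ : 0 < δ) (hx₀ : 0 < x₀)
    (α₁ α₂ : ℝ) (hα₁ : 1 < α₁) (hα₁₂ : α₁ < α₂)
    (A₁ B₁ A₂ B₂ : ℝ)
    (hA₁ : A₁ = (α₁ - 1) / (α₁ * β - 1)) (hB₁ : B₁ = (β - 1) / (α₁ * β - 1))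
    (hA₂ : A₂ = (α₂ - 1) / (α₂ * β - 1)) (hB₂ : B₂ = (β - 1) / (α₂ * β - 1))
    (y₁ y₂ : ℝ) (hy₁ : 0 < y₁) (hy₂ : 0 < y₂)
    (x1 Y1 : ℝ → ℝ)
    (hx1 : ∀ t ∈ Set.Ici (0 : ℝ),
      HasDerivWithinAt x1 (x1 t * (1 - x1 t - α₁ * Y1 t)) (Set.Ici 0) t)
    (hY1 : ∀ t ∈ Set.Ici (0 : ℝ),
      HasDerivWithinAt Y1 (δ * Y1 t * (1 - Y1 t - β * x1 t)) (Set.Ici 0) t)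
    (hx10 : x1 0 = x₀) (hY10 : Y1 0 = y₁)
    (hconv1 : Tendsto (fun t => (x1 t, Y1 t)) atTop (nhds (A₁, B₁)))
    (x2 Y2 : ℝ → ℝ)
    (hx2 : ∀ t ∈ Set.Ici (0 : ℝ),
      HasDerivWithinAt x2 (x2 t * (1 - x2 t - α₂ * Y2 t)) (Set.Ici 0) t)
    (hY2 : ∀ t ∈ Set.Ici (0 : ℝ),
      HasDerivWithinAt Y2 (δ * Y2 t * (1 - Y2 t - β * x2 t)) (Set.Ici 0) t)
    (hx20 : x2 0 = x₀) (hY20 : Y2 0 = y₂)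
    (hconv2 : Tendsto (fun t => (x2 t, Y2 t)) atTop (nhds (A₂, B₂))) :
    y₂ < y₁ := by
  by_contra hcon
  push_neg at hcon
  -- continuity of the four coordinate functions on [0,∞)
  have cx1 : ContinuousOn x1 (Set.Ici 0) := fun t ht => (hx1 t ht).continuousWithinAt
  have cy1 : ContinuousOn Y1 (Set.Ici 0) := fun t ht => (hY1 t ht).continuousWithinAt
  have cx2 : ContinuousOn x2 (Set.Ici 0) := fun t ht => (hx2 t ht).continuousWithinAt
  have cy2 : ContinuousOn Y2 (Set.Ici 0) := fun t ht => (hY2 t ht).continuousWithinAt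
  -- positivity
  have px1 : ∀ t ∈ Set.Ici (0:ℝ), 0 < x1 t :=
    ode_pos (h := fun t => 1 - x1 t - α₁ * Y1 t) hx1
      ((continuousOn_const.sub cx1).sub (continuousOn_const.mul cy1))
      (by rw [hx10]; exact hx₀)
  have px2 : ∀ t ∈ Set.Ici (0:ℝ), 0 < x2 t :=
    ode_pos (h := fun t => 1 - x2 t - α₂ * Y2 t) hx2
      ((continuousOn_const.sub cx2).sub (continuousOn_const.mul cy2))
      (by rw [hx20]; exact hx₀)
  have hY1' : ∀ t ∈ Set.Ici (0:ℝ),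
      HasDerivWithinAt Y1 (Y1 t * (δ * (1 - Y1 t - β * x1 t))) (Set.Ici 0) t := by
    intro t ht
    have := hY1 t ht
    convert this using 1
    ring
  have hY2' : ∀ t ∈ Set.Ici (0:ℝ),
      HasDerivWithinAt Y2 (Y2 t * (δ * (1 - Y2 t - β * x2 t))) (Set.Ici 0) t := by
    intro t ht
    have := hY2 t ht
    convert this using 1
    ring
  have py1 : ∀ t ∈ Set.Ici (0:ℝ), 0 < Y1 t :=
    ode_pos (h := fun t => δ * (1 - Y1 t - β * x1 t)) hY1'
      (continuousOn_const.mul ((continuousOn_const.sub cy1).sub (continuousOn_const.mul cx1)))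
      (by rw [hY10]; exact hy₁)
  have py2 : ∀ t ∈ Set.Ici (0:ℝ), 0 < Y2 t :=
    ode_pos (h := fun t => δ * (1 - Y2 t - β * x2 t)) hY2'
      (continuousOn_const.mul ((continuousOn_const.sub cy2).sub (continuousOn_const.mul cx2)))
      (by rw [hY20]; exact hy₂)
  -- the comparison: x2 ≤ x1 on [0,∞)
  have key : ∀ T ∈ Set.Ici (0:ℝ), x2 T ≤ x1 T := by
    intro T hT
    have hTnn : (0:ℝ) ≤ T := hT
    have hsub : Set.Icc (0:ℝ) T ⊆ Set.Ici 0 := Set.Icc_subset_Ici_self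
    -- bound the coefficients on [0,T]
    obtain ⟨C, hC⟩ := (isCompact_Icc : IsCompact (Set.Icc (0:ℝ) T)).exists_bound_of_continuousOn
      (f := fun s => |1 - α₁ * Y2 s - x1 s - x2 s| + α₁ * x1 s
        + δ * |1 - Y1 s - Y2 s - β * x1 s| + δ * (β * Y2 s))
      (((((((continuousOn_const.sub (continuousOn_const.mul (cy2.mono hsub))).sub
            (cx1.mono hsub)).sub (cx2.mono hsub)).abs).add
          (continuousOn_const.mul (cx1.mono hsub))).add
          (continuousOn_const.mul ((((continuousOn_const.sub (cy1.mono hsub)).sub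
            (cy2.mono hsub)).sub (continuousOn_const.mul (cx1.mono hsub))).abs))).add
          (continuousOn_const.mul (continuousOn_const.mul (cy2.mono hsub))))
    have hCnn : 0 ≤ C := le_trans (norm_nonneg _) (hC 0 ⟨le_rfl, hTnn⟩)
    have hb : ∀ s ∈ Set.Icc (0:ℝ) T,
        |1 - α₁ * Y2 s - x1 s - x2 s| ≤ C ∧ 0 ≤ α₁ * x1 s ∧ α₁ * x1 s ≤ C ∧
        δ * |1 - Y1 s - Y2 s - β * x1 s| ≤ C ∧ 0 ≤ δ * (β * Y2 s) ∧ δ * (β * Y2 s) ≤ C := by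
      intro s hsm
      have h1 := abs_nonneg (1 - α₁ * Y2 s - x1 s - x2 s)
      have h2 : 0 ≤ α₁ * x1 s := mul_nonneg (by linarith) (px1 s (hsub hsm)).le
      have h3 : 0 ≤ δ * |1 - Y1 s - Y2 s - β * x1 s| := mul_nonneg hδ.le (abs_nonneg _)
      have h4 : 0 ≤ δ * (β * Y2 s) :=
        mul_nonneg hδ.le (mul_nonneg (by linarith) (py2 s (hsub hsm)).le)
      have h5 := hC s hsm
      rw [Real.norm_eq_abs] at h5
      have h6 := le_abs_self (|1 - α₁ * Y2 s - x1 s - x2 s| + α₁ * x1 s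
        + δ * |1 - Y1 s - Y2 s - β * x1 s| + δ * (β * Y2 s))
      refine ⟨by linarith, h2, by linarith, by linarith, h4, by linarith⟩
    -- the functions u, v, g and the slope bounds
    set u : ℝ → ℝ := fun t => x2 t - x1 t with hu_def
    set v : ℝ → ℝ := fun t => Y1 t - Y2 t with hv_def
    set du : ℝ → ℝ := fun s =>
      x2 s * (1 - x2 s - α₂ * Y2 s) - x1 s * (1 - x1 s - α₁ * Y1 s) with hdu_def
    set dv : ℝ → ℝ := fun s =>
      δ * Y1 s * (1 - Y1 s - β * x1 s) - δ * Y2 s * (1 - Y2 s - β * x2 s) with hdv_def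
    have hus : ∀ s ∈ Set.Ico (0:ℝ) T, HasDerivWithinAt u (du s) (Set.Ici s) s := fun s hs =>
      (((hx2 s hs.1).sub (hx1 s hs.1)).mono (Set.Ici_subset_Ici.2 hs.1))
    have hvs : ∀ s ∈ Set.Ico (0:ℝ) T, HasDerivWithinAt v (dv s) (Set.Ici s) s := fun s hs =>
      (((hY1 s hs.1).sub (hY2 s hs.1)).mono (Set.Ici_subset_Ici.2 hs.1))
    have hgc : ContinuousOn (fun t => max (u t) 0 + max (v t) 0) (Set.Icc 0 T) := by
      apply ContinuousOn.add
      · exact (((cx2.mono hsub).sub (cx1.mono hsub)).sup continuousOn_const)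
      · exact (((cy1.mono hsub).sub (cy2.mono hsub)).sup continuousOn_const)
    have main := le_gronwallBound_of_liminf_deriv_right_le (a := 0) (b := T)
      (f := fun t => max (u t) 0 + max (v t) 0)
      (f' := fun s => (if u s < 0 then 0 else if 0 < u s then du s else max (du s) 0)
        + (if v s < 0 then 0 else if 0 < v s then dv s else max (dv s) 0))
      (δ := 0) (K := 2 * C) (ε := 0) hgc
      (by
        intro s hs r hr
        have tu := posPart_slope_tendsto (hus s hs)
        have tv := posPart_slope_tendsto (hvs s hs)
        have tg : Tendsto (fun z => (z - s)⁻¹ *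
            ((max (u z) 0 + max (v z) 0) - (max (u s) 0 + max (v s) 0))) (𝓝[>] s)
            (nhds ((if u s < 0 then 0 else if 0 < u s then du s else max (du s) 0)
              + (if v s < 0 then 0 else if 0 < v s then dv s else max (dv s) 0))) := by
          refine (tu.add tv).congr fun z => ?_
          ring
        exact (tg.eventually_lt_const hr).frequently)
      (by
        have h1 : u 0 = 0 := by simp [hu_def, hx10, hx20]
        have h2 : v 0 ≤ 0 := by simp only [hv_def, hY10, hY20]; linarith
        simp [h1, max_eq_right h2])
      (by
        intro s hs
        have hsIcc : s ∈ Set.Icc (0:ℝ) T := ⟨hs.1, hs.2.le⟩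
        obtain ⟨b1, b2, b3, b4, b5, b6⟩ := hb s hsIcc
        have hx1p := (px1 s (hsub hsIcc)).le
        have hx2p := (px2 s (hsub hsIcc)).le
        have hY1p := (py1 s (hsub hsIcc)).le
        have hY2p := (py2 s (hsub hsIcc)).le
        have hup : u s ≤ max (u s) 0 := le_max_left _ _
        have hupn : (0:ℝ) ≤ max (u s) 0 := le_max_right _ _
        have hvp : v s ≤ max (v s) 0 := le_max_left _ _
        have hvpn : (0:ℝ) ≤ max (v s) 0 := le_max_right _ _
        have habs1 := abs_le.1 b1
        -- key inequality for du
        have hkey1 : du s ≤ u s * (1 - α₁ * Y2 s - x1 s - x2 s) + (α₁ * x1 s) * (v s) := by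
          have hid : du s = u s * (1 - α₁ * Y2 s - x1 s - x2 s) + (α₁ * x1 s) * (v s)
              + x2 s * Y2 s * (α₁ - α₂) := by
            simp only [hdu_def, hu_def, hv_def]
            ring
          have hneg : x2 s * Y2 s * (α₁ - α₂) ≤ 0 :=
            mul_nonpos_of_nonneg_of_nonpos (mul_nonneg hx2p hY2p) (by linarith)
          linarith
        have hkey2 : dv s = v s * (δ * (1 - Y1 s - Y2 s - β * x1 s)) + (δ * (β * Y2 s)) * (u s) := by
          simp only [hdv_def, hu_def, hv_def]
          ring
        have hDub : (if u s < 0 then (0:ℝ) else if 0 < u s then du s else max (du s) 0)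
            ≤ C * max (u s) 0 + C * max (v s) 0 := by
          split_ifs with h1 h2
          · exact add_nonneg (mul_nonneg hCnn hupn) (mul_nonneg hCnn hvpn)
          · have e1 : u s * (1 - α₁ * Y2 s - x1 s - x2 s) ≤ C * u s := by
              nlinarith [habs1.1, habs1.2, h2]
            have e2 : (α₁ * x1 s) * v s ≤ C * max (v s) 0 := by
              nlinarith [b2, b3, hvp, hvpn]
            rw [max_eq_left (not_lt.1 h1)]
            linarith [hkey1]
          · have hu0 : u s = 0 := le_antisymm (not_lt.1 h2) (not_lt.1 h1)
            have e2 : (α₁ * x1 s) * v s ≤ C * max (v s) 0 := by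
              nlinarith [b2, b3, hvp, hvpn]
            have e3 : du s ≤ C * max (v s) 0 := by
              rw [hu0] at hkey1
              simpa using le_trans hkey1 (by linarith)
            have e4 : (0:ℝ) ≤ C * max (v s) 0 := mul_nonneg hCnn hvpn
            have := max_le e3 e4
            nlinarith [mul_nonneg hCnn hupn]
        have hDvb : (if v s < 0 then (0:ℝ) else if 0 < v s then dv s else max (dv s) 0)
            ≤ C * max (v s) 0 + C * max (u s) 0 := by
          split_ifs with h1 h2
          · exact add_nonneg (mul_nonneg hCnn hvpn) (mul_nonneg hCnn hupn)
          · have e1 : v s * (δ * (1 - Y1 s - Y2 s - β * x1 s)) ≤ C * v s := by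
              have hd : |δ * (1 - Y1 s - Y2 s - β * x1 s)| ≤ C := by
                rw [abs_mul, abs_of_pos hδ]
                exact b4
              have := abs_le.1 hd
              nlinarith [h2]
            have e2 : (δ * (β * Y2 s)) * u s ≤ C * max (u s) 0 := by
              nlinarith [b5, b6, hup, hupn]
            rw [hkey2, max_eq_left (not_lt.1 h1)]
            linarith
          · have hv0 : v s = 0 := le_antisymm (not_lt.1 h2) (not_lt.1 h1)
            have e2 : (δ * (β * Y2 s)) * u s ≤ C * max (u s) 0 := by
              nlinarith [b5, b6, hup, hupn]
            have e3 : dv s ≤ C * max (u s) 0 := by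
              rw [hkey2, hv0]
              simpa using e2
            have e4 : (0:ℝ) ≤ C * max (u s) 0 := mul_nonneg hCnn hupn
            have := max_le e3 e4
            nlinarith [mul_nonneg hCnn hvpn]
        have goal' : (if u s < 0 then (0:ℝ) else if 0 < u s then du s else max (du s) 0)
            + (if v s < 0 then (0:ℝ) else if 0 < v s then dv s else max (dv s) 0)
            ≤ 2 * C * (max (u s) 0 + max (v s) 0) + 0 := by linarith
        exact goal')
      T (Set.right_mem_Icc.2 hTnn)
    rw [gronwallBound_ε0, zero_mul] at main
    have main' : max (u T) 0 + max (v T) 0 ≤ 0 := main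
    have hup : u T ≤ max (u T) 0 := le_max_left _ _
    have hvpn : (0:ℝ) ≤ max (v T) 0 := le_max_right _ _
    have : u T ≤ 0 := by linarith
    simpa [hu_def, sub_nonpos] using this
  -- take limits
  have l1 : Tendsto x1 atTop (nhds A₁) := (continuous_fst.tendsto (A₁, B₁)).comp hconv1
  have l2 : Tendsto x2 atTop (nhds A₂) := (continuous_fst.tendsto (A₂, B₂)).comp hconv2
  have hle : A₂ ≤ A₁ :=
    le_of_tendsto_of_tendsto l2 l1 ((eventually_ge_atTop (0:ℝ)).mono fun t ht => key t ht)
  have hd1 : 0 < α₁ * β - 1 := by nlinarith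
  have hd2 : 0 < α₂ * β - 1 := by nlinarith
  have hlt : A₁ < A₂ := by
    rw [hA₁, hA₂, div_lt_div_iff₀ hd1 hd2]
    nlinarith [mul_pos (sub_pos.2 hβ) (sub_pos.2 hα₁₂)]
  linarith
end

section
/- Fix α>1, δ>0 and x₀>0, and let 1<β₁<β₂. For i=1,2 set A_i=(α−1)/(αβ_i−1), B_i=(β_i−1)/(αβ_i−1), and let y_i>0 be the unique value such that the solution of the system dx/dt = x(1−x−αy), dy/dt = δy(1−y−β_i x) on [0,∞) with initial condition (x₀,y_i) converges to (A_i,B_i) as t→∞. Then y₁<y₂; that is, for each fixed x>0 the separatrix value s(x,β) is strictly increasing in β. -/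
open Filter

open Set in

lemma pos_of_linODE (f c : ℝ → ℝ) (hc : ContinuousOn c (Set.Ici 0))
    (hf : ∀ t ∈ Set.Ici (0:ℝ), HasDerivWithinAt f (f t * c t) (Set.Ici 0) t)
    (h0 : 0 < f 0) : ∀ t ∈ Set.Ici (0:ℝ), 0 < f t := by
  intro T hT
  by_contra hfT
  push_neg at hfT
  have hfc : ContinuousOn f (Set.Ici 0) := fun t ht => (hf t ht).continuousWithinAt
  have hIcc : Set.Icc (0:ℝ) T ⊆ Set.Ici 0 := Set.Icc_subset_Ici_self
  set S : Set ℝ := Set.Icc 0 T ∩ f ⁻¹' Set.Iic 0 with hS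
  have hScl : IsClosed S :=
    (hfc.mono hIcc).preimage_isClosed_of_isClosed isClosed_Icc isClosed_Iic
  have hSne : S.Nonempty := ⟨T, ⟨hT, le_rfl⟩, hfT⟩
  have hSbd : BddBelow S := ⟨0, fun t ht => ht.1.1⟩
  set τ := sInf S with hτ
  have hτS : τ ∈ S := hScl.csInf_mem hSne hSbd
  have hτ0 : 0 ≤ τ := hτS.1.1
  have hτT : τ ≤ T := hτS.1.2
  have hpos : ∀ t, 0 ≤ t → t < τ → 0 < f t := by
    intro t ht htτ
    by_contra hft
    push_neg at hft
    exact absurd (csInf_le hSbd ⟨⟨ht, htτ.le.trans hτT⟩, hft⟩) (not_le.mpr htτ)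
  -- bound on c
  obtain ⟨C, hC⟩ := (isCompact_Icc : IsCompact (Set.Icc (0:ℝ) T)).exists_bound_of_continuousOn
    (hc.mono hIcc)
  set K := |C| + 1 with hK
  have hK1 : (1:ℝ) ≤ K := by have := abs_nonneg C; linarith
  have hcK : ∀ t ∈ Set.Icc (0:ℝ) T, |c t| ≤ K := by
    intro t ht
    calc |c t| = ‖c t‖ := rfl
    _ ≤ C := hC t ht
    _ ≤ K := by have := le_abs_self C; linarith
  -- g = f * exp(K t) is monotone on [0, τ]
  set g : ℝ → ℝ := fun t => f t * Real.exp (K * t) with hg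
  have hmono : MonotoneOn g (Set.Icc 0 τ) := by
    apply monotoneOn_of_hasDerivWithinAt_nonneg (convex_Icc 0 τ)
      (f' := fun x => (f x * c x + f x * K) * Real.exp (K * x))
    · exact ((hfc.mono (Set.Icc_subset_Ici_self)).mul
        ((Real.continuous_exp.comp (continuous_const.mul continuous_id)).continuousOn))
    · intro x hx
      rw [interior_Icc] at hx
      have hx0 : 0 < x := hx.1
      have hder : HasDerivAt f (f x * c x) x :=
        (hf x (le_of_lt hx0)).hasDerivAt (Ici_mem_nhds hx0)
      have hexp : HasDerivAt (fun t => Real.exp (K * t)) (Real.exp (K * x) * K) x :=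
        (Real.hasDerivAt_exp (K * x)).comp x ((hasDerivAt_id x).const_mul K) |>.congr_deriv
          (by ring)
      have := hder.mul hexp
      rw [interior_Icc]
      refine (this.congr_deriv (by ring)).hasDerivWithinAt
    · intro x hx
      rw [interior_Icc] at hx
      have hfx : 0 < f x := hpos x hx.1.le hx.2
      have hxT : x ∈ Set.Icc (0:ℝ) T := ⟨hx.1.le, hx.2.le.trans hτT⟩
      have := hcK x hxT
      have h1 : 0 ≤ c x + K := by
        have := abs_le.mp this
        linarith
      have : 0 ≤ f x * (c x + K) := mul_nonneg hfx.le h1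
      have hexp : 0 < Real.exp (K * x) := Real.exp_pos _
      nlinarith
  have h1 : g 0 ≤ g τ := hmono ⟨le_rfl, hτ0⟩ ⟨hτ0, le_rfl⟩ hτ0
  have hg0 : 0 < g 0 := by
    simp only [hg, mul_zero, Real.exp_zero, mul_one]
    exact h0
  have hgτ : g τ ≤ 0 := by
    have hfτ : f τ ≤ 0 := hτS.2
    exact mul_nonpos_of_nonpos_of_nonneg hfτ (Real.exp_pos _).le
  linarith

open Set in

lemma coop_nonneg (a b p q r u v : ℝ → ℝ)
    (ha : ContinuousOn a (Set.Ici 0)) (hb : ContinuousOn b (Set.Ici 0))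
    (hp : ContinuousOn p (Set.Ici 0)) (hq : ContinuousOn q (Set.Ici 0))
    (hp0 : ∀ t ∈ Set.Ici (0:ℝ), 0 ≤ p t) (hq0 : ∀ t ∈ Set.Ici (0:ℝ), 0 ≤ q t)
    (hr0 : ∀ t ∈ Set.Ici (0:ℝ), 0 ≤ r t)
    (hu : ∀ t ∈ Set.Ici (0:ℝ), HasDerivWithinAt u (a t * u t + p t * v t) (Set.Ici 0) t)
    (hv : ∀ t ∈ Set.Ici (0:ℝ), HasDerivWithinAt v (b t * v t + q t * u t + r t) (Set.Ici 0) t)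
    (hu0 : 0 ≤ u 0) (hv0 : 0 ≤ v 0) :
    ∀ t ∈ Set.Ici (0:ℝ), 0 ≤ u t := by
  intro T hT
  have huc : ContinuousOn u (Set.Ici 0) := fun t ht => (hu t ht).continuousWithinAt
  have hvc : ContinuousOn v (Set.Ici 0) := fun t ht => (hv t ht).continuousWithinAt
  have hIcc : Set.Icc (0:ℝ) T ⊆ Set.Ici 0 := Set.Icc_subset_Ici_self
  obtain ⟨Ca, hCa⟩ := isCompact_Icc.exists_bound_of_continuousOn (ha.mono hIcc)
  obtain ⟨Cb, hCb⟩ := isCompact_Icc.exists_bound_of_continuousOn (hb.mono hIcc)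
  obtain ⟨Cp, hCp⟩ := isCompact_Icc.exists_bound_of_continuousOn (hp.mono hIcc)
  obtain ⟨Cq, hCq⟩ := isCompact_Icc.exists_bound_of_continuousOn (hq.mono hIcc)
  set K := |Ca| + |Cb| + |Cp| + |Cq| + 1 with hKdef
  have hK1 : (1:ℝ) ≤ K := by
    have := abs_nonneg Ca; have := abs_nonneg Cb; have := abs_nonneg Cp
    have := abs_nonneg Cq; linarith
  have haK : ∀ t ∈ Set.Icc (0:ℝ) T, |a t| ≤ K := by
    intro t ht
    have h1 : ‖a t‖ ≤ Ca := hCa t ht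
    have := le_abs_self Ca
    have := abs_nonneg Cb; have := abs_nonneg Cp; have := abs_nonneg Cq
    simp only [Real.norm_eq_abs] at h1; linarith
  have hbK : ∀ t ∈ Set.Icc (0:ℝ) T, |b t| ≤ K := by
    intro t ht
    have h1 : ‖b t‖ ≤ Cb := hCb t ht
    have := le_abs_self Cb
    have := abs_nonneg Ca; have := abs_nonneg Cp; have := abs_nonneg Cq
    simp only [Real.norm_eq_abs] at h1; linarith
  have hpK : ∀ t ∈ Set.Icc (0:ℝ) T, |p t| ≤ K := by
    intro t ht
    have h1 : ‖p t‖ ≤ Cp := hCp t ht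
    have := le_abs_self Cp
    have := abs_nonneg Ca; have := abs_nonneg Cb; have := abs_nonneg Cq
    simp only [Real.norm_eq_abs] at h1; linarith
  have hqK : ∀ t ∈ Set.Icc (0:ℝ) T, |q t| ≤ K := by
    intro t ht
    have h1 : ‖q t‖ ≤ Cq := hCq t ht
    have := le_abs_self Cq
    have := abs_nonneg Ca; have := abs_nonneg Cb; have := abs_nonneg Cp
    simp only [Real.norm_eq_abs] at h1; linarith
  -- main ε-claim
  have main : ∀ ε : ℝ, 0 < ε → ∀ t ∈ Set.Icc (0:ℝ) T,
      0 < u t + ε * Real.exp (3*K*t) ∧ 0 < v t + ε * Real.exp (3*K*t) := by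
    intro ε hε
    by_contra hcon
    push_neg at hcon
    have hnot : ∃ t₀ ∈ Set.Icc (0:ℝ) T,
        u t₀ + ε * Real.exp (3*K*t₀) ≤ 0 ∨ v t₀ + ε * Real.exp (3*K*t₀) ≤ 0 := by
      obtain ⟨t₀, ht₀, hbad⟩ := hcon
      by_cases h : 0 < u t₀ + ε * Real.exp (3*K*t₀)
      · exact ⟨t₀, ht₀, Or.inr (hbad h)⟩
      · exact ⟨t₀, ht₀, Or.inl (not_lt.mp h)⟩
    set U : ℝ → ℝ := fun t => u t + ε * Real.exp (3*K*t) with hUdef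
    set V : ℝ → ℝ := fun t => v t + ε * Real.exp (3*K*t) with hVdef
    have hUc : ContinuousOn U (Set.Ici 0) :=
      huc.add ((Real.continuous_exp.comp (continuous_const.mul continuous_id)).continuousOn.const_smul ε)
    have hVc : ContinuousOn V (Set.Ici 0) :=
      hvc.add ((Real.continuous_exp.comp (continuous_const.mul continuous_id)).continuousOn.const_smul ε)
    set S : Set ℝ := (Set.Icc 0 T ∩ U ⁻¹' Set.Iic 0) ∪ (Set.Icc 0 T ∩ V ⁻¹' Set.Iic 0) with hSdef
    have hScl : IsClosed S :=
      ((hUc.mono hIcc).preimage_isClosed_of_isClosed isClosed_Icc isClosed_Iic).union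
      ((hVc.mono hIcc).preimage_isClosed_of_isClosed isClosed_Icc isClosed_Iic)
    have hSne : S.Nonempty := by
      obtain ⟨t₀, ht₀, hbad⟩ := hnot
      rcases hbad with h | h
      · exact ⟨t₀, Or.inl ⟨ht₀, h⟩⟩
      · exact ⟨t₀, Or.inr ⟨ht₀, h⟩⟩
    have hSbd : BddBelow S := ⟨0, fun t ht => by rcases ht with h | h <;> exact h.1.1⟩
    set τ := sInf S with hτdef
    have hτS : τ ∈ S := hScl.csInf_mem hSne hSbd
    have hτmem : τ ∈ Set.Icc (0:ℝ) T := by rcases hτS with h | h <;> exact h.1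
    have hτ0 : 0 ≤ τ := hτmem.1
    have hτT : τ ≤ T := hτmem.2
    have hlt : ∀ t, 0 ≤ t → t < τ → 0 < U t ∧ 0 < V t := by
      intro t ht htτ
      by_contra hc
      rw [not_and_or, not_lt, not_lt] at hc
      have htmem : t ∈ Set.Icc (0:ℝ) T := ⟨ht, htτ.le.trans hτT⟩
      have htS : t ∈ S := by
        rcases hc with h | h
        · exact Or.inl ⟨htmem, h⟩
        · exact Or.inr ⟨htmem, h⟩
      exact absurd (csInf_le hSbd htS) (not_le.mpr htτ)
    -- monotonicity of W * exp(K t) for W = U and W = V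
    have key : ∀ (W D : ℝ → ℝ),
        (∀ x ∈ Set.Ioo (0:ℝ) τ, HasDerivAt W (D x) x) →
        (∀ x ∈ Set.Ioo (0:ℝ) τ, 0 ≤ D x + K * W x) →
        ContinuousOn W (Set.Ici 0) →
        W 0 * 1 ≤ W τ * Real.exp (K * τ) := by
      intro W D hder hnn hWc
      have hmono : MonotoneOn (fun t => W t * Real.exp (K * t)) (Set.Icc 0 τ) := by
        apply monotoneOn_of_hasDerivWithinAt_nonneg (convex_Icc 0 τ)
          (f' := fun x => (D x + K * W x) * Real.exp (K * x))
        · exact ((hWc.mono Set.Icc_subset_Ici_self).mul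
            ((Real.continuous_exp.comp (continuous_const.mul continuous_id)).continuousOn))
        · intro x hx
          rw [interior_Icc] at hx ⊢
          have hexp : HasDerivAt (fun t => Real.exp (K * t)) (Real.exp (K * x) * K) x :=
            (Real.hasDerivAt_exp (K * x)).comp x ((hasDerivAt_id x).const_mul K) |>.congr_deriv
              (by ring)
          exact (((hder x hx).mul hexp).congr_deriv (by ring)).hasDerivWithinAt
        · intro x hx
          rw [interior_Icc] at hx
          exact mul_nonneg (hnn x hx) (Real.exp_pos _).le
      have := hmono (Set.left_mem_Icc.mpr hτ0) (Set.right_mem_Icc.mpr hτ0) hτ0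
      simpa [Real.exp_zero] using this
    -- derivative of U and V
    have hUder : ∀ x ∈ Set.Ioo (0:ℝ) τ, HasDerivAt U
        (a x * u x + p x * v x + ε * (Real.exp (3*K*x) * (3*K))) x := by
      intro x hx
      have h1 : HasDerivAt u (a x * u x + p x * v x) x :=
        (hu x hx.1.le).hasDerivAt (Ici_mem_nhds hx.1)
      have h2 : HasDerivAt (fun t => ε * Real.exp (3*K*t)) (ε * (Real.exp (3*K*x) * (3*K))) x := by
        have := ((Real.hasDerivAt_exp (3*K*x)).comp x ((hasDerivAt_id x).const_mul (3*K)))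
        exact (this.const_mul ε).congr_deriv (by ring)
      exact h1.add h2
    have hVder : ∀ x ∈ Set.Ioo (0:ℝ) τ, HasDerivAt V
        (b x * v x + q x * u x + r x + ε * (Real.exp (3*K*x) * (3*K))) x := by
      intro x hx
      have h1 : HasDerivAt v (b x * v x + q x * u x + r x) x :=
        (hv x hx.1.le).hasDerivAt (Ici_mem_nhds hx.1)
      have h2 : HasDerivAt (fun t => ε * Real.exp (3*K*t)) (ε * (Real.exp (3*K*x) * (3*K))) x := by
        have := ((Real.hasDerivAt_exp (3*K*x)).comp x ((hasDerivAt_id x).const_mul (3*K)))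
        exact (this.const_mul ε).congr_deriv (by ring)
      exact h1.add h2
    -- sign conditions
    have hUnn : ∀ x ∈ Set.Ioo (0:ℝ) τ,
        0 ≤ (a x * u x + p x * v x + ε * (Real.exp (3*K*x) * (3*K))) + K * U x := by
      intro x hx
      have hxT : x ∈ Set.Icc (0:ℝ) T := ⟨hx.1.le, hx.2.le.trans hτT⟩
      obtain ⟨hUx, hVx⟩ := hlt x hx.1.le hx.2
      have haa := abs_le.mp (haK x hxT)
      have hpp := abs_le.mp (hpK x hxT)
      have hp0' := hp0 x hx.1.le
      have he3 : 0 < Real.exp (3*K*x) := Real.exp_pos _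
      have h1 : 0 ≤ (a x + K) * U x := mul_nonneg (by linarith [haa.1]) hUx.le
      have h2 : 0 ≤ p x * V x := mul_nonneg hp0' hVx.le
      have h3 : 0 ≤ (3*K - a x - p x) * (ε * Real.exp (3*K*x)) :=
        mul_nonneg (by linarith [haa.2, hpp.2]) (by positivity)
      have hid : (a x * u x + p x * v x + ε * (Real.exp (3*K*x) * (3*K))) + K * U x
          = (a x + K) * U x + p x * V x + (3*K - a x - p x) * (ε * Real.exp (3*K*x)) := by
        simp only [hUdef, hVdef]; ring
      linarith [hid ▸ (by linarith : (0:ℝ) ≤ (a x + K) * U x + p x * V x + (3*K - a x - p x) * (ε * Real.exp (3*K*x)))]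
    have hVnn : ∀ x ∈ Set.Ioo (0:ℝ) τ,
        0 ≤ (b x * v x + q x * u x + r x + ε * (Real.exp (3*K*x) * (3*K))) + K * V x := by
      intro x hx
      have hxT : x ∈ Set.Icc (0:ℝ) T := ⟨hx.1.le, hx.2.le.trans hτT⟩
      obtain ⟨hUx, hVx⟩ := hlt x hx.1.le hx.2
      have hbb := abs_le.mp (hbK x hxT)
      have hqq := abs_le.mp (hqK x hxT)
      have hq0' := hq0 x hx.1.le
      have hr0' := hr0 x hx.1.le
      have he3 : 0 < Real.exp (3*K*x) := Real.exp_pos _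
      have h1 : 0 ≤ (b x + K) * V x := mul_nonneg (by linarith [hbb.1]) hVx.le
      have h2 : 0 ≤ q x * U x := mul_nonneg hq0' hUx.le
      have h3 : 0 ≤ (3*K - b x - q x) * (ε * Real.exp (3*K*x)) :=
        mul_nonneg (by linarith [hbb.2, hqq.2]) (by positivity)
      have hid : (b x * v x + q x * u x + r x + ε * (Real.exp (3*K*x) * (3*K))) + K * V x
          = (b x + K) * V x + q x * U x + (3*K - b x - q x) * (ε * Real.exp (3*K*x)) + r x := by
        simp only [hUdef, hVdef]; ring
      linarith [hid ▸ (by linarith : (0:ℝ) ≤ (b x + K) * V x + q x * U x + (3*K - b x - q x) * (ε * Real.exp (3*K*x)) + r x)]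
    -- conclude positivity at τ
    have hU0 : 0 < U 0 := by
      simp only [hUdef, mul_zero, Real.exp_zero, mul_one]
      linarith
    have hV0 : 0 < V 0 := by
      simp only [hVdef, mul_zero, Real.exp_zero, mul_one]
      linarith
    have hUτ : 0 < U τ := by
      have := key U _ hUder hUnn hUc
      have hexp : 0 < Real.exp (K * τ) := Real.exp_pos _
      nlinarith
    have hVτ : 0 < V τ := by
      have := key V _ hVder hVnn hVc
      have hexp : 0 < Real.exp (K * τ) := Real.exp_pos _
      nlinarith
    rcases hτS with h | h
    · exact absurd h.2 (not_le.mpr hUτ)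
    · exact absurd h.2 (not_le.mpr hVτ)
  -- ε → 0
  apply le_of_forall_pos_le_add
  intro c hc
  have hεpos : 0 < c / Real.exp (3*K*T) := div_pos hc (Real.exp_pos _)
  have := (main _ hεpos T ⟨hT, le_rfl⟩).1
  have hce : c / Real.exp (3*K*T) * Real.exp (3*K*T) = c :=
    div_mul_cancel₀ c (Real.exp_ne_zero _)
  linarith


/-- The separatrix value `s(x₀, β)` is strictly increasing in the competition
parameter `β`: if `1 < β₁ < β₂` and `(x₀, yᵢ)` lies on the stable manifold of
the saddle `(Aᵢ, Bᵢ)` for the system with parameter `βᵢ`, then `y₁ < y₂`. -/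
theorem stmt_16 (α δ x₀ : ℝ) (hα : 1 < α) (hδ : 0 < δ) (hx₀ : 0 < x₀)
    (β₁ β₂ : ℝ) (hβ₁ : 1 < β₁) (hβ₁₂ : β₁ < β₂)
    (A₁ B₁ A₂ B₂ : ℝ)
    (hA₁ : A₁ = (α - 1) / (α * β₁ - 1)) (hB₁ : B₁ = (β₁ - 1) / (α * β₁ - 1))
    (hA₂ : A₂ = (α - 1) / (α * β₂ - 1)) (hB₂ : B₂ = (β₂ - 1) / (α * β₂ - 1))
    (y₁ y₂ : ℝ) (hy₁ : 0 < y₁) (hy₂ : 0 < y₂)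
    (x1 Y1 : ℝ → ℝ)
    (hx1 : ∀ t ∈ Set.Ici (0 : ℝ),
      HasDerivWithinAt x1 (x1 t * (1 - x1 t - α * Y1 t)) (Set.Ici 0) t)
    (hY1 : ∀ t ∈ Set.Ici (0 : ℝ),
      HasDerivWithinAt Y1 (δ * Y1 t * (1 - Y1 t - β₁ * x1 t)) (Set.Ici 0) t)
    (hx10 : x1 0 = x₀) (hY10 : Y1 0 = y₁)
    (hconv1 : Tendsto (fun t => (x1 t, Y1 t)) atTop (nhds (A₁, B₁)))
    (x2 Y2 : ℝ → ℝ)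
    (hx2 : ∀ t ∈ Set.Ici (0 : ℝ),
      HasDerivWithinAt x2 (x2 t * (1 - x2 t - α * Y2 t)) (Set.Ici 0) t)
    (hY2 : ∀ t ∈ Set.Ici (0 : ℝ),
      HasDerivWithinAt Y2 (δ * Y2 t * (1 - Y2 t - β₂ * x2 t)) (Set.Ici 0) t)
    (hx20 : x2 0 = x₀) (hY20 : Y2 0 = y₂)
    (hconv2 : Tendsto (fun t => (x2 t, Y2 t)) atTop (nhds (A₂, B₂))) :
    y₁ < y₂ := by
  by_contra hcon
  push_neg at hcon
  -- continuity of the solution curves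
  have hx1c : ContinuousOn x1 (Set.Ici 0) := fun t ht => (hx1 t ht).continuousWithinAt
  have hY1c : ContinuousOn Y1 (Set.Ici 0) := fun t ht => (hY1 t ht).continuousWithinAt
  have hx2c : ContinuousOn x2 (Set.Ici 0) := fun t ht => (hx2 t ht).continuousWithinAt
  have hY2c : ContinuousOn Y2 (Set.Ici 0) := fun t ht => (hY2 t ht).continuousWithinAt
  -- positivity of x1, x2, Y2
  have hx1pos : ∀ t ∈ Set.Ici (0:ℝ), 0 < x1 t :=
    pos_of_linODE x1 (fun t => 1 - x1 t - α * Y1 t)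
      ((continuousOn_const.sub hx1c).sub (continuousOn_const.mul hY1c))
      hx1 (by rw [hx10]; exact hx₀)
  have hx2pos : ∀ t ∈ Set.Ici (0:ℝ), 0 < x2 t :=
    pos_of_linODE x2 (fun t => 1 - x2 t - α * Y2 t)
      ((continuousOn_const.sub hx2c).sub (continuousOn_const.mul hY2c))
      hx2 (by rw [hx20]; exact hx₀)
  have hY2pos : ∀ t ∈ Set.Ici (0:ℝ), 0 < Y2 t := by
    refine pos_of_linODE Y2 (fun t => δ * (1 - Y2 t - β₂ * x2 t))
      (continuousOn_const.mul ((continuousOn_const.sub hY2c).sub (continuousOn_const.mul hx2c)))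
      ?_ (by rw [hY20]; exact hy₂)
    intro t ht
    have := hY2 t ht
    convert this using 1
    ring
  -- comparison system for u = x2 - x1, v = Y1 - Y2
  have hu : ∀ t ∈ Set.Ici (0:ℝ), HasDerivWithinAt (fun t => x2 t - x1 t)
      ((1 - x1 t - x2 t - α * Y2 t) * (x2 t - x1 t) + (α * x1 t) * (Y1 t - Y2 t))
      (Set.Ici 0) t := by
    intro t ht
    have : HasDerivWithinAt (fun t => x2 t - x1 t) (x2 t * (1 - x2 t - α * Y2 t) - x1 t * (1 - x1 t - α * Y1 t)) (Set.Ici 0) t := (hx2 t ht).sub (hx1 t ht)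
    convert this using 1
    ring
  have hv : ∀ t ∈ Set.Ici (0:ℝ), HasDerivWithinAt (fun t => Y1 t - Y2 t)
      ((δ * (1 - Y1 t - Y2 t - β₁ * x1 t)) * (Y1 t - Y2 t) + (δ * β₁ * Y2 t) * (x2 t - x1 t)
        + δ * (β₂ - β₁) * (Y2 t * x2 t)) (Set.Ici 0) t := by
    intro t ht
    have : HasDerivWithinAt (fun t => Y1 t - Y2 t) (δ * Y1 t * (1 - Y1 t - β₁ * x1 t) - δ * Y2 t * (1 - Y2 t - β₂ * x2 t)) (Set.Ici 0) t := (hY1 t ht).sub (hY2 t ht)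
    convert this using 1
    ring
  have hge : ∀ t ∈ Set.Ici (0:ℝ), 0 ≤ x2 t - x1 t := by
    refine coop_nonneg (fun t => 1 - x1 t - x2 t - α * Y2 t)
      (fun t => δ * (1 - Y1 t - Y2 t - β₁ * x1 t))
      (fun t => α * x1 t) (fun t => δ * β₁ * Y2 t)
      (fun t => δ * (β₂ - β₁) * (Y2 t * x2 t))
      (fun t => x2 t - x1 t) (fun t => Y1 t - Y2 t)
      (((continuousOn_const.sub hx1c).sub hx2c).sub (continuousOn_const.mul hY2c))
      (continuousOn_const.mul (((continuousOn_const.sub hY1c).sub hY2c).sub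
        (continuousOn_const.mul hx1c)))
      (continuousOn_const.mul hx1c) (continuousOn_const.mul hY2c)
      ?_ ?_ ?_ hu hv ?_ ?_
    · intro t ht
      exact mul_nonneg (by linarith) (hx1pos t ht).le
    · intro t ht
      exact mul_nonneg (by nlinarith) (hY2pos t ht).le
    · intro t ht
      exact mul_nonneg (by nlinarith) (mul_nonneg (hY2pos t ht).le (hx2pos t ht).le)
    · simp [hx10, hx20]
    · simp only [hY10, hY20]
      linarith
  -- pass to the limit
  have hx1lim : Tendsto x1 atTop (nhds A₁) := (continuous_fst.tendsto (A₁, B₁)).comp hconv1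
  have hx2lim : Tendsto x2 atTop (nhds A₂) := (continuous_fst.tendsto (A₂, B₂)).comp hconv2
  have hAle : A₁ ≤ A₂ := by
    refine le_of_tendsto_of_tendsto hx1lim hx2lim ?_
    filter_upwards [eventually_ge_atTop (0:ℝ)] with t ht
    linarith [hge t ht]
  -- but A₂ < A₁
  have h1 : (0:ℝ) < α * β₁ - 1 := by nlinarith
  have h2 : α * β₁ - 1 < α * β₂ - 1 := by nlinarith
  have hAlt : A₂ < A₁ := by
    rw [hA₁, hA₂]
    exact div_lt_div_of_pos_left (by linarith) h1 h2
  linarith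
end

section
/- Fix α>1, β>1 and set A=(α−1)/(αβ−1), B=(β−1)/(αβ−1) (note A and B do not depend on δ). Let 0<δ₁<δ₂ and x₀>0, and for i=1,2 let y_i>0 be the unique value such that the solution of the system dx/dt = x(1−x−αy), dy/dt = δ_i y(1−y−βx) on [0,∞) with initial condition (x₀,y_i) converges to (A,B) as t→∞. If 0<x₀<A then y₂<y₁ (the separatrix value s(x₀,δ) is strictly decreasing in δ), while if x₀>A then y₁<y₂ (s(x₀,δ) is strictly increasing in δ). -/
open Filter Set Real Topology

namespace LV17

/-- A scalar function satisfying `x' = x * g` with `x 0 > 0` stays positive. -/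
lemma pos_sol {g x : ℝ → ℝ} (hgc : ContinuousOn g (Ici 0))
    (hx : ∀ t ∈ Ici (0:ℝ), HasDerivWithinAt x (x t * g t) (Ici 0) t)
    (h0 : 0 < x 0) : ∀ t ∈ Ici (0:ℝ), 0 < x t := by
  intro T hT
  by_contra hle
  push_neg at hle
  have hxc : ContinuousOn x (Ici 0) := fun t ht => (hx t ht).continuousWithinAt
  have hmem : (0:ℝ) ∈ Icc (x T) (x 0) := ⟨hle, le_of_lt h0⟩
  obtain ⟨τ, hτmem, hτ⟩ := intermediate_value_Icc' hT (hxc.mono (fun s hs => hs.1)) hmem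
  have hτ0 : (0:ℝ) ≤ τ := hτmem.1
  rcases eq_or_lt_of_le hτ0 with h | h
  · rw [← h] at hτ; exact (ne_of_gt h0) hτ
  obtain ⟨C, hC⟩ := (isCompact_Icc : IsCompact (Icc (0:ℝ) τ)).exists_bound_of_continuousOn
    (hgc.mono (fun s hs => hs.1))
  have hC0 : 0 ≤ C := le_trans (norm_nonneg _) (hC 0 ⟨le_refl 0, hτ0⟩)
  set cl : ℝ → ℝ := fun t => min (max t 0) τ with hcl
  set v : ℝ → ℝ → ℝ := fun t z => z * g (cl t) with hv
  have hlip : ∀ t, LipschitzOnWith C.toNNReal (v t) (univ : Set ℝ) := by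
    intro t
    apply LipschitzWith.lipschitzOnWith
    apply LipschitzWith.of_dist_le_mul
    intro z w
    have hclmem : cl t ∈ Icc (0:ℝ) τ := ⟨le_min (le_max_right _ _) hτ0, min_le_right _ _⟩
    have hb := hC _ hclmem
    simp only [Real.dist_eq, hv]
    rw [← sub_mul, abs_mul]
    calc |z - w| * |g (cl t)| ≤ |z - w| * C := by
          exact mul_le_mul_of_nonneg_left (by simpa using hb) (abs_nonneg _)
      _ = C * |z - w| := mul_comm _ _
      _ = (C.toNNReal : ℝ) * |z - w| := by rw [Real.coe_toNNReal C hC0]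
  have huniq := ODE_solution_unique_of_mem_Icc_left (v := v) (s := fun _ => (univ : Set ℝ))
    (K := C.toNNReal) (f := x) (g := fun _ => (0:ℝ)) (a := 0) (b := τ) (fun t _ => hlip t)
    (hxc.mono (fun s hs => hs.1))
    (fun t ht => by
      have hd := hx t (le_of_lt ht.1)
      have hd' : HasDerivAt x (x t * g t) t := hd.hasDerivAt (Ici_mem_nhds ht.1)
      have : v t (x t) = x t * g t := by
        simp only [hv, hcl]
        rw [max_eq_left (le_of_lt ht.1), min_eq_left ht.2]
      rw [this]
      exact hd'.hasDerivWithinAt)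
    (fun t _ => mem_univ _)
    continuousOn_const
    (fun t ht => by
      have : v t 0 = 0 := by simp [hv]
      rw [this]
      exact hasDerivWithinAt_const _ _ _)
    (fun t _ => mem_univ _)
    (by simpa using hτ)
  have := huniq (left_mem_Icc.mpr hτ0)
  simp only at this
  exact absurd this (ne_of_gt h0)


/-- If the solution hits the saddle `(A,B)` at time `t₁ ≥ 0`, it started there. -/
lemma no_saddle {α β δ A B : ℝ} {x y : ℝ → ℝ}
    (hcx : Continuous x) (hcy : Continuous y)
    (hx : ∀ t ∈ Ici (0:ℝ), HasDerivWithinAt x (x t * (1 - x t - α * y t)) (Ici 0) t)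
    (hy : ∀ t ∈ Ici (0:ℝ), HasDerivWithinAt y (δ * y t * (1 - y t - β * x t)) (Ici 0) t)
    (keyA : 1 - A - α * B = 0) (keyB : 1 - B - β * A = 0)
    {t₁ : ℝ} (ht₁ : 0 ≤ t₁) (hxa : x t₁ = A) (hyb : y t₁ = B) : x 0 = A ∧ y 0 = B := by
  rcases eq_or_lt_of_le ht₁ with h | h
  · exact ⟨by rw [← h] at hxa; exact hxa, by rw [← h] at hyb; exact hyb⟩
  set F : ℝ × ℝ → ℝ × ℝ :=
    fun p => (p.1 * (1 - p.1 - α * p.2), δ * p.2 * (1 - p.2 - β * p.1)) with hFdef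
  have hF : ContDiff ℝ 1 F := by
    apply ContDiff.prodMk
    · exact contDiff_fst.mul ((contDiff_const.sub contDiff_fst).sub
        (contDiff_const.mul contDiff_snd))
    · exact (contDiff_const.mul contDiff_snd).mul ((contDiff_const.sub contDiff_snd).sub
        (contDiff_const.mul contDiff_fst))
  have hF0 : F (A, B) = 0 := by
    show (A * (1 - A - α * B), δ * B * (1 - B - β * A)) = (0, 0)
    rw [keyA, keyB]; simp
  set P : ℝ → ℝ × ℝ := fun t => (x t, y t) with hPdef
  have hPc : Continuous P := hcx.prodMk hcy
  obtain ⟨C, hC⟩ := (isCompact_Icc : IsCompact (Icc (0:ℝ) t₁)).exists_bound_of_continuousOn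
    hPc.continuousOn
  set R : ℝ := max C ‖((A : ℝ), (B : ℝ))‖ with hRdef
  have hR0 : 0 ≤ R := le_trans (norm_nonneg _) (le_max_right _ _)
  set s : Set (ℝ × ℝ) := Metric.closedBall 0 R with hsdef
  obtain ⟨D, hD⟩ := (isCompact_closedBall (0 : ℝ × ℝ) R).exists_bound_of_continuousOn
    (hF.continuous_fderiv one_ne_zero).continuousOn
  have hD0 : 0 ≤ D := le_trans (norm_nonneg _)
    (hD 0 (by simp [Metric.mem_closedBall, hR0]))
  have hlips : LipschitzOnWith D.toNNReal F s := by
    apply Convex.lipschitzOnWith_of_nnnorm_fderiv_le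
      (fun p _ => (hF.differentiable one_ne_zero).differentiableAt)
      (fun p hp => ?_) (convex_closedBall _ _)
    rw [← NNReal.coe_le_coe, coe_nnnorm, Real.coe_toNNReal _ hD0]
    exact hD p hp
  have huniq := ODE_solution_unique_of_mem_Icc_left (v := fun _ p => F p)
    (s := fun _ => s) (K := D.toNNReal) (f := P) (g := fun _ => ((A : ℝ), (B : ℝ)))
    (a := 0) (b := t₁) (fun _ _ => hlips)
    hPc.continuousOn
    (fun t ht => by
      have hdx : HasDerivAt x (x t * (1 - x t - α * y t)) t :=
        (hx t (le_of_lt ht.1)).hasDerivAt (Ici_mem_nhds ht.1)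
      have hdy : HasDerivAt y (δ * y t * (1 - y t - β * x t)) t :=
        (hy t (le_of_lt ht.1)).hasDerivAt (Ici_mem_nhds ht.1)
      exact (hdx.prodMk hdy).hasDerivWithinAt)
    (fun t ht => by
      have : ‖P t‖ ≤ R := le_trans (hC t ⟨le_of_lt ht.1, ht.2⟩) (le_max_left _ _)
      simpa [s, Metric.mem_closedBall, dist_eq_norm] using this)
    continuousOn_const
    (fun t ht => by
      have : HasDerivWithinAt (fun _ : ℝ => ((A : ℝ), (B : ℝ))) 0 (Iic t) t :=
        hasDerivWithinAt_const _ _ _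
      rw [hF0]
      exact this)
    (fun t ht => by
      have : ‖((A : ℝ), (B : ℝ))‖ ≤ R := le_max_right _ _
      simpa [s, Metric.mem_closedBall, dist_eq_norm] using this)
    (by simp [P, hxa, hyb])
  have h0 := huniq (left_mem_Icc.mpr ht₁)
  simp only [P] at h0
  exact ⟨congrArg Prod.fst h0, congrArg Prod.snd h0⟩


section Q

variable {α β δ A B : ℝ} {x y : ℝ → ℝ}

lemma no_Qminus
    (hα : 1 < α) (hβ : 1 < β) (hδ : 0 < δ)
    (hA' : (α * β - 1) * A = α - 1) (hB' : (α * β - 1) * B = β - 1)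
    (keyA : 1 - A - α * B = 0) (keyB : 1 - B - β * A = 0)
    (hcx : Continuous x) (hcy : Continuous y)
    (hx : ∀ t ∈ Ici (0:ℝ), HasDerivWithinAt x (x t * (1 - x t - α * y t)) (Ici 0) t)
    (hy : ∀ t ∈ Ici (0:ℝ), HasDerivWithinAt y (δ * y t * (1 - y t - β * x t)) (Ici 0) t)
    (hypos : ∀ t ∈ Ici (0:ℝ), 0 < y t)
    (hconv : Tendsto (fun t => (x t, y t)) atTop (nhds (A, B)))
    (hx0ne : x 0 ≠ A) :
    ∀ t₂ ∈ Ici (0:ℝ), ¬(A < x t₂ ∧ y t₂ < B) := by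
  have hq : 0 < α * β - 1 := by nlinarith
  have hApos : 0 < A := by
    by_contra h
    push_neg at h
    nlinarith [mul_nonpos_of_nonneg_of_nonpos (le_of_lt hq) h]
  have hBpos : 0 < B := by
    by_contra h
    push_neg at h
    nlinarith [mul_nonpos_of_nonneg_of_nonpos (le_of_lt hq) h]
  rintro t₂ ht₂ ⟨hxt₂, hyt₂⟩
  -- Step 1 : the open region {x > A, y < B} is forward invariant
  have Hgood : ∀ t, t₂ ≤ t → A < x t ∧ y t < B := by
    by_contra hbad
    push_neg at hbad
    obtain ⟨w, hw1, hw2⟩ := hbad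
    set bad : Set ℝ := {t | t₂ ≤ t ∧ (x t ≤ A ∨ B ≤ y t)} with hbaddef
    have hwbad : w ∈ bad := by
      refine ⟨hw1, ?_⟩
      by_cases h : A < x w
      · exact Or.inr (hw2 h)
      · exact Or.inl (le_of_not_gt h)
    have hbadclosed : IsClosed bad := by
      have : bad = Ici t₂ ∩ ({t | x t ≤ A} ∪ {t | B ≤ y t}) := by
        ext t; simp [hbaddef, Set.mem_Ici, and_assoc]
      rw [this]
      exact isClosed_Ici.inter ((isClosed_le hcx continuous_const).union
        (isClosed_le continuous_const hcy))
    have hbdd : BddBelow bad := ⟨t₂, fun u hu => hu.1⟩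
    set T := sInf bad with hTdef
    have hTmem : T ∈ bad := hbadclosed.csInf_mem ⟨w, hwbad⟩ hbdd
    have hTt₂ : t₂ ≤ T := hTmem.1
    have hTgt : t₂ < T := by
      rcases eq_or_lt_of_le hTt₂ with h | h
      · exfalso
        rw [← h] at hTmem
        rcases hTmem.2 with h' | h'
        · exact absurd h' (not_le.mpr hxt₂)
        · exact absurd h' (not_le.mpr hyt₂)
      · exact h
    have hT0 : (0:ℝ) ≤ T := le_trans ht₂ hTt₂
    have hgood : ∀ s, t₂ ≤ s → s < T → A < x s ∧ y s < B := by
      intro s hs1 hs2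
      by_contra hc
      have hsbad : s ∈ bad := by
        refine ⟨hs1, ?_⟩
        rw [not_and_or] at hc
        rcases hc with h | h
        · exact Or.inl (le_of_not_gt h)
        · exact Or.inr (le_of_not_gt h)
      exact absurd (csInf_le hbdd hsbad) (not_le.mpr hs2)
    have hneBot : (𝓝[Ioo t₂ T] T).NeBot := right_nhdsWithin_Ioo_neBot hTgt
    have hmemIoo : ∀ᶠ s in 𝓝[Ioo t₂ T] T, s ∈ Ioo t₂ T := eventually_mem_nhdsWithin
    have hxT : A ≤ x T :=
      ge_of_tendsto ((hcx.tendsto T).mono_left nhdsWithin_le_nhds)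
        (hmemIoo.mono fun s hs => ((hgood s hs.1.le hs.2).1).le)
    have hyT : y T ≤ B :=
      le_of_tendsto ((hcy.tendsto T).mono_left nhdsWithin_le_nhds)
        (hmemIoo.mono fun s hs => ((hgood s hs.1.le hs.2).2).le)
    have hIoosub : Ioo t₂ T ⊆ Ici (0:ℝ) := fun s hs => le_trans ht₂ hs.1.le
    rcases hTmem.2 with hxle | hyge
    · -- x T = A
      have hxTeq : x T = A := le_antisymm hxle hxT
      rcases lt_or_eq_of_le hyT with hyTlt | hyTeq
      · -- y T < B, but x was > A on the left : slope contradiction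
        have hd : HasDerivWithinAt x (x T * (1 - x T - α * y T)) (Ioo t₂ T) T :=
          (hx T hT0).mono hIoosub
        have hvpos : 0 < x T * (1 - x T - α * y T) := by
          rw [hxTeq]
          have he : 1 - A - α * y T = α * (B - y T) := by linear_combination keyA
          rw [he]
          exact mul_pos hApos (mul_pos (by linarith) (by linarith))
        have hslope := hasDerivWithinAt_iff_tendsto_slope'
          (show T ∉ Ioo t₂ T from fun h => lt_irrefl T h.2) |>.mp hd
        have hle : x T * (1 - x T - α * y T) ≤ 0 := by
          refine le_of_tendsto hslope (hmemIoo.mono fun s hs => ?_)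
          have h1 : 0 < x s - x T := by
            rw [hxTeq]; exact sub_pos.mpr (hgood s hs.1.le hs.2).1
          have h2 : s - T < 0 := sub_neg.mpr hs.2
          have : slope x T s = (x s - x T) / (s - T) := by
            simp [slope_def_field]
          rw [this]
          exact le_of_lt (div_neg_of_pos_of_neg h1 h2)
        linarith
      · -- saddle
        exact hx0ne ((no_saddle hcx hcy hx hy keyA keyB hT0 hxTeq hyTeq).1)
    · -- y T = B
      have hyTeq : y T = B := le_antisymm hyT hyge
      rcases lt_or_eq_of_le hxT with hxTgt | hxTeq
      · -- A < x T : slope contradiction on y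
        have hd : HasDerivWithinAt y (δ * y T * (1 - y T - β * x T)) (Ioo t₂ T) T :=
          (hy T hT0).mono hIoosub
        have hvneg : δ * y T * (1 - y T - β * x T) < 0 := by
          rw [hyTeq]
          have he : 1 - B - β * x T = β * (A - x T) := by linear_combination keyB
          rw [he]
          have : β * (A - x T) < 0 := mul_neg_of_pos_of_neg (by linarith) (by linarith)
          exact mul_neg_of_pos_of_neg (mul_pos hδ hBpos) this
        have hslope := hasDerivWithinAt_iff_tendsto_slope'
          (show T ∉ Ioo t₂ T from fun h => lt_irrefl T h.2) |>.mp hd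
        have hle : 0 ≤ δ * y T * (1 - y T - β * x T) := by
          refine ge_of_tendsto hslope (hmemIoo.mono fun s hs => ?_)
          have h1 : y s - y T < 0 := by
            rw [hyTeq]; exact sub_neg.mpr (hgood s hs.1.le hs.2).2
          have h2 : s - T < 0 := sub_neg.mpr hs.2
          have : slope y T s = (y s - y T) / (s - T) := by
            simp [slope_def_field]
          rw [this]
          exact le_of_lt (div_pos_of_neg_of_neg h1 h2)
        linarith
      · exact hx0ne ((no_saddle hcx hcy hx hy keyA keyB hT0 hxTeq.symm hyTeq).1)
  -- Step 2 : Lyapunov function V is nondecreasing on [t₂, ∞), tends to V*, but V t₂ > V*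
  have hxpos' : ∀ t, t₂ ≤ t → 0 < x t := fun t ht => lt_trans hApos (Hgood t ht).1
  set V : ℝ → ℝ := fun t => (1 + β) * Real.log (x t) - ((α + 1) / δ) * Real.log (y t)
    with hVdef
  have hVcont : ContinuousOn V (Ici t₂) := by
    apply ContinuousOn.sub
    · exact continuousOn_const.mul (ContinuousOn.log hcx.continuousOn
        (fun t ht => ne_of_gt (hxpos' t ht)))
    · exact continuousOn_const.mul (ContinuousOn.log hcy.continuousOn
        (fun t ht => ne_of_gt (hypos t (mem_Ici.mpr (le_trans ht₂ ht)))))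
  have hVd : ∀ t ∈ interior (Ici t₂),
      HasDerivWithinAt V ((α * β - 1) * ((x t - A) - (y t - B))) (interior (Ici t₂)) t := by
    intro t ht
    rw [interior_Ici] at ht
    have ht' : t₂ < t := ht
    have ht0 : (0:ℝ) < t := lt_of_le_of_lt ht₂ ht'
    have hdx : HasDerivAt x (x t * (1 - x t - α * y t)) t :=
      (hx t ht0.le).hasDerivAt (Ici_mem_nhds ht0)
    have hdy : HasDerivAt y (δ * y t * (1 - y t - β * x t)) t :=
      (hy t ht0.le).hasDerivAt (Ici_mem_nhds ht0)
    have hxne : x t ≠ 0 := ne_of_gt (hxpos' t ht'.le)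
    have hyne : y t ≠ 0 := ne_of_gt (hypos t ht0.le)
    have hlx : HasDerivAt (fun u => Real.log (x u)) (x t * (1 - x t - α * y t) / x t) t :=
      hdx.log hxne
    have hly : HasDerivAt (fun u => Real.log (y u)) (δ * y t * (1 - y t - β * x t) / y t) t :=
      hdy.log hyne
    have hd := (hlx.const_mul (1 + β)).sub (hly.const_mul ((α + 1) / δ))
    have heq : (1 + β) * (x t * (1 - x t - α * y t) / x t)
        - (α + 1) / δ * (δ * y t * (1 - y t - β * x t) / y t)
        = (α * β - 1) * ((x t - A) - (y t - B)) := by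
      have e1 : x t * (1 - x t - α * y t) / x t = 1 - x t - α * y t := by
        field_simp
      have e2 : δ * y t * (1 - y t - β * x t) / y t = δ * (1 - y t - β * x t) := by
        field_simp
      rw [e1, e2]
      have e3 : (α + 1) / δ * (δ * (1 - y t - β * x t)) = (α + 1) * (1 - y t - β * x t) := by
        field_simp
      rw [e3]
      linear_combination hA' - hB'
    rw [interior_Ici]
    rw [heq] at hd
    exact hd.hasDerivWithinAt
  have hVmono : MonotoneOn V (Ici t₂) :=
    monotoneOn_of_hasDerivWithinAt_nonneg (convex_Ici t₂) hVcont hVd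
      (by
        intro t ht
        rw [interior_Ici] at ht
        have h1 := (Hgood t (le_of_lt ht)).1
        have h2 := (Hgood t (le_of_lt ht)).2
        have : 0 ≤ (x t - A) - (y t - B) := by linarith
        positivity)
  have hxl : Tendsto x atTop (nhds A) := (continuous_fst.tendsto _).comp hconv
  have hyl : Tendsto y atTop (nhds B) := (continuous_snd.tendsto _).comp hconv
  have hVlim : Tendsto V atTop (nhds ((1 + β) * Real.log A - (α + 1) / δ * Real.log B)) := by
    apply Tendsto.sub
    · exact (((Real.continuousAt_log (ne_of_gt hApos)).tendsto).comp hxl).const_mul _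
    · exact (((Real.continuousAt_log (ne_of_gt hBpos)).tendsto).comp hyl).const_mul _
  have hVle : V t₂ ≤ (1 + β) * Real.log A - (α + 1) / δ * Real.log B := by
    refine ge_of_tendsto hVlim (eventually_atTop.mpr ⟨t₂, fun t ht => ?_⟩)
    exact hVmono (self_mem_Ici) (mem_Ici.mpr ht) ht
  have h1 : (1 + β) * Real.log A < (1 + β) * Real.log (x t₂) :=
    mul_lt_mul_of_pos_left (Real.log_lt_log hApos hxt₂) (by linarith)
  have h2 : (α + 1) / δ * Real.log (y t₂) < (α + 1) / δ * Real.log B :=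
    mul_lt_mul_of_pos_left (Real.log_lt_log (hypos t₂ ht₂) hyt₂) (by positivity)
  have : (1 + β) * Real.log A - (α + 1) / δ * Real.log B < V t₂ := by
    simp only [hVdef]
    linarith
  linarith

lemma no_Qplus
    (hα : 1 < α) (hβ : 1 < β) (hδ : 0 < δ)
    (hA' : (α * β - 1) * A = α - 1) (hB' : (α * β - 1) * B = β - 1)
    (keyA : 1 - A - α * B = 0) (keyB : 1 - B - β * A = 0)
    (hcx : Continuous x) (hcy : Continuous y)
    (hx : ∀ t ∈ Ici (0:ℝ), HasDerivWithinAt x (x t * (1 - x t - α * y t)) (Ici 0) t)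
    (hy : ∀ t ∈ Ici (0:ℝ), HasDerivWithinAt y (δ * y t * (1 - y t - β * x t)) (Ici 0) t)
    (hxpos : ∀ t ∈ Ici (0:ℝ), 0 < x t)
    (hconv : Tendsto (fun t => (x t, y t)) atTop (nhds (A, B)))
    (hx0ne : x 0 ≠ A) :
    ∀ t₂ ∈ Ici (0:ℝ), ¬(x t₂ < A ∧ B < y t₂) := by
  have hq : 0 < α * β - 1 := by nlinarith
  have hApos : 0 < A := by
    by_contra h
    push_neg at h
    nlinarith [mul_nonpos_of_nonneg_of_nonpos (le_of_lt hq) h]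
  have hBpos : 0 < B := by
    by_contra h
    push_neg at h
    nlinarith [mul_nonpos_of_nonneg_of_nonpos (le_of_lt hq) h]
  rintro t₂ ht₂ ⟨hxt₂, hyt₂⟩
  have Hgood : ∀ t, t₂ ≤ t → x t < A ∧ B < y t := by
    by_contra hbad
    push_neg at hbad
    obtain ⟨w, hw1, hw2⟩ := hbad
    set bad : Set ℝ := {t | t₂ ≤ t ∧ (A ≤ x t ∨ y t ≤ B)} with hbaddef
    have hwbad : w ∈ bad := by
      refine ⟨hw1, ?_⟩
      by_cases h : x w < A
      · exact Or.inr (hw2 h)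
      · exact Or.inl (le_of_not_gt h)
    have hbadclosed : IsClosed bad := by
      have : bad = Ici t₂ ∩ ({t | A ≤ x t} ∪ {t | y t ≤ B}) := by
        ext t; simp [hbaddef, Set.mem_Ici, and_assoc]
      rw [this]
      exact isClosed_Ici.inter ((isClosed_le continuous_const hcx).union
        (isClosed_le hcy continuous_const))
    have hbdd : BddBelow bad := ⟨t₂, fun u hu => hu.1⟩
    set T := sInf bad with hTdef
    have hTmem : T ∈ bad := hbadclosed.csInf_mem ⟨w, hwbad⟩ hbdd
    have hTt₂ : t₂ ≤ T := hTmem.1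
    have hTgt : t₂ < T := by
      rcases eq_or_lt_of_le hTt₂ with h | h
      · exfalso
        rw [← h] at hTmem
        rcases hTmem.2 with h' | h'
        · exact absurd h' (not_le.mpr hxt₂)
        · exact absurd h' (not_le.mpr hyt₂)
      · exact h
    have hT0 : (0:ℝ) ≤ T := le_trans ht₂ hTt₂
    have hgood : ∀ s, t₂ ≤ s → s < T → x s < A ∧ B < y s := by
      intro s hs1 hs2
      by_contra hc
      have hsbad : s ∈ bad := by
        refine ⟨hs1, ?_⟩
        rw [not_and_or] at hc
        rcases hc with h | h
        · exact Or.inl (le_of_not_gt h)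
        · exact Or.inr (le_of_not_gt h)
      exact absurd (csInf_le hbdd hsbad) (not_le.mpr hs2)
    have hneBot : (𝓝[Ioo t₂ T] T).NeBot := right_nhdsWithin_Ioo_neBot hTgt
    have hmemIoo : ∀ᶠ s in 𝓝[Ioo t₂ T] T, s ∈ Ioo t₂ T := eventually_mem_nhdsWithin
    have hxT : x T ≤ A :=
      le_of_tendsto ((hcx.tendsto T).mono_left nhdsWithin_le_nhds)
        (hmemIoo.mono fun s hs => ((hgood s hs.1.le hs.2).1).le)
    have hyT : B ≤ y T :=
      ge_of_tendsto ((hcy.tendsto T).mono_left nhdsWithin_le_nhds)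
        (hmemIoo.mono fun s hs => ((hgood s hs.1.le hs.2).2).le)
    have hIoosub : Ioo t₂ T ⊆ Ici (0:ℝ) := fun s hs => le_trans ht₂ hs.1.le
    rcases hTmem.2 with hxge | hyle
    · -- x T = A
      have hxTeq : x T = A := le_antisymm hxT hxge
      rcases lt_or_eq_of_le hyT with hyTgt | hyTeq
      · -- B < y T : x' < 0 at T but x increased to A from below
        have hd : HasDerivWithinAt x (x T * (1 - x T - α * y T)) (Ioo t₂ T) T :=
          (hx T hT0).mono hIoosub
        have hvneg : x T * (1 - x T - α * y T) < 0 := by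
          rw [hxTeq]
          have he : 1 - A - α * y T = α * (B - y T) := by linear_combination keyA
          rw [he]
          exact mul_neg_of_pos_of_neg hApos
            (mul_neg_of_pos_of_neg (by linarith) (by linarith))
        have hslope := hasDerivWithinAt_iff_tendsto_slope'
          (show T ∉ Ioo t₂ T from fun h => lt_irrefl T h.2) |>.mp hd
        have hle : 0 ≤ x T * (1 - x T - α * y T) := by
          refine ge_of_tendsto hslope (hmemIoo.mono fun s hs => ?_)
          have h1 : x s - x T < 0 := by
            rw [hxTeq]; exact sub_neg.mpr (hgood s hs.1.le hs.2).1
          have h2 : s - T < 0 := sub_neg.mpr hs.2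
          have : slope x T s = (x s - x T) / (s - T) := by
            simp [slope_def_field]
          rw [this]
          exact le_of_lt (div_pos_of_neg_of_neg h1 h2)
        linarith
      · exact hx0ne ((no_saddle hcx hcy hx hy keyA keyB hT0 hxTeq hyTeq.symm).1)
    · -- y T = B
      have hyTeq : y T = B := le_antisymm hyle hyT
      rcases lt_or_eq_of_le hxT with hxTlt | hxTeq
      · -- x T < A : y' > 0 at T but y decreased to B from above
        have hd : HasDerivWithinAt y (δ * y T * (1 - y T - β * x T)) (Ioo t₂ T) T :=
          (hy T hT0).mono hIoosub
        have hvpos : 0 < δ * y T * (1 - y T - β * x T) := by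
          rw [hyTeq]
          have he : 1 - B - β * x T = β * (A - x T) := by linear_combination keyB
          rw [he]
          exact mul_pos (mul_pos hδ hBpos) (mul_pos (by linarith) (by linarith))
        have hslope := hasDerivWithinAt_iff_tendsto_slope'
          (show T ∉ Ioo t₂ T from fun h => lt_irrefl T h.2) |>.mp hd
        have hle : δ * y T * (1 - y T - β * x T) ≤ 0 := by
          refine le_of_tendsto hslope (hmemIoo.mono fun s hs => ?_)
          have h1 : 0 < y s - y T := by
            rw [hyTeq]; exact sub_pos.mpr (hgood s hs.1.le hs.2).2
          have h2 : s - T < 0 := sub_neg.mpr hs.2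
          have : slope y T s = (y s - y T) / (s - T) := by
            simp [slope_def_field]
          rw [this]
          exact le_of_lt (div_neg_of_pos_of_neg h1 h2)
        linarith
      · exact hx0ne ((no_saddle hcx hcy hx hy keyA keyB hT0 hxTeq hyTeq).1)
  -- Lyapunov
  have hypos' : ∀ t, t₂ ≤ t → 0 < y t := fun t ht => lt_trans hBpos (Hgood t ht).2
  set V : ℝ → ℝ := fun t => (1 + β) * Real.log (x t) - ((α + 1) / δ) * Real.log (y t)
    with hVdef
  have hVcont : ContinuousOn V (Ici t₂) := by
    apply ContinuousOn.sub
    · exact continuousOn_const.mul (ContinuousOn.log hcx.continuousOn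
        (fun t ht => ne_of_gt (hxpos t (mem_Ici.mpr (le_trans ht₂ ht)))))
    · exact continuousOn_const.mul (ContinuousOn.log hcy.continuousOn
        (fun t ht => ne_of_gt (hypos' t ht)))
  have hVd : ∀ t ∈ interior (Ici t₂),
      HasDerivWithinAt V ((α * β - 1) * ((x t - A) - (y t - B))) (interior (Ici t₂)) t := by
    intro t ht
    rw [interior_Ici] at ht
    have ht' : t₂ < t := ht
    have ht0 : (0:ℝ) < t := lt_of_le_of_lt ht₂ ht'
    have hdx : HasDerivAt x (x t * (1 - x t - α * y t)) t :=
      (hx t ht0.le).hasDerivAt (Ici_mem_nhds ht0)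
    have hdy : HasDerivAt y (δ * y t * (1 - y t - β * x t)) t :=
      (hy t ht0.le).hasDerivAt (Ici_mem_nhds ht0)
    have hxne : x t ≠ 0 := ne_of_gt (hxpos t ht0.le)
    have hyne : y t ≠ 0 := ne_of_gt (hypos' t ht'.le)
    have hlx : HasDerivAt (fun u => Real.log (x u)) (x t * (1 - x t - α * y t) / x t) t :=
      hdx.log hxne
    have hly : HasDerivAt (fun u => Real.log (y u)) (δ * y t * (1 - y t - β * x t) / y t) t :=
      hdy.log hyne
    have hd := (hlx.const_mul (1 + β)).sub (hly.const_mul ((α + 1) / δ))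
    have heq : (1 + β) * (x t * (1 - x t - α * y t) / x t)
        - (α + 1) / δ * (δ * y t * (1 - y t - β * x t) / y t)
        = (α * β - 1) * ((x t - A) - (y t - B)) := by
      have e1 : x t * (1 - x t - α * y t) / x t = 1 - x t - α * y t := by
        field_simp
      have e2 : δ * y t * (1 - y t - β * x t) / y t = δ * (1 - y t - β * x t) := by
        field_simp
      rw [e1, e2]
      have e3 : (α + 1) / δ * (δ * (1 - y t - β * x t)) = (α + 1) * (1 - y t - β * x t) := by
        field_simp
      rw [e3]
      linear_combination hA' - hB'
    rw [interior_Ici]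
    rw [heq] at hd
    exact hd.hasDerivWithinAt
  have hVanti : AntitoneOn V (Ici t₂) :=
    antitoneOn_of_hasDerivWithinAt_nonpos (convex_Ici t₂) hVcont hVd
      (by
        intro t ht
        rw [interior_Ici] at ht
        have h1 := (Hgood t (le_of_lt ht)).1
        have h2 := (Hgood t (le_of_lt ht)).2
        have h3 : (x t - A) - (y t - B) ≤ 0 := by linarith
        exact mul_nonpos_of_nonneg_of_nonpos (le_of_lt hq) h3)
  have hxl : Tendsto x atTop (nhds A) := (continuous_fst.tendsto _).comp hconv
  have hyl : Tendsto y atTop (nhds B) := (continuous_snd.tendsto _).comp hconv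
  have hVlim : Tendsto V atTop (nhds ((1 + β) * Real.log A - (α + 1) / δ * Real.log B)) := by
    apply Tendsto.sub
    · exact (((Real.continuousAt_log (ne_of_gt hApos)).tendsto).comp hxl).const_mul _
    · exact (((Real.continuousAt_log (ne_of_gt hBpos)).tendsto).comp hyl).const_mul _
  have hVge : (1 + β) * Real.log A - (α + 1) / δ * Real.log B ≤ V t₂ := by
    refine le_of_tendsto hVlim (eventually_atTop.mpr ⟨t₂, fun t ht => ?_⟩)
    exact hVanti (self_mem_Ici) (mem_Ici.mpr ht) ht
  have h1 : (1 + β) * Real.log (x t₂) < (1 + β) * Real.log A :=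
    mul_lt_mul_of_pos_left (Real.log_lt_log (hxpos t₂ ht₂) hxt₂) (by linarith)
  have h2 : (α + 1) / δ * Real.log B < (α + 1) / δ * Real.log (y t₂) :=
    mul_lt_mul_of_pos_left (Real.log_lt_log hBpos hyt₂) (by positivity)
  have : V t₂ < (1 + β) * Real.log A - (α + 1) / δ * Real.log B := by
    simp only [hVdef]
    linarith
  linarith

lemma exists_right_pos {f : ℝ → ℝ} {t v : ℝ}
    (hd : HasDerivWithinAt f v (Ioi t) t) (hv : 0 < v)
    {P : ℝ → Prop} (hP : ∀ᶠ s in 𝓝 t, P s) : ∃ s, t < s ∧ f t < f s ∧ P s := by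
  have hslope := (hasDerivWithinAt_iff_tendsto_slope'
    (show t ∉ Ioi t from lt_irrefl t)).mp hd
  have hev : ∀ᶠ s in 𝓝[Ioi t] t, 0 < slope f t s := hslope.eventually (eventually_gt_nhds hv)
  have hP' : ∀ᶠ s in 𝓝[Ioi t] t, P s := hP.filter_mono nhdsWithin_le_nhds
  have hmem : ∀ᶠ s in 𝓝[Ioi t] t, s ∈ Ioi t := eventually_mem_nhdsWithin
  obtain ⟨s, h1, h2, h3⟩ := (hev.and (hP'.and hmem)).exists
  refine ⟨s, h3, ?_, h2⟩
  have hst : (0:ℝ) < s - t := sub_pos.mpr h3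
  have := mul_pos h1 hst
  rw [slope_def_field, div_mul_cancel₀ _ (ne_of_gt hst)] at this
  linarith

lemma exists_right_neg {f : ℝ → ℝ} {t v : ℝ}
    (hd : HasDerivWithinAt f v (Ioi t) t) (hv : v < 0)
    {P : ℝ → Prop} (hP : ∀ᶠ s in 𝓝 t, P s) : ∃ s, t < s ∧ f s < f t ∧ P s := by
  have hslope := (hasDerivWithinAt_iff_tendsto_slope'
    (show t ∉ Ioi t from lt_irrefl t)).mp hd
  have hev : ∀ᶠ s in 𝓝[Ioi t] t, slope f t s < 0 := hslope.eventually (eventually_lt_nhds hv)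
  have hP' : ∀ᶠ s in 𝓝[Ioi t] t, P s := hP.filter_mono nhdsWithin_le_nhds
  have hmem : ∀ᶠ s in 𝓝[Ioi t] t, s ∈ Ioi t := eventually_mem_nhdsWithin
  obtain ⟨s, h1, h2, h3⟩ := (hev.and (hP'.and hmem)).exists
  refine ⟨s, h3, ?_, h2⟩
  have hst : (0:ℝ) < s - t := sub_pos.mpr h3
  have := mul_neg_of_neg_of_pos h1 hst
  rw [slope_def_field, div_mul_cancel₀ _ (ne_of_gt hst)] at this
  linarith

lemma confine
    (hα : 1 < α) (hβ : 1 < β) (hδ : 0 < δ)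
    (hA' : (α * β - 1) * A = α - 1) (hB' : (α * β - 1) * B = β - 1)
    (keyA : 1 - A - α * B = 0) (keyB : 1 - B - β * A = 0)
    (hcx : Continuous x) (hcy : Continuous y)
    (hx : ∀ t ∈ Ici (0:ℝ), HasDerivWithinAt x (x t * (1 - x t - α * y t)) (Ici 0) t)
    (hy : ∀ t ∈ Ici (0:ℝ), HasDerivWithinAt y (δ * y t * (1 - y t - β * x t)) (Ici 0) t)
    (hxpos : ∀ t ∈ Ici (0:ℝ), 0 < x t)
    (hypos : ∀ t ∈ Ici (0:ℝ), 0 < y t)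
    (hconv : Tendsto (fun t => (x t, y t)) atTop (nhds (A, B)))
    (hx0ne : x 0 ≠ A) :
    (x 0 < A → ∀ t ∈ Ici (0:ℝ), x t < A ∧ y t < B) ∧
    (A < x 0 → ∀ t ∈ Ici (0:ℝ), A < x t ∧ B < y t) := by
  have hq : 0 < α * β - 1 := by nlinarith
  have hApos : 0 < A := by
    by_contra h
    push_neg at h
    nlinarith [mul_nonpos_of_nonneg_of_nonpos (le_of_lt hq) h]
  have hBpos : 0 < B := by
    by_contra h
    push_neg at h
    nlinarith [mul_nonpos_of_nonneg_of_nonpos (le_of_lt hq) h]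
  have hQm := no_Qminus hα hβ hδ hA' hB' keyA keyB hcx hcy hx hy hypos hconv hx0ne
  have hQp := no_Qplus hα hβ hδ hA' hB' keyA keyB hcx hcy hx hy hxpos hconv hx0ne
  have hIoisub : ∀ t : ℝ, 0 ≤ t → Ioi t ⊆ Ici (0:ℝ) :=
    fun t ht s hs => le_trans ht (le_of_lt hs)
  have hxne : ∀ t ∈ Ici (0:ℝ), x t ≠ A := by
    intro t ht heq
    rcases lt_trichotomy (y t) B with hlt | heqB | hgt
    · -- x t = A, y t < B: flow pushes right into Q⁻
      have hd : HasDerivWithinAt x (x t * (1 - x t - α * y t)) (Ioi t) t :=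
        (hx t ht).mono (hIoisub t ht)
      have hv : 0 < x t * (1 - x t - α * y t) := by
        rw [heq]
        have he : 1 - A - α * y t = α * (B - y t) := by linear_combination keyA
        rw [he]
        exact mul_pos hApos (mul_pos (by linarith) (by linarith))
      obtain ⟨s, hs1, hs2, hs3⟩ := exists_right_pos hd hv
        ((hcy.tendsto t).eventually (eventually_lt_nhds hlt))
      exact hQm s (le_trans ht (le_of_lt hs1)) ⟨by rw [heq] at hs2; exact hs2, hs3⟩
    · exact hx0ne ((no_saddle hcx hcy hx hy keyA keyB ht heq heqB).1)
    · -- x t = A, y t > B: flow pushes right into Q⁺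
      have hd : HasDerivWithinAt x (x t * (1 - x t - α * y t)) (Ioi t) t :=
        (hx t ht).mono (hIoisub t ht)
      have hv : x t * (1 - x t - α * y t) < 0 := by
        rw [heq]
        have he : 1 - A - α * y t = α * (B - y t) := by linear_combination keyA
        rw [he]
        exact mul_neg_of_pos_of_neg hApos (mul_neg_of_pos_of_neg (by linarith) (by linarith))
      obtain ⟨s, hs1, hs2, hs3⟩ := exists_right_neg hd hv
        ((hcy.tendsto t).eventually (eventually_gt_nhds hgt))
      exact hQp s (le_trans ht (le_of_lt hs1)) ⟨by rw [heq] at hs2; exact hs2, hs3⟩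
  constructor
  · intro h0 t ht
    have hxtlt : x t < A := by
      rcases lt_or_gt_of_ne (hxne t ht) with h | h
      · exact h
      · exfalso
        have hmem : A ∈ Icc (x 0) (x t) := ⟨le_of_lt h0, le_of_lt h⟩
        obtain ⟨s, hsmem, hs⟩ := intermediate_value_Icc ht
          (hcx.continuousOn : ContinuousOn x (Icc 0 t)) hmem
        exact hxne s hsmem.1 hs
    refine ⟨hxtlt, ?_⟩
    rcases lt_trichotomy (y t) B with h | h | h
    · exact h
    · exfalso
      -- y t = B, x t < A : y pushed up into Q⁺
      have hd : HasDerivWithinAt y (δ * y t * (1 - y t - β * x t)) (Ioi t) t :=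
        (hy t ht).mono (hIoisub t ht)
      have hv : 0 < δ * y t * (1 - y t - β * x t) := by
        rw [h]
        have he : 1 - B - β * x t = β * (A - x t) := by linear_combination keyB
        rw [he]
        exact mul_pos (mul_pos hδ hBpos) (mul_pos (by linarith) (by linarith))
      obtain ⟨s, hs1, hs2, hs3⟩ := exists_right_pos hd hv
        ((hcx.tendsto t).eventually (eventually_lt_nhds hxtlt))
      exact hQp s (le_trans ht (le_of_lt hs1)) ⟨hs3, by rw [h] at hs2; exact hs2⟩
    · exact absurd ⟨hxtlt, h⟩ (hQp t ht)
  · intro h0 t ht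
    have hxtgt : A < x t := by
      rcases lt_or_gt_of_ne (hxne t ht) with h | h
      · exfalso
        have hmem : A ∈ Icc (x t) (x 0) := ⟨le_of_lt h, le_of_lt h0⟩
        obtain ⟨s, hsmem, hs⟩ := intermediate_value_Icc' ht
          (hcx.continuousOn : ContinuousOn x (Icc 0 t)) hmem
        exact hxne s hsmem.1 hs
      · exact h
    refine ⟨hxtgt, ?_⟩
    rcases lt_trichotomy (y t) B with h | h | h
    · exact absurd ⟨hxtgt, h⟩ (hQm t ht)
    · exfalso
      -- y t = B, x t > A : y pushed down into Q⁻
      have hd : HasDerivWithinAt y (δ * y t * (1 - y t - β * x t)) (Ioi t) t :=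
        (hy t ht).mono (hIoisub t ht)
      have hv : δ * y t * (1 - y t - β * x t) < 0 := by
        rw [h]
        have he : 1 - B - β * x t = β * (A - x t) := by linear_combination keyB
        rw [he]
        exact mul_neg_of_pos_of_neg (mul_pos hδ hBpos)
          (mul_neg_of_pos_of_neg (by linarith) (by linarith))
      obtain ⟨s, hs1, hs2, hs3⟩ := exists_right_neg hd hv
        ((hcx.tendsto t).eventually (eventually_gt_nhds hxtgt))
      exact hQm s (le_trans ht (le_of_lt hs1)) ⟨hs3, by rw [h] at hs2; exact hs2⟩
    · exact h

lemma exists_sigma₁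
    (hα : 1 < α) (hβ : 1 < β) (hδ : 0 < δ)
    (hA' : (α * β - 1) * A = α - 1) (hB' : (α * β - 1) * B = β - 1)
    (keyA : 1 - A - α * B = 0) (keyB : 1 - B - β * A = 0)
    (hcx : Continuous x) (hcy : Continuous y)
    (hx : ∀ t ∈ Ici (0:ℝ), HasDerivWithinAt x (x t * (1 - x t - α * y t)) (Ici 0) t)
    (hy : ∀ t ∈ Ici (0:ℝ), HasDerivWithinAt y (δ * y t * (1 - y t - β * x t)) (Ici 0) t)
    (hxpos : ∀ t ∈ Ici (0:ℝ), 0 < x t)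
    (hypos : ∀ t ∈ Ici (0:ℝ), 0 < y t)
    (hconv : Tendsto (fun t => (x t, y t)) atTop (nhds (A, B)))
    (hx0lt : x 0 < A) :
    ∃ σ : ℝ → ℝ,
      σ (x 0) = y 0 ∧
      (∀ z ∈ Ico (x 0) A, 0 < σ z ∧ σ z < B) ∧
      (∀ z ∈ Ico (x 0) A, HasDerivWithinAt σ
        (δ * σ z * (1 - σ z - β * z) / (z * (1 - z - α * σ z))) (Ico (x 0) A) z) ∧
      Tendsto σ (𝓝[Ico (x 0) A] A) (nhds B) := by
  have hreg : ∀ t ∈ Ici (0:ℝ), x t < A ∧ y t < B :=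
    (confine hα hβ hδ hA' hB' keyA keyB hcx hcy hx hy hxpos hypos hconv
      (ne_of_lt hx0lt)).1 hx0lt
  set s : Set ℝ := Ico (x 0) A with hsdef
  set G : ℝ → ℝ := fun t => x t * (1 - x t - α * y t) with hGdef
  have hGpos : ∀ t ∈ Ici (0:ℝ), 0 < G t := by
    intro t ht
    have h1 := (hreg t ht).1
    have h2 := (hreg t ht).2
    have h3 : 0 < 1 - x t - α * y t := by nlinarith [keyA]
    exact mul_pos (hxpos t ht) h3
  have hmono : StrictMonoOn x (Ici 0) := by
    apply strictMonoOn_of_hasDerivWithinAt_pos (convex_Ici 0) hcx.continuousOn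
      (f' := G)
    · intro t ht
      rw [interior_Ici] at ht
      exact (((hx t (mem_Ici.mpr (le_of_lt ht))).hasDerivAt (Ici_mem_nhds ht)).hasDerivWithinAt)
    · intro t ht
      rw [interior_Ici] at ht
      exact hGpos t (mem_Ici.mpr (le_of_lt ht))
  have hxl : Tendsto x atTop (nhds A) := (continuous_fst.tendsto _).comp hconv
  have hyl : Tendsto y atTop (nhds B) := (continuous_snd.tendsto _).comp hconv
  have hsurj : ∀ z ∈ s, ∃ t ∈ Ici (0:ℝ), x t = z := by
    rintro z ⟨hz1, hz2⟩
    rcases eq_or_lt_of_le hz1 with h | h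
    · exact ⟨0, self_mem_Ici, h⟩
    · obtain ⟨T, hT⟩ := (hxl.eventually (eventually_gt_nhds hz2)).and
        (eventually_ge_atTop (0:ℝ)) |>.exists
      obtain ⟨t, htmem, hteq⟩ := intermediate_value_Icc hT.2 hcx.continuousOn
        (⟨hz1, le_of_lt hT.1⟩ : z ∈ Icc (x 0) (x T))
      exact ⟨t, htmem.1, hteq⟩
  set ξ : ℝ → ℝ := Function.invFunOn x (Ici 0) with hξdef
  have hξmem : ∀ z ∈ s, ξ z ∈ Ici (0:ℝ) := fun z hz => Function.invFunOn_mem (hsurj z hz)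
  have hξval : ∀ z ∈ s, x (ξ z) = z := fun z hz => Function.invFunOn_eq (hsurj z hz)
  have hξlt : ∀ z ∈ s, ∀ T ∈ Ici (0:ℝ), x T < z → T < ξ z := by
    intro z hz T hT hxT
    by_contra h
    push_neg at h
    have := hmono.monotoneOn (hξmem z hz) hT h
    rw [hξval z hz] at this
    exact absurd (lt_of_le_of_lt this hxT) (lt_irrefl z)
  have hξgt : ∀ z ∈ s, ∀ T ∈ Ici (0:ℝ), z < x T → ξ z < T := by
    intro z hz T hT hxT
    by_contra h
    push_neg at h
    have := hmono.monotoneOn hT (hξmem z hz) h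
    rw [hξval z hz] at this
    exact absurd (lt_of_lt_of_le hxT this) (lt_irrefl z)
  have hξ0 : ξ (x 0) = 0 := by
    have h0s : x 0 ∈ s := ⟨le_refl _, hx0lt⟩
    exact hmono.injOn (hξmem _ h0s) self_mem_Ici (hξval _ h0s)
  have hξcont : ∀ z ∈ s, ContinuousWithinAt ξ s z := by
    intro z hz
    rw [ContinuousWithinAt, Metric.tendsto_nhds]
    intro ε hε
    have htz : ξ z ∈ Ici (0:ℝ) := hξmem z hz
    have hub : ∀ᶠ z' in 𝓝[s] z, ξ z' < ξ z + ε := by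
      have hmemup : ξ z + ε ∈ Ici (0:ℝ) := mem_Ici.mpr (le_trans (mem_Ici.mp htz) (by linarith))
      have hlt : z < x (ξ z + ε) := by
        have := hmono htz hmemup (by linarith)
        rwa [hξval z hz] at this
      have hU : Iio (x (ξ z + ε)) ∈ 𝓝[s] z :=
        mem_nhdsWithin_of_mem_nhds (Iio_mem_nhds hlt)
      filter_upwards [hU, eventually_mem_nhdsWithin] with z' hz' hz's
      exact hξgt z' hz's _ hmemup hz'
    have hlb : ∀ᶠ z' in 𝓝[s] z, ξ z - ε < ξ z' := by
      by_cases h : ξ z - ε < 0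
      · filter_upwards [eventually_mem_nhdsWithin] with z' hz's
        exact lt_of_lt_of_le h (hξmem z' hz's)
      · push_neg at h
        have hlt : x (ξ z - ε) < z := by
          have := hmono h htz (by linarith)
          rwa [hξval z hz] at this
        have hU : Ioi (x (ξ z - ε)) ∈ 𝓝[s] z :=
          mem_nhdsWithin_of_mem_nhds (Ioi_mem_nhds hlt)
        filter_upwards [hU, eventually_mem_nhdsWithin] with z' hz' hz's
        exact hξlt z' hz's _ h hz'
    filter_upwards [hub, hlb] with z' h1 h2
    rw [Real.dist_eq, abs_sub_lt_iff]
    constructor <;> linarith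
  have hξtop : Tendsto ξ (𝓝[s] A) atTop := by
    rw [tendsto_atTop]
    intro b
    have hTmem : max b 0 ∈ Ici (0:ℝ) := mem_Ici.mpr (le_max_right _ _)
    have hxT : x (max b 0) < A := (hreg _ hTmem).1
    have hU : Ioi (x (max b 0)) ∈ 𝓝[s] A :=
      mem_nhdsWithin_of_mem_nhds (Ioi_mem_nhds hxT)
    filter_upwards [hU, eventually_mem_nhdsWithin] with z' hz' hz's
    exact le_trans (le_max_left _ _) (le_of_lt (hξlt z' hz's _ hTmem hz'))
  have hξd : ∀ z ∈ s, HasDerivWithinAt ξ (G (ξ z))⁻¹ s z := by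
    intro z hz
    have htz : ξ z ∈ Ici (0:ℝ) := hξmem z hz
    have hGt : 0 < G (ξ z) := hGpos _ htz
    rw [hasDerivWithinAt_iff_tendsto_slope]
    have hxd : Tendsto (slope x (ξ z)) (𝓝[Ici 0 \ {ξ z}] (ξ z)) (nhds (G (ξ z))) :=
      hasDerivWithinAt_iff_tendsto_slope.mp (hx _ htz)
    have hmap : Tendsto ξ (𝓝[s \ {z}] z) (𝓝[Ici 0 \ {ξ z}] (ξ z)) := by
      rw [tendsto_nhdsWithin_iff]
      constructor
      · exact (hξcont z hz).mono_left (nhdsWithin_mono z diff_subset)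
      · filter_upwards [eventually_mem_nhdsWithin] with z' hz'
        refine ⟨hξmem z' hz'.1, ?_⟩
        intro heq
        apply hz'.2
        have : x (ξ z') = x (ξ z) := by rw [heq]
        rw [hξval z' hz'.1, hξval z hz] at this
        exact this
    have hcomp := hxd.comp hmap
    have hinv := hcomp.inv₀ (ne_of_gt hGt)
    refine hinv.congr' ?_
    filter_upwards [eventually_mem_nhdsWithin] with z' hz'
    have hne1 : ξ z' ≠ ξ z := by
      intro heq
      apply hz'.2
      have : x (ξ z') = x (ξ z) := by rw [heq]
      rw [hξval z' hz'.1, hξval z hz] at this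
      exact this
    simp only [Function.comp_apply, slope_def_field]
    rw [hξval z' hz'.1, hξval z hz]
    rw [inv_div]
  refine ⟨fun z => y (ξ z), ?_, ?_, ?_, ?_⟩
  · show y (ξ (x 0)) = y 0
    rw [hξ0]
  · intro z hz
    exact ⟨hypos _ (hξmem z hz), (hreg _ (hξmem z hz)).2⟩
  · intro z hz
    have htz : ξ z ∈ Ici (0:ℝ) := hξmem z hz
    have hyd := hy _ htz
    have hcompd := HasDerivWithinAt.scomp (h := ξ) (x := z) hyd (hξd z hz) hξmem
    have heq : (G (ξ z))⁻¹ • (δ * y (ξ z) * (1 - y (ξ z) - β * x (ξ z)))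
        = δ * y (ξ z) * (1 - y (ξ z) - β * z) / (z * (1 - z - α * y (ξ z))) := by
      rw [smul_eq_mul, hGdef]
      simp only []
      rw [hξval z hz]
      rw [div_eq_inv_mul]
    rw [heq] at hcompd
    exact hcompd
  · exact hyl.comp hξtop

lemma exists_sigma₂
    (hα : 1 < α) (hβ : 1 < β) (hδ : 0 < δ)
    (hA' : (α * β - 1) * A = α - 1) (hB' : (α * β - 1) * B = β - 1)
    (keyA : 1 - A - α * B = 0) (keyB : 1 - B - β * A = 0)
    (hcx : Continuous x) (hcy : Continuous y)
    (hx : ∀ t ∈ Ici (0:ℝ), HasDerivWithinAt x (x t * (1 - x t - α * y t)) (Ici 0) t)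
    (hy : ∀ t ∈ Ici (0:ℝ), HasDerivWithinAt y (δ * y t * (1 - y t - β * x t)) (Ici 0) t)
    (hxpos : ∀ t ∈ Ici (0:ℝ), 0 < x t)
    (hypos : ∀ t ∈ Ici (0:ℝ), 0 < y t)
    (hconv : Tendsto (fun t => (x t, y t)) atTop (nhds (A, B)))
    (hx0gt : A < x 0) :
    ∃ σ : ℝ → ℝ,
      σ (x 0) = y 0 ∧
      (∀ z ∈ Ioc A (x 0), B < σ z) ∧
      (∀ z ∈ Ioc A (x 0), HasDerivWithinAt σ
        (δ * σ z * (1 - σ z - β * z) / (z * (1 - z - α * σ z))) (Ioc A (x 0)) z) ∧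
      Tendsto σ (𝓝[Ioc A (x 0)] A) (nhds B) := by
  have hreg : ∀ t ∈ Ici (0:ℝ), A < x t ∧ B < y t :=
    (confine hα hβ hδ hA' hB' keyA keyB hcx hcy hx hy hxpos hypos hconv
      (ne_of_gt hx0gt)).2 hx0gt
  set s : Set ℝ := Ioc A (x 0) with hsdef
  set G : ℝ → ℝ := fun t => x t * (1 - x t - α * y t) with hGdef
  have hGneg : ∀ t ∈ Ici (0:ℝ), G t < 0 := by
    intro t ht
    have h1 := (hreg t ht).1
    have h2 := (hreg t ht).2
    have h3 : 1 - x t - α * y t < 0 := by nlinarith [keyA]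
    exact mul_neg_of_pos_of_neg (hxpos t ht) h3
  have hanti : StrictAntiOn x (Ici 0) := by
    apply strictAntiOn_of_hasDerivWithinAt_neg (convex_Ici 0) hcx.continuousOn
      (f' := G)
    · intro t ht
      rw [interior_Ici] at ht
      exact (((hx t (mem_Ici.mpr (le_of_lt ht))).hasDerivAt (Ici_mem_nhds ht)).hasDerivWithinAt)
    · intro t ht
      rw [interior_Ici] at ht
      exact hGneg t (mem_Ici.mpr (le_of_lt ht))
  have hxl : Tendsto x atTop (nhds A) := (continuous_fst.tendsto _).comp hconv
  have hyl : Tendsto y atTop (nhds B) := (continuous_snd.tendsto _).comp hconv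
  have hsurj : ∀ z ∈ s, ∃ t ∈ Ici (0:ℝ), x t = z := by
    rintro z ⟨hz1, hz2⟩
    rcases eq_or_lt_of_le hz2 with h | h
    · exact ⟨0, self_mem_Ici, h.symm⟩
    · obtain ⟨T, hT⟩ := (hxl.eventually (eventually_lt_nhds hz1)).and
        (eventually_ge_atTop (0:ℝ)) |>.exists
      obtain ⟨t, htmem, hteq⟩ := intermediate_value_Icc' hT.2 hcx.continuousOn
        (⟨le_of_lt hT.1, hz2⟩ : z ∈ Icc (x T) (x 0))
      exact ⟨t, htmem.1, hteq⟩
  set ξ : ℝ → ℝ := Function.invFunOn x (Ici 0) with hξdef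
  have hξmem : ∀ z ∈ s, ξ z ∈ Ici (0:ℝ) := fun z hz => Function.invFunOn_mem (hsurj z hz)
  have hξval : ∀ z ∈ s, x (ξ z) = z := fun z hz => Function.invFunOn_eq (hsurj z hz)
  have hξlt : ∀ z ∈ s, ∀ T ∈ Ici (0:ℝ), x T < z → ξ z < T := by
    intro z hz T hT hxT
    by_contra h
    push_neg at h
    have := hanti.antitoneOn hT (hξmem z hz) h
    rw [hξval z hz] at this
    exact absurd (lt_of_lt_of_le hxT this) (lt_irrefl (x T))
  have hξgt : ∀ z ∈ s, ∀ T ∈ Ici (0:ℝ), z < x T → T < ξ z := by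
    intro z hz T hT hxT
    by_contra h
    push_neg at h
    have := hanti.antitoneOn (hξmem z hz) hT h
    rw [hξval z hz] at this
    exact absurd (lt_of_le_of_lt this hxT) (lt_irrefl (x T))
  have hξ0 : ξ (x 0) = 0 := by
    have h0s : x 0 ∈ s := ⟨hx0gt, le_refl _⟩
    exact hanti.injOn (hξmem _ h0s) self_mem_Ici (hξval _ h0s)
  have hξcont : ∀ z ∈ s, ContinuousWithinAt ξ s z := by
    intro z hz
    rw [ContinuousWithinAt, Metric.tendsto_nhds]
    intro ε hε
    have htz : ξ z ∈ Ici (0:ℝ) := hξmem z hz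
    have hub : ∀ᶠ z' in 𝓝[s] z, ξ z' < ξ z + ε := by
      have hmemup : ξ z + ε ∈ Ici (0:ℝ) := mem_Ici.mpr (le_trans (mem_Ici.mp htz) (by linarith))
      have hlt : x (ξ z + ε) < z := by
        have := hanti htz hmemup (by linarith)
        rwa [hξval z hz] at this
      have hU : Ioi (x (ξ z + ε)) ∈ 𝓝[s] z :=
        mem_nhdsWithin_of_mem_nhds (Ioi_mem_nhds hlt)
      filter_upwards [hU, eventually_mem_nhdsWithin] with z' hz' hz's
      exact hξlt z' hz's _ hmemup hz'
    have hlb : ∀ᶠ z' in 𝓝[s] z, ξ z - ε < ξ z' := by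
      by_cases h : ξ z - ε < 0
      · filter_upwards [eventually_mem_nhdsWithin] with z' hz's
        exact lt_of_lt_of_le h (hξmem z' hz's)
      · push_neg at h
        have hlt : z < x (ξ z - ε) := by
          have := hanti h htz (by linarith)
          rwa [hξval z hz] at this
        have hU : Iio (x (ξ z - ε)) ∈ 𝓝[s] z :=
          mem_nhdsWithin_of_mem_nhds (Iio_mem_nhds hlt)
        filter_upwards [hU, eventually_mem_nhdsWithin] with z' hz' hz's
        exact hξgt z' hz's _ h hz'
    filter_upwards [hub, hlb] with z' h1 h2
    rw [Real.dist_eq, abs_sub_lt_iff]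
    constructor <;> linarith
  have hξtop : Tendsto ξ (𝓝[s] A) atTop := by
    rw [tendsto_atTop]
    intro b
    have hTmem : max b 0 ∈ Ici (0:ℝ) := mem_Ici.mpr (le_max_right _ _)
    have hxT : A < x (max b 0) := (hreg _ hTmem).1
    have hU : Iio (x (max b 0)) ∈ 𝓝[s] A :=
      mem_nhdsWithin_of_mem_nhds (Iio_mem_nhds hxT)
    filter_upwards [hU, eventually_mem_nhdsWithin] with z' hz' hz's
    exact le_trans (le_max_left _ _) (le_of_lt (hξgt z' hz's _ hTmem hz'))
  have hξd : ∀ z ∈ s, HasDerivWithinAt ξ (G (ξ z))⁻¹ s z := by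
    intro z hz
    have htz : ξ z ∈ Ici (0:ℝ) := hξmem z hz
    have hGt : G (ξ z) < 0 := hGneg _ htz
    rw [hasDerivWithinAt_iff_tendsto_slope]
    have hxd : Tendsto (slope x (ξ z)) (𝓝[Ici 0 \ {ξ z}] (ξ z)) (nhds (G (ξ z))) :=
      hasDerivWithinAt_iff_tendsto_slope.mp (hx _ htz)
    have hmap : Tendsto ξ (𝓝[s \ {z}] z) (𝓝[Ici 0 \ {ξ z}] (ξ z)) := by
      rw [tendsto_nhdsWithin_iff]
      constructor
      · exact (hξcont z hz).mono_left (nhdsWithin_mono z diff_subset)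
      · filter_upwards [eventually_mem_nhdsWithin] with z' hz'
        refine ⟨hξmem z' hz'.1, ?_⟩
        intro heq
        apply hz'.2
        have : x (ξ z') = x (ξ z) := by rw [heq]
        rw [hξval z' hz'.1, hξval z hz] at this
        exact this
    have hcomp := hxd.comp hmap
    have hinv := hcomp.inv₀ (ne_of_lt hGt)
    refine hinv.congr' ?_
    filter_upwards [eventually_mem_nhdsWithin] with z' hz'
    have hne1 : ξ z' ≠ ξ z := by
      intro heq
      apply hz'.2
      have : x (ξ z') = x (ξ z) := by rw [heq]
      rw [hξval z' hz'.1, hξval z hz] at this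
      exact this
    simp only [Function.comp_apply, slope_def_field]
    rw [hξval z' hz'.1, hξval z hz]
    rw [inv_div]
  refine ⟨fun z => y (ξ z), ?_, ?_, ?_, ?_⟩
  · show y (ξ (x 0)) = y 0
    rw [hξ0]
  · intro z hz
    exact (hreg _ (hξmem z hz)).2
  · intro z hz
    have htz : ξ z ∈ Ici (0:ℝ) := hξmem z hz
    have hyd := hy _ htz
    have hcompd := HasDerivWithinAt.scomp (h := ξ) (x := z) hyd (hξd z hz) hξmem
    have heq : (G (ξ z))⁻¹ • (δ * y (ξ z) * (1 - y (ξ z) - β * x (ξ z)))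
        = δ * y (ξ z) * (1 - y (ξ z) - β * z) / (z * (1 - z - α * y (ξ z))) := by
      rw [smul_eq_mul, hGdef]
      simp only []
      rw [hξval z hz]
      rw [div_eq_inv_mul]
    rw [heq] at hcompd
    exact hcompd
  · exact hyl.comp hξtop

lemma comparison₁ {δ₁ δ₂ x₀ : ℝ} {σ₁ σ₂ : ℝ → ℝ}
    (hα : 1 < α) (hβ : 1 < β) (hδ₁ : 0 < δ₁) (hδ₁₂ : δ₁ < δ₂)
    (hA' : (α * β - 1) * A = α - 1) (hB' : (α * β - 1) * B = β - 1)
    (keyA : 1 - A - α * B = 0) (keyB : 1 - B - β * A = 0)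
    (hx₀pos : 0 < x₀) (hx₀A : x₀ < A)
    (hσ₁b : ∀ z ∈ Ico x₀ A, 0 < σ₁ z ∧ σ₁ z < B)
    (hσ₂b : ∀ z ∈ Ico x₀ A, 0 < σ₂ z ∧ σ₂ z < B)
    (hσ₁d : ∀ z ∈ Ico x₀ A, HasDerivWithinAt σ₁
      (δ₁ * σ₁ z * (1 - σ₁ z - β * z) / (z * (1 - z - α * σ₁ z))) (Ico x₀ A) z)
    (hσ₂d : ∀ z ∈ Ico x₀ A, HasDerivWithinAt σ₂
      (δ₂ * σ₂ z * (1 - σ₂ z - β * z) / (z * (1 - z - α * σ₂ z))) (Ico x₀ A) z)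
    (hσ₁l : Tendsto σ₁ (𝓝[Ico x₀ A] A) (nhds B))
    (hσ₂l : Tendsto σ₂ (𝓝[Ico x₀ A] A) (nhds B))
    (hle : σ₁ x₀ ≤ σ₂ x₀) : False := by
  have hδ₂ : 0 < δ₂ := lt_trans hδ₁ hδ₁₂
  have hq : 0 < α * β - 1 := by nlinarith
  have hBpos : 0 < B := by
    by_contra h
    push_neg at h
    nlinarith [mul_nonpos_of_nonneg_of_nonpos (le_of_lt hq) h]
  set s : Set ℝ := Ico x₀ A with hsdef
  have hx₀s : x₀ ∈ s := ⟨le_refl _, hx₀A⟩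
  have hzpos : ∀ z ∈ s, 0 < z := fun z hz => lt_of_lt_of_le hx₀pos hz.1
  have hM : ∀ (σz z : ℝ), z ∈ s → σz < B → 0 < z * (1 - z - α * σz) := by
    intro σz z hz hσz
    have h1 : z < A := hz.2
    have h3 : 0 < 1 - z - α * σz := by nlinarith [keyA]
    exact mul_pos (hzpos z hz) h3
  have hN : ∀ (σz z : ℝ), z ∈ s → σz < B → 0 < 1 - σz - β * z := by
    intro σz z hz hσz
    have h1 : z < A := hz.2
    nlinarith [keyB]
  -- Crossing lemma: σ₁ ≤ σ₂ on s
  have hcross : ∀ z ∈ s, σ₁ z ≤ σ₂ z := by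
    by_contra hc
    push_neg at hc
    obtain ⟨w, hw, hlt⟩ := hc
    set h : ℝ → ℝ := fun z => σ₂ z - σ₁ z with hhdef
    have hIccsub : Icc x₀ w ⊆ s := fun u hu => ⟨hu.1, lt_of_le_of_lt hu.2 hw.2⟩
    have hcont : ContinuousOn h (Icc x₀ w) := fun u hu =>
      (((hσ₂d u (hIccsub hu)).continuousWithinAt).sub
        ((hσ₁d u (hIccsub hu)).continuousWithinAt)).mono hIccsub
    set S : Set ℝ := Icc x₀ w ∩ h ⁻¹' (Ici 0) with hSdef
    have hSclosed : IsClosed S := hcont.preimage_isClosed_of_isClosed isClosed_Icc isClosed_Ici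
    have hSne : S.Nonempty := ⟨x₀, ⟨le_refl _, hw.1⟩, by
      simp only [mem_preimage, mem_Ici, hhdef]; linarith⟩
    have hSbdd : BddAbove S := ⟨w, fun u hu => hu.1.2⟩
    set zQ := sSup S with hzQdef
    have hzQmem : zQ ∈ S := hSclosed.csSup_mem hSne hSbdd
    have hzQ1 : zQ ∈ Icc x₀ w := hzQmem.1
    have hzQ2 : (0:ℝ) ≤ h zQ := hzQmem.2
    have hzQs : zQ ∈ s := hIccsub hzQ1
    have hzQw : zQ < w := by
      rcases eq_or_lt_of_le hzQ1.2 with he | he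
      · exfalso
        rw [he] at hzQ2
        simp only [hhdef] at hzQ2
        linarith
      · exact he
    have hneg : ∀ u ∈ Ioc zQ w, h u < 0 := by
      intro u hu
      by_contra hcu
      push_neg at hcu
      have huS : u ∈ S := ⟨⟨le_trans hzQ1.1 (le_of_lt hu.1), hu.2⟩, hcu⟩
      exact absurd (le_csSup hSbdd huS) (not_le.mpr hu.1)
    have hIocsub : Ioc zQ w ⊆ s := fun u hu =>
      ⟨le_trans hzQ1.1 (le_of_lt hu.1), lt_of_le_of_lt hu.2 hw.2⟩
    have hz0 : h zQ = 0 := by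
      refine le_antisymm ?_ hzQ2
      have hctd : Tendsto h (𝓝[Ioc zQ w] zQ) (nhds (h zQ)) :=
        (((hσ₂d zQ hzQs).continuousWithinAt).sub
          ((hσ₁d zQ hzQs).continuousWithinAt)).mono_left (nhdsWithin_mono _ hIocsub)
      have : (𝓝[Ioc zQ w] zQ).NeBot :=
        (left_nhdsWithin_Ioo_neBot hzQw).mono (nhdsWithin_mono _ Ioo_subset_Ioc_self)
      exact le_of_tendsto hctd (eventually_mem_nhdsWithin.mono fun u hu => (hneg u hu).le)
    have heqσ : σ₂ zQ = σ₁ zQ := by simp only [hhdef] at hz0; linarith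
    -- derivative of h at zQ is positive
    have hd := (hσ₂d zQ hzQs).sub (hσ₁d zQ hzQs)
    have hMpos := hM (σ₁ zQ) zQ hzQs (hσ₁b zQ hzQs).2
    have hNpos := hN (σ₁ zQ) zQ hzQs (hσ₁b zQ hzQs).2
    have hveq : δ₂ * σ₂ zQ * (1 - σ₂ zQ - β * zQ) / (zQ * (1 - zQ - α * σ₂ zQ))
        - δ₁ * σ₁ zQ * (1 - σ₁ zQ - β * zQ) / (zQ * (1 - zQ - α * σ₁ zQ))
        = (δ₂ - δ₁) * (σ₁ zQ * (1 - σ₁ zQ - β * zQ)) / (zQ * (1 - zQ - α * σ₁ zQ)) := by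
      rw [heqσ]; ring
    have hvpos : 0 < (δ₂ - δ₁) * (σ₁ zQ * (1 - σ₁ zQ - β * zQ)) / (zQ * (1 - zQ - α * σ₁ zQ)) :=
      div_pos (mul_pos (by linarith) (mul_pos (hσ₁b zQ hzQs).1 hNpos)) hMpos
    rw [hveq] at hd
    have hd' := hd.mono hIocsub
    have hslope := (hasDerivWithinAt_iff_tendsto_slope'
      (show zQ ∉ Ioc zQ w from fun hmem => lt_irrefl zQ hmem.1)).mp hd'
    have : (𝓝[Ioc zQ w] zQ).NeBot :=
      (left_nhdsWithin_Ioo_neBot hzQw).mono (nhdsWithin_mono _ Ioo_subset_Ioc_self)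
    have hle0 : (δ₂ - δ₁) * (σ₁ zQ * (1 - σ₁ zQ - β * zQ)) / (zQ * (1 - zQ - α * σ₁ zQ)) ≤ 0 := by
      refine le_of_tendsto hslope (eventually_mem_nhdsWithin.mono fun u hu => ?_)
      have h1 : h u < 0 := hneg u hu
      have h2 : 0 < u - zQ := sub_pos.mpr hu.1
      have : slope h zQ u = (h u - h zQ) / (u - zQ) := by simp [slope_def_field]
      change slope h zQ u ≤ 0
      rw [this, hz0, sub_zero]
      exact le_of_lt (div_neg_of_neg_of_pos h1 h2)
    linarith
  -- Monotone functional L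
  set L : ℝ → ℝ := fun z => α / δ₁ * Real.log (σ₁ z) - α / δ₂ * Real.log (σ₂ z) with hLdef
  have hLcont : ContinuousOn L s := by
    apply ContinuousOn.sub
    · exact continuousOn_const.mul (ContinuousOn.log
        (fun u hu => (hσ₁d u hu).continuousWithinAt)
        (fun u hu => ne_of_gt (hσ₁b u hu).1))
    · exact continuousOn_const.mul (ContinuousOn.log
        (fun u hu => (hσ₂d u hu).continuousWithinAt)
        (fun u hu => ne_of_gt (hσ₂b u hu).1))
  have hint : interior s = Ioo x₀ A := by rw [hsdef, interior_Ico]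
  have hLanti : AntitoneOn L s := by
    apply antitoneOn_of_hasDerivWithinAt_nonpos (convex_Ico x₀ A) hLcont
      (f' := fun z => α * (1 - σ₁ z - β * z) / (z * (1 - z - α * σ₁ z))
        - α * (1 - σ₂ z - β * z) / (z * (1 - z - α * σ₂ z)))
    · intro z hz
      rw [interior_Ico] at hz ⊢
      have hzs : z ∈ s := Ioo_subset_Ico_self hz
      have hsub : Ioo x₀ A ⊆ s := Ioo_subset_Ico_self
      have hd₁ := ((hσ₁d z hzs).mono hsub).log (ne_of_gt (hσ₁b z hzs).1)
      have hd₂ := ((hσ₂d z hzs).mono hsub).log (ne_of_gt (hσ₂b z hzs).1)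
      have hd := (hd₁.const_mul (α / δ₁)).sub (hd₂.const_mul (α / δ₂))
      have hσ₁ne : σ₁ z ≠ 0 := ne_of_gt (hσ₁b z hzs).1
      have hσ₂ne : σ₂ z ≠ 0 := ne_of_gt (hσ₂b z hzs).1
      have hM₁ne : z * (1 - z - α * σ₁ z) ≠ 0 := ne_of_gt (hM _ z hzs (hσ₁b z hzs).2)
      have hM₂ne : z * (1 - z - α * σ₂ z) ≠ 0 := ne_of_gt (hM _ z hzs (hσ₂b z hzs).2)
      have hδ₁ne : δ₁ ≠ 0 := ne_of_gt hδ₁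
      have hδ₂ne : δ₂ ≠ 0 := ne_of_gt hδ₂
      have heval : α / δ₁ * (δ₁ * σ₁ z * (1 - σ₁ z - β * z) / (z * (1 - z - α * σ₁ z)) / σ₁ z)
          - α / δ₂ * (δ₂ * σ₂ z * (1 - σ₂ z - β * z) / (z * (1 - z - α * σ₂ z)) / σ₂ z)
          = α * (1 - σ₁ z - β * z) / (z * (1 - z - α * σ₁ z))
            - α * (1 - σ₂ z - β * z) / (z * (1 - z - α * σ₂ z)) := by
        field_simp
      rw [heval] at hd
      exact hd
    · intro z hz
      rw [interior_Ico] at hz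
      have hzs : z ∈ s := Ioo_subset_Ico_self hz
      have hM₁pos := hM _ z hzs (hσ₁b z hzs).2
      have hM₂pos := hM _ z hzs (hσ₂b z hzs).2
      have hc := hcross z hzs
      rw [sub_nonpos, div_le_div_iff₀ hM₁pos hM₂pos]
      have hkey : (1 - σ₂ z - β * z) * (z * (1 - z - α * σ₁ z))
          - (1 - σ₁ z - β * z) * (z * (1 - z - α * σ₂ z))
          = z * (σ₂ z - σ₁ z) * (α * β - 1) * (A - z) := by
        linear_combination (z * (σ₁ z - σ₂ z)) * hA'
      have h0 : 0 ≤ z * (σ₂ z - σ₁ z) * (α * β - 1) * (A - z) := by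
        apply mul_nonneg
        apply mul_nonneg
        apply mul_nonneg
        · exact le_of_lt (hzpos z hzs)
        · exact sub_nonneg.mpr hc
        · exact le_of_lt hq
        · exact sub_nonneg.mpr (le_of_lt hz.2)
      have h1 : 0 ≤ (1 - σ₂ z - β * z) * (z * (1 - z - α * σ₁ z))
          - (1 - σ₁ z - β * z) * (z * (1 - z - α * σ₂ z)) := by rw [hkey]; exact h0
      nlinarith [mul_nonneg (by linarith : (0:ℝ) ≤ α) h1]
  -- limits and conclusion
  have hnb : (𝓝[s] A).NeBot := by
    refine mem_closure_iff_nhdsWithin_neBot.mp ?_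
    rw [hsdef, closure_Ico (ne_of_lt hx₀A)]
    exact ⟨le_of_lt hx₀A, le_refl A⟩
  have hLlim : Tendsto L (𝓝[s] A) (nhds (α / δ₁ * Real.log B - α / δ₂ * Real.log B)) := by
    apply Tendsto.sub
    · exact (((Real.continuousAt_log (ne_of_gt hBpos)).tendsto).comp hσ₁l).const_mul _
    · exact (((Real.continuousAt_log (ne_of_gt hBpos)).tendsto).comp hσ₂l).const_mul _
  have hbound : α / δ₁ * Real.log B - α / δ₂ * Real.log B ≤ L x₀ :=
    le_of_tendsto hLlim (eventually_mem_nhdsWithin.mono fun z hz => hLanti hx₀s hz hz.1)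
  have hlog : Real.log (σ₁ x₀) ≤ Real.log (σ₂ x₀) := Real.log_le_log (hσ₁b x₀ hx₀s).1 hle
  have hcoefpos : 0 < α / δ₁ - α / δ₂ := by
    rw [div_sub_div _ _ (ne_of_gt hδ₁) (ne_of_gt hδ₂)]
    apply div_pos
    · nlinarith
    · positivity
  have h2 : α / δ₂ * Real.log (σ₁ x₀) ≤ α / δ₂ * Real.log (σ₂ x₀) :=
    mul_le_mul_of_nonneg_left hlog (by positivity)
  have h3 : (α / δ₁ - α / δ₂) * Real.log B ≤ (α / δ₁ - α / δ₂) * Real.log (σ₁ x₀) := by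
    simp only [hLdef] at hbound
    nlinarith [hbound, h2]
  have hBlog : Real.log B ≤ Real.log (σ₁ x₀) := (mul_le_mul_iff_right₀ hcoefpos).mp h3
  have : B ≤ σ₁ x₀ := (Real.log_le_log_iff hBpos (hσ₁b x₀ hx₀s).1).mp hBlog
  exact absurd this (not_le.mpr (hσ₁b x₀ hx₀s).2)

lemma comparison₂ {δ₁ δ₂ x₀ : ℝ} {σ₁ σ₂ : ℝ → ℝ}
    (hα : 1 < α) (hβ : 1 < β) (hδ₁ : 0 < δ₁) (hδ₁₂ : δ₁ < δ₂)
    (hA' : (α * β - 1) * A = α - 1) (hB' : (α * β - 1) * B = β - 1)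
    (keyA : 1 - A - α * B = 0) (keyB : 1 - B - β * A = 0)
    (hx₀A : A < x₀)
    (hσ₁b : ∀ z ∈ Ioc A x₀, B < σ₁ z)
    (hσ₂b : ∀ z ∈ Ioc A x₀, B < σ₂ z)
    (hσ₁d : ∀ z ∈ Ioc A x₀, HasDerivWithinAt σ₁
      (δ₁ * σ₁ z * (1 - σ₁ z - β * z) / (z * (1 - z - α * σ₁ z))) (Ioc A x₀) z)
    (hσ₂d : ∀ z ∈ Ioc A x₀, HasDerivWithinAt σ₂
      (δ₂ * σ₂ z * (1 - σ₂ z - β * z) / (z * (1 - z - α * σ₂ z))) (Ioc A x₀) z)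
    (hσ₁l : Tendsto σ₁ (𝓝[Ioc A x₀] A) (nhds B))
    (hσ₂l : Tendsto σ₂ (𝓝[Ioc A x₀] A) (nhds B))
    (hle : σ₂ x₀ ≤ σ₁ x₀) : False := by
  have hδ₂ : 0 < δ₂ := lt_trans hδ₁ hδ₁₂
  have hq : 0 < α * β - 1 := by nlinarith
  have hApos : 0 < A := by
    by_contra h
    push_neg at h
    nlinarith [mul_nonpos_of_nonneg_of_nonpos (le_of_lt hq) h]
  have hBpos : 0 < B := by
    by_contra h
    push_neg at h
    nlinarith [mul_nonpos_of_nonneg_of_nonpos (le_of_lt hq) h]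
  set s : Set ℝ := Ioc A x₀ with hsdef
  have hx₀s : x₀ ∈ s := ⟨hx₀A, le_refl _⟩
  have hzpos : ∀ z ∈ s, 0 < z := fun z hz => lt_trans hApos hz.1
  have hσpos : ∀ (σz : ℝ), B < σz → 0 < σz := fun σz h => lt_trans hBpos h
  have hM : ∀ (σz z : ℝ), z ∈ s → B < σz → z * (1 - z - α * σz) < 0 := by
    intro σz z hz hσz
    have h1 : A < z := hz.1
    have h3 : 1 - z - α * σz < 0 := by nlinarith [keyA]
    exact mul_neg_of_pos_of_neg (hzpos z hz) h3
  have hN : ∀ (σz z : ℝ), z ∈ s → B < σz → 1 - σz - β * z < 0 := by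
    intro σz z hz hσz
    have h1 : A < z := hz.1
    nlinarith [keyB]
  -- crossing: σ₂ ≤ σ₁ on s
  have hcross : ∀ z ∈ s, σ₂ z ≤ σ₁ z := by
    by_contra hc
    push_neg at hc
    obtain ⟨w, hw, hlt⟩ := hc
    set h : ℝ → ℝ := fun z => σ₁ z - σ₂ z with hhdef
    have hIccsub : Icc w x₀ ⊆ s := fun u hu => ⟨lt_of_lt_of_le hw.1 hu.1, hu.2⟩
    have hcont : ContinuousOn h (Icc w x₀) := fun u hu =>
      (((hσ₁d u (hIccsub hu)).continuousWithinAt).sub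
        ((hσ₂d u (hIccsub hu)).continuousWithinAt)).mono hIccsub
    set S : Set ℝ := Icc w x₀ ∩ h ⁻¹' (Ici 0) with hSdef
    have hSclosed : IsClosed S := hcont.preimage_isClosed_of_isClosed isClosed_Icc isClosed_Ici
    have hSne : S.Nonempty := ⟨x₀, ⟨hw.2, le_refl _⟩,
      show (0:ℝ) ≤ σ₁ x₀ - σ₂ x₀ by linarith⟩
    have hSbdd : BddBelow S := ⟨w, fun u hu => hu.1.1⟩
    set zQ := sInf S with hzQdef
    have hzQmem : zQ ∈ S := hSclosed.csInf_mem hSne hSbdd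
    have hzQ1 : zQ ∈ Icc w x₀ := hzQmem.1
    have hzQ2 : (0:ℝ) ≤ h zQ := hzQmem.2
    have hzQs : zQ ∈ s := hIccsub hzQ1
    have hzQw : w < zQ := by
      rcases eq_or_lt_of_le hzQ1.1 with he | he
      · exfalso
        rw [← he] at hzQ2
        simp only [hhdef] at hzQ2
        linarith
      · exact he
    have hneg : ∀ u ∈ Ico w zQ, h u < 0 := by
      intro u hu
      by_contra hcu
      push_neg at hcu
      have huS : u ∈ S := ⟨⟨hu.1, le_trans (le_of_lt hu.2) hzQ1.2⟩, hcu⟩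
      exact absurd (csInf_le hSbdd huS) (not_le.mpr hu.2)
    have hIcosub : Ico w zQ ⊆ s := fun u hu =>
      ⟨lt_of_lt_of_le hw.1 hu.1, le_trans (le_of_lt hu.2) hzQ1.2⟩
    have hz0 : h zQ = 0 := by
      refine le_antisymm ?_ hzQ2
      have hctd : Tendsto h (𝓝[Ico w zQ] zQ) (nhds (h zQ)) :=
        (((hσ₁d zQ hzQs).continuousWithinAt).sub
          ((hσ₂d zQ hzQs).continuousWithinAt)).mono_left (nhdsWithin_mono _ hIcosub)
      have : (𝓝[Ico w zQ] zQ).NeBot :=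
        (right_nhdsWithin_Ioo_neBot hzQw).mono (nhdsWithin_mono _ Ioo_subset_Ico_self)
      exact le_of_tendsto hctd (eventually_mem_nhdsWithin.mono fun u hu => (hneg u hu).le)
    have heqσ : σ₁ zQ = σ₂ zQ := by simp only [hhdef] at hz0; linarith
    have hd := (hσ₁d zQ hzQs).sub (hσ₂d zQ hzQs)
    have hMneg := hM (σ₂ zQ) zQ hzQs (hσ₂b zQ hzQs)
    have hNneg := hN (σ₂ zQ) zQ hzQs (hσ₂b zQ hzQs)
    have hveq : δ₁ * σ₁ zQ * (1 - σ₁ zQ - β * zQ) / (zQ * (1 - zQ - α * σ₁ zQ))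
        - δ₂ * σ₂ zQ * (1 - σ₂ zQ - β * zQ) / (zQ * (1 - zQ - α * σ₂ zQ))
        = (δ₁ - δ₂) * (σ₂ zQ * (1 - σ₂ zQ - β * zQ)) / (zQ * (1 - zQ - α * σ₂ zQ)) := by
      rw [heqσ]; ring
    have hvneg : (δ₁ - δ₂) * (σ₂ zQ * (1 - σ₂ zQ - β * zQ)) / (zQ * (1 - zQ - α * σ₂ zQ)) < 0 := by
      apply div_neg_of_pos_of_neg
      · exact mul_pos_of_neg_of_neg (by linarith)
          (mul_neg_of_pos_of_neg (hσpos _ (hσ₂b zQ hzQs)) hNneg)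
      · exact hMneg
    rw [hveq] at hd
    have hd' := hd.mono hIcosub
    have hslope := (hasDerivWithinAt_iff_tendsto_slope'
      (show zQ ∉ Ico w zQ from fun hmem => lt_irrefl zQ hmem.2)).mp hd'
    have : (𝓝[Ico w zQ] zQ).NeBot :=
      (right_nhdsWithin_Ioo_neBot hzQw).mono (nhdsWithin_mono _ Ioo_subset_Ico_self)
    have hge0 : 0 ≤ (δ₁ - δ₂) * (σ₂ zQ * (1 - σ₂ zQ - β * zQ)) / (zQ * (1 - zQ - α * σ₂ zQ)) := by
      refine ge_of_tendsto hslope (eventually_mem_nhdsWithin.mono fun u hu => ?_)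
      have h1 : h u < 0 := hneg u hu
      have h2 : u - zQ < 0 := sub_neg.mpr hu.2
      have : slope h zQ u = (h u - h zQ) / (u - zQ) := by simp [slope_def_field]
      change 0 ≤ slope h zQ u
      rw [this, hz0, sub_zero]
      exact le_of_lt (div_pos_of_neg_of_neg h1 h2)
    linarith
  -- monotone functional
  set L : ℝ → ℝ := fun z => α / δ₁ * Real.log (σ₁ z) - α / δ₂ * Real.log (σ₂ z) with hLdef
  have hLcont : ContinuousOn L s := by
    apply ContinuousOn.sub
    · exact continuousOn_const.mul (ContinuousOn.log
        (fun u hu => (hσ₁d u hu).continuousWithinAt)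
        (fun u hu => ne_of_gt (hσpos _ (hσ₁b u hu))))
    · exact continuousOn_const.mul (ContinuousOn.log
        (fun u hu => (hσ₂d u hu).continuousWithinAt)
        (fun u hu => ne_of_gt (hσpos _ (hσ₂b u hu))))
  have hLanti : AntitoneOn L s := by
    apply antitoneOn_of_hasDerivWithinAt_nonpos (convex_Ioc A x₀) hLcont
      (f' := fun z => α * (1 - σ₁ z - β * z) / (z * (1 - z - α * σ₁ z))
        - α * (1 - σ₂ z - β * z) / (z * (1 - z - α * σ₂ z)))
    · intro z hz
      rw [interior_Ioc] at hz ⊢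
      have hzs : z ∈ s := Ioo_subset_Ioc_self hz
      have hsub : Ioo A x₀ ⊆ s := Ioo_subset_Ioc_self
      have hd₁ := ((hσ₁d z hzs).mono hsub).log (ne_of_gt (hσpos _ (hσ₁b z hzs)))
      have hd₂ := ((hσ₂d z hzs).mono hsub).log (ne_of_gt (hσpos _ (hσ₂b z hzs)))
      have hd := (hd₁.const_mul (α / δ₁)).sub (hd₂.const_mul (α / δ₂))
      have hσ₁ne : σ₁ z ≠ 0 := ne_of_gt (hσpos _ (hσ₁b z hzs))
      have hσ₂ne : σ₂ z ≠ 0 := ne_of_gt (hσpos _ (hσ₂b z hzs))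
      have hM₁ne : z * (1 - z - α * σ₁ z) ≠ 0 := ne_of_lt (hM _ z hzs (hσ₁b z hzs))
      have hM₂ne : z * (1 - z - α * σ₂ z) ≠ 0 := ne_of_lt (hM _ z hzs (hσ₂b z hzs))
      have hδ₁ne : δ₁ ≠ 0 := ne_of_gt hδ₁
      have hδ₂ne : δ₂ ≠ 0 := ne_of_gt hδ₂
      have heval : α / δ₁ * (δ₁ * σ₁ z * (1 - σ₁ z - β * z) / (z * (1 - z - α * σ₁ z)) / σ₁ z)
          - α / δ₂ * (δ₂ * σ₂ z * (1 - σ₂ z - β * z) / (z * (1 - z - α * σ₂ z)) / σ₂ z)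
          = α * (1 - σ₁ z - β * z) / (z * (1 - z - α * σ₁ z))
            - α * (1 - σ₂ z - β * z) / (z * (1 - z - α * σ₂ z)) := by
        field_simp
      rw [heval] at hd
      exact hd
    · intro z hz
      rw [interior_Ioc] at hz
      have hzs : z ∈ s := Ioo_subset_Ioc_self hz
      have hM₁neg := hM _ z hzs (hσ₁b z hzs)
      have hM₂neg := hM _ z hzs (hσ₂b z hzs)
      have hc := hcross z hzs
      have hM₁ne : z * (1 - z - α * σ₁ z) ≠ 0 := ne_of_lt hM₁neg
      have hM₂ne : z * (1 - z - α * σ₂ z) ≠ 0 := ne_of_lt hM₂neg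
      have hrw : α * (1 - σ₁ z - β * z) / (z * (1 - z - α * σ₁ z))
          - α * (1 - σ₂ z - β * z) / (z * (1 - z - α * σ₂ z))
          = (α * (1 - σ₁ z - β * z) * (z * (1 - z - α * σ₂ z))
             - α * (1 - σ₂ z - β * z) * (z * (1 - z - α * σ₁ z)))
            / ((z * (1 - z - α * σ₁ z)) * (z * (1 - z - α * σ₂ z))) := by
        rw [div_sub_div _ _ hM₁ne hM₂ne]
        ring
      rw [hrw]
      apply div_nonpos_of_nonpos_of_nonneg
      · have hkey : (1 - σ₂ z - β * z) * (z * (1 - z - α * σ₁ z))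
            - (1 - σ₁ z - β * z) * (z * (1 - z - α * σ₂ z))
            = z * (σ₂ z - σ₁ z) * (α * β - 1) * (A - z) := by
          linear_combination (z * (σ₁ z - σ₂ z)) * hA'
        have h0 : 0 ≤ z * (σ₂ z - σ₁ z) * (α * β - 1) * (A - z) := by
          have ha : z * (σ₂ z - σ₁ z) * (α * β - 1) ≤ 0 := by
            apply mul_nonpos_of_nonpos_of_nonneg
            · exact mul_nonpos_of_nonneg_of_nonpos (le_of_lt (hzpos z hzs))
                (sub_nonpos.mpr hc)
            · exact le_of_lt hq
          have hb : A - z ≤ 0 := sub_nonpos.mpr (le_of_lt hz.1)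
          have h0' := mul_nonneg (neg_nonneg.mpr ha) (neg_nonneg.mpr hb)
          rw [neg_mul_neg] at h0'
          exact h0'
        have h1 : 0 ≤ (1 - σ₂ z - β * z) * (z * (1 - z - α * σ₁ z))
            - (1 - σ₁ z - β * z) * (z * (1 - z - α * σ₂ z)) := by rw [hkey]; exact h0
        nlinarith [mul_nonneg (by linarith : (0:ℝ) ≤ α) h1]
      · exact le_of_lt (mul_pos_of_neg_of_neg hM₁neg hM₂neg)
  have hnb : (𝓝[s] A).NeBot := by
    refine mem_closure_iff_nhdsWithin_neBot.mp ?_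
    rw [hsdef, closure_Ioc (ne_of_lt hx₀A)]
    exact ⟨le_refl A, le_of_lt hx₀A⟩
  have hLlim : Tendsto L (𝓝[s] A) (nhds (α / δ₁ * Real.log B - α / δ₂ * Real.log B)) := by
    apply Tendsto.sub
    · exact (((Real.continuousAt_log (ne_of_gt hBpos)).tendsto).comp hσ₁l).const_mul _
    · exact (((Real.continuousAt_log (ne_of_gt hBpos)).tendsto).comp hσ₂l).const_mul _
  have hbound : L x₀ ≤ α / δ₁ * Real.log B - α / δ₂ * Real.log B :=
    ge_of_tendsto hLlim (eventually_mem_nhdsWithin.mono fun z hz => hLanti hz hx₀s hz.2)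
  have hσ₂x₀pos : 0 < σ₂ x₀ := hσpos _ (hσ₂b x₀ hx₀s)
  have hlog : Real.log (σ₂ x₀) ≤ Real.log (σ₁ x₀) := Real.log_le_log hσ₂x₀pos hle
  have hcoefpos : 0 < α / δ₁ - α / δ₂ := by
    rw [div_sub_div _ _ (ne_of_gt hδ₁) (ne_of_gt hδ₂)]
    apply div_pos
    · nlinarith
    · positivity
  have h2 : α / δ₁ * Real.log (σ₂ x₀) ≤ α / δ₁ * Real.log (σ₁ x₀) :=
    mul_le_mul_of_nonneg_left hlog (by positivity)
  have h3 : (α / δ₁ - α / δ₂) * Real.log (σ₂ x₀) ≤ (α / δ₁ - α / δ₂) * Real.log B := by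
    simp only [hLdef] at hbound
    nlinarith [hbound, h2]
  have hBlog : Real.log (σ₂ x₀) ≤ Real.log B := (mul_le_mul_iff_right₀ hcoefpos).mp h3
  have : σ₂ x₀ ≤ B := (Real.log_le_log_iff hσ₂x₀pos hBpos).mp hBlog
  exact absurd this (not_le.mpr (hσ₂b x₀ hx₀s))

lemma regularize {δ : ℝ} {x1 Y1 : ℝ → ℝ}
    (hx1 : ∀ t ∈ Ici (0:ℝ), HasDerivWithinAt x1 (x1 t * (1 - x1 t - α * Y1 t)) (Ici 0) t)
    (hY1 : ∀ t ∈ Ici (0:ℝ), HasDerivWithinAt Y1 (δ * Y1 t * (1 - Y1 t - β * x1 t)) (Ici 0) t)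
    (hconv : Tendsto (fun t => (x1 t, Y1 t)) atTop (nhds (A, B))) :
    ∃ x y : ℝ → ℝ, Continuous x ∧ Continuous y ∧
      (∀ t ∈ Ici (0:ℝ), HasDerivWithinAt x (x t * (1 - x t - α * y t)) (Ici 0) t) ∧
      (∀ t ∈ Ici (0:ℝ), HasDerivWithinAt y (δ * y t * (1 - y t - β * x t)) (Ici 0) t) ∧
      x 0 = x1 0 ∧ y 0 = Y1 0 ∧ Tendsto (fun t => (x t, y t)) atTop (nhds (A, B)) := by
  have hc1 : ContinuousOn x1 (Ici 0) := fun t ht => (hx1 t ht).continuousWithinAt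
  have hc2 : ContinuousOn Y1 (Ici 0) := fun t ht => (hY1 t ht).continuousWithinAt
  have hmax : Continuous (fun t : ℝ => max t 0) := continuous_id.max continuous_const
  have hmem : ∀ t : ℝ, max t 0 ∈ Ici (0:ℝ) := fun t => le_max_right t 0
  refine ⟨fun t => x1 (max t 0), fun t => Y1 (max t 0),
    hc1.comp_continuous hmax hmem, hc2.comp_continuous hmax hmem, ?_, ?_, by simp, by simp, ?_⟩
  · intro t ht
    have hmt : max t 0 = t := max_eq_left ht
    have heqs : ∀ u ∈ Ici (0:ℝ), x1 (max u 0) = x1 u := fun u hu => by rw [max_eq_left hu]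
    have h := (hx1 t ht).congr heqs (by rw [hmt])
    simp only [hmt]
    exact h
  · intro t ht
    have hmt : max t 0 = t := max_eq_left ht
    have heqs : ∀ u ∈ Ici (0:ℝ), Y1 (max u 0) = Y1 u := fun u hu => by rw [max_eq_left hu]
    have h := (hY1 t ht).congr heqs (by rw [hmt])
    simp only [hmt]
    exact h
  · refine hconv.congr' ?_
    filter_upwards [eventually_ge_atTop (0:ℝ)] with t ht
    simp [max_eq_left ht]

end Q
end LV17

open LV17

/-- Dependence of the separatrix on `δ`: if `0 < δ₁ < δ₂` and `(x₀, yᵢ)` lies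
on the stable manifold of the saddle `(A,B)` for the system with parameter
`δᵢ`, then `y₂ < y₁` when `0 < x₀ < A`, and `y₁ < y₂` when `x₀ > A`. -/
theorem stmt_17 (α β : ℝ) (hα : 1 < α) (hβ : 1 < β)
    (A B : ℝ) (hA : A = (α - 1) / (α * β - 1)) (hB : B = (β - 1) / (α * β - 1))
    (δ₁ δ₂ : ℝ) (hδ₁ : 0 < δ₁) (hδ₁₂ : δ₁ < δ₂)
    (x₀ : ℝ) (hx₀ : 0 < x₀)
    (y₁ y₂ : ℝ) (hy₁ : 0 < y₁) (hy₂ : 0 < y₂)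
    (x1 Y1 : ℝ → ℝ)
    (hx1 : ∀ t ∈ Set.Ici (0 : ℝ),
      HasDerivWithinAt x1 (x1 t * (1 - x1 t - α * Y1 t)) (Set.Ici 0) t)
    (hY1 : ∀ t ∈ Set.Ici (0 : ℝ),
      HasDerivWithinAt Y1 (δ₁ * Y1 t * (1 - Y1 t - β * x1 t)) (Set.Ici 0) t)
    (hx10 : x1 0 = x₀) (hY10 : Y1 0 = y₁)
    (hconv1 : Tendsto (fun t => (x1 t, Y1 t)) atTop (nhds (A, B)))
    (x2 Y2 : ℝ → ℝ)
    (hx2 : ∀ t ∈ Set.Ici (0 : ℝ),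
      HasDerivWithinAt x2 (x2 t * (1 - x2 t - α * Y2 t)) (Set.Ici 0) t)
    (hY2 : ∀ t ∈ Set.Ici (0 : ℝ),
      HasDerivWithinAt Y2 (δ₂ * Y2 t * (1 - Y2 t - β * x2 t)) (Set.Ici 0) t)
    (hx20 : x2 0 = x₀) (hY20 : Y2 0 = y₂)
    (hconv2 : Tendsto (fun t => (x2 t, Y2 t)) atTop (nhds (A, B))) :
    (x₀ < A → y₂ < y₁) ∧ (A < x₀ → y₁ < y₂) := by
  have hδ₂ : 0 < δ₂ := lt_trans hδ₁ hδ₁₂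
  have hq : 0 < α * β - 1 := by nlinarith
  have hqne : α * β - 1 ≠ 0 := ne_of_gt hq
  have hA' : (α * β - 1) * A = α - 1 := by rw [hA]; field_simp
  have hB' : (α * β - 1) * B = β - 1 := by rw [hB]; field_simp
  have keyA : 1 - A - α * B = 0 := by rw [hA, hB]; field_simp; ring
  have keyB : 1 - B - β * A = 0 := (mul_eq_zero.mp (by linear_combination (-1:ℝ) * hB' - β * hA' : (α * β - 1) * (1 - B - β * A) = 0)).resolve_left hqne
  obtain ⟨u1, v1, hcu1, hcv1, hdu1, hdv1, hu10, hv10, hcv1'⟩ := regularize hx1 hY1 hconv1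
  obtain ⟨u2, v2, hcu2, hcv2, hdu2, hdv2, hu20, hv20, hcv2'⟩ := regularize hx2 hY2 hconv2
  rw [hx10] at hu10
  rw [hY10] at hv10
  rw [hx20] at hu20
  rw [hY20] at hv20
  -- positivity of solutions
  have hg1c : ContinuousOn (fun t => 1 - u1 t - α * v1 t) (Ici 0) :=
    (continuousOn_const.sub hcu1.continuousOn).sub (continuousOn_const.mul hcv1.continuousOn)
  have hu1pos : ∀ t ∈ Ici (0:ℝ), 0 < u1 t :=
    pos_sol hg1c hdu1 (by rw [hu10]; exact hx₀)
  have hg2c : ContinuousOn (fun t => 1 - u2 t - α * v2 t) (Ici 0) :=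
    (continuousOn_const.sub hcu2.continuousOn).sub (continuousOn_const.mul hcv2.continuousOn)
  have hu2pos : ∀ t ∈ Ici (0:ℝ), 0 < u2 t :=
    pos_sol hg2c hdu2 (by rw [hu20]; exact hx₀)
  have hh1c : ContinuousOn (fun t => δ₁ * (1 - v1 t - β * u1 t)) (Ici 0) :=
    continuousOn_const.mul
      ((continuousOn_const.sub hcv1.continuousOn).sub (continuousOn_const.mul hcu1.continuousOn))
  have hv1pos : ∀ t ∈ Ici (0:ℝ), 0 < v1 t := by
    apply pos_sol hh1c
    · intro t ht
      rw [show v1 t * (δ₁ * (1 - v1 t - β * u1 t)) = δ₁ * v1 t * (1 - v1 t - β * u1 t) from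
        by ring]
      exact hdv1 t ht
    · rw [hv10]; exact hy₁
  have hh2c : ContinuousOn (fun t => δ₂ * (1 - v2 t - β * u2 t)) (Ici 0) :=
    continuousOn_const.mul
      ((continuousOn_const.sub hcv2.continuousOn).sub (continuousOn_const.mul hcu2.continuousOn))
  have hv2pos : ∀ t ∈ Ici (0:ℝ), 0 < v2 t := by
    apply pos_sol hh2c
    · intro t ht
      rw [show v2 t * (δ₂ * (1 - v2 t - β * u2 t)) = δ₂ * v2 t * (1 - v2 t - β * u2 t) from
        by ring]
      exact hdv2 t ht
    · rw [hv20]; exact hy₂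
  constructor
  · -- x₀ < A : y₂ < y₁
    intro hlt
    by_contra hcon
    push_neg at hcon
    obtain ⟨σ₁, hs10, hs1b, hs1d, hs1l⟩ := exists_sigma₁ hα hβ hδ₁ hA' hB' keyA keyB
      hcu1 hcv1 hdu1 hdv1 hu1pos hv1pos hcv1' (by rw [hu10]; exact hlt)
    obtain ⟨σ₂, hs20, hs2b, hs2d, hs2l⟩ := exists_sigma₁ hα hβ hδ₂ hA' hB' keyA keyB
      hcu2 hcv2 hdu2 hdv2 hu2pos hv2pos hcv2' (by rw [hu20]; exact hlt)
    rw [hu10] at hs10 hs1b hs1d hs1l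
    rw [hu20] at hs20 hs2b hs2d hs2l
    rw [hv10] at hs10
    rw [hv20] at hs20
    exact comparison₁ hα hβ hδ₁ hδ₁₂ hA' hB' keyA keyB hx₀ hlt hs1b hs2b hs1d hs2d hs1l hs2l
      (by rw [hs10, hs20]; exact hcon)
  · -- A < x₀ : y₁ < y₂
    intro hgt
    by_contra hcon
    push_neg at hcon
    obtain ⟨σ₁, hs10, hs1b, hs1d, hs1l⟩ := exists_sigma₂ hα hβ hδ₁ hA' hB' keyA keyB
      hcu1 hcv1 hdu1 hdv1 hu1pos hv1pos hcv1' (by rw [hu10]; exact hgt)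
    obtain ⟨σ₂, hs20, hs2b, hs2d, hs2l⟩ := exists_sigma₂ hα hβ hδ₂ hA' hB' keyA keyB
      hcu2 hcv2 hdu2 hdv2 hu2pos hv2pos hcv2' (by rw [hu20]; exact hgt)
    rw [hu10] at hs10 hs1b hs1d hs1l
    rw [hu20] at hs20 hs2b hs2d hs2l
    rw [hv10] at hs10
    rw [hv20] at hs20
    exact comparison₂ hα hβ hδ₁ hδ₁₂ hA' hB' keyA keyB hgt hs1b hs2b hs1d hs2d hs1l hs2l
      (by rw [hs10, hs20]; exact hcon)
end
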